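/- arXiv:1306.0943 — 13 statements merged into one kernel-verified Lean document; each statement's English description precedes it below -/
import Mathlib

section
/- For every set A of four positive integers, the number of 2-element subsets B of A such that the sum of the elements of B divides the sum of the elements of A is at most 4. -/
/-- For every set `A` of four positive integers, the number of 2-element subsets `B` of `A`
whose sum divides the sum of `A` is at most 4. -/
theorem stmt_0 (A : Finset ℕ) (hcard : A.card = 4) (hpos : ∀ a ∈ A, 0 < a) :
    (A.powerset.filter (fun B => B.card = 2 ∧ B.sum id ∣ A.sum id)).card ≤ 4 := by
  obtain ⟨l, hlen, hsorted, hnd, htf⟩ :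
      ∃ l : List ℕ, l.length = 4 ∧ l.Pairwise (· < ·) ∧ l.Nodup ∧ l.toFinset = A :=
    ⟨A.sort (· ≤ ·), by simp [hcard], A.sortedLT_sort.pairwise, A.sort_nodup _, A.sort_toFinset _⟩
  match l, hlen, hsorted, hnd, htf with
  | [a, b, c, d], _, hs, hn, ht =>
  have hab' : a < b := (List.pairwise_cons.mp hs).1 b (by simp)
  have hac' : a < c := (List.pairwise_cons.mp hs).1 c (by simp)
  have had' : a < d := (List.pairwise_cons.mp hs).1 d (by simp)
  have hbc' : b < c := (List.pairwise_cons.mp (List.pairwise_cons.mp hs).2).1 c (by simp)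
  have hbd' : b < d := (List.pairwise_cons.mp (List.pairwise_cons.mp hs).2).1 d (by simp)
  have hcd' : c < d :=
    (List.pairwise_cons.mp (List.pairwise_cons.mp (List.pairwise_cons.mp hs).2).2).1 d (by simp)
  have nab : a ≠ b := hab'.ne
  have nac : a ≠ c := hac'.ne
  have nad : a ≠ d := had'.ne
  have nbc : b ≠ c := hbc'.ne
  have nbd : b ≠ d := hbd'.ne
  have ncd : c ≠ d := hcd'.ne
  have ha : 0 < a := hpos a (by rw [← ht]; simp)
  have hb : 0 < b := hpos b (by rw [← ht]; simp)
  have hsum : A.sum id = a + b + c + d := by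
    rw [← ht]
    rw [List.sum_toFinset _ (by simp [nab, nac, nad, nbc, nbd, ncd])]
    simp [add_assoc]
  -- the two "bad" pairs
  have keybd : ¬ (b + d ∣ A.sum id) := by
    intro h
    rw [hsum] at h
    have h' : b + d ∣ a + c := by
      have heq : b + d + (a + c) = a + b + c + d := by ring
      rw [← heq] at h
      exact (Nat.dvd_add_right (dvd_refl _)).mp h
    have := Nat.le_of_dvd (by omega) h'
    omega
  have keycd : ¬ (c + d ∣ A.sum id) := by
    intro h
    rw [hsum] at h
    have h' : c + d ∣ a + b := by
      have heq : c + d + (a + b) = a + b + c + d := by ring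
      rw [← heq] at h
      exact (Nat.dvd_add_right (dvd_refl _)).mp h
    have := Nat.le_of_dvd (by omega) h'
    omega
  have hsub : (A.powerset.filter (fun B => B.card = 2 ∧ B.sum id ∣ A.sum id)) ⊆
      (A.powersetCard 2) \ {({b, d} : Finset ℕ), ({c, d} : Finset ℕ)} := by
    intro B hB
    simp only [Finset.mem_filter, Finset.mem_powerset] at hB
    obtain ⟨hBA, hB2, hBdvd⟩ := hB
    rw [Finset.mem_sdiff, Finset.mem_powersetCard]
    refine ⟨⟨hBA, hB2⟩, ?_⟩
    intro hmem
    simp only [Finset.mem_insert, Finset.mem_singleton] at hmem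
    rcases hmem with rfl | rfl
    · exact keybd (by simpa [Finset.sum_pair nbd] using hBdvd)
    · exact keycd (by simpa [Finset.sum_pair ncd] using hBdvd)
  have hpair : ({({b, d} : Finset ℕ), ({c, d} : Finset ℕ)} : Finset (Finset ℕ)) ⊆
      A.powersetCard 2 := by
    intro B hB
    simp only [Finset.mem_insert, Finset.mem_singleton] at hB
    rw [Finset.mem_powersetCard]
    rcases hB with rfl | rfl
    · exact ⟨by intro x hx; rw [← ht]; simp at hx ⊢; tauto, Finset.card_pair nbd⟩
    · exact ⟨by intro x hx; rw [← ht]; simp at hx ⊢; tauto, Finset.card_pair ncd⟩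
  have hne : ({b, d} : Finset ℕ) ≠ ({c, d} : Finset ℕ) := by
    intro h
    have : b ∈ ({c, d} : Finset ℕ) := h ▸ (by simp : b ∈ ({b, d} : Finset ℕ))
    simp at this
    omega
  calc (A.powerset.filter (fun B => B.card = 2 ∧ B.sum id ∣ A.sum id)).card
      ≤ ((A.powersetCard 2) \ {({b, d} : Finset ℕ), ({c, d} : Finset ℕ)}).card :=
        Finset.card_le_card hsub
    _ = (A.powersetCard 2).card -
        ({({b, d} : Finset ℕ), ({c, d} : Finset ℕ)} : Finset (Finset ℕ)).card :=
        Finset.card_sdiff_of_subset hpair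
    _ ≤ 4 := by
        rw [Finset.card_powersetCard, hcard, Finset.card_insert_of_notMem (by simpa using hne),
          Finset.card_singleton]
        decide
end

section
/- Let A be a set of four positive integers. Then A has exactly 4 two-element divisors if and only if there exists a positive integer a such that A = {a, 5a, 7a, 11a} or A = {a, 11a, 19a, 29a}. -/
open Finset

private lemma list_len4 {α : Type*} (l : List α) (h : l.length = 4) :
    ∃ a b c d, l = [a, b, c, d] := by
  match l, h with
  | [a, b, c, d], _ => exact ⟨a, b, c, d, rfl⟩

private lemma not_dvd_of_between {x S : ℕ} (h1 : x < S) (h2 : S < 2 * x) : ¬ x ∣ S := by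
  rintro ⟨t, rfl⟩
  have ht : t < 2 := Nat.lt_of_mul_lt_mul_left (a := x) (by linarith)
  interval_cases t <;> omega

private lemma mem_pairs {a b c d : ℕ} {B : Finset ℕ} (hB : B ⊆ {a, b, c, d})
    (hc : B.card = 2) :
    B = {a,b} ∨ B = {a,c} ∨ B = {a,d} ∨ B = {b,c} ∨ B = {b,d} ∨ B = {c,d} := by
  obtain ⟨x, y, hxy, rfl⟩ := Finset.card_eq_two.mp hc
  have hx : x ∈ ({a,b,c,d} : Finset ℕ) := hB (by simp)
  have hy : y ∈ ({a,b,c,d} : Finset ℕ) := hB (by simp)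
  simp only [mem_insert, mem_singleton] at hx hy
  rcases hx with rfl | rfl | rfl | rfl <;> rcases hy with rfl | rfl | rfl | rfl <;>
    simp_all [Finset.pair_comm]

private lemma sum4 {a b c d : ℕ} (h1 : a < b) (h2 : b < c) (h3 : c < d) :
    ({a,b,c,d} : Finset ℕ).sum id = a + b + c + d := by
  rw [Finset.sum_insert (by simp; omega), Finset.sum_insert (by simp; omega),
    Finset.sum_pair (by omega)]
  simp; omega

private lemma pair_ne {x y z w : ℕ} (h : z ≠ x ∧ z ≠ y ∨ w ≠ x ∧ w ≠ y) :
    ({x, y} : Finset ℕ) ≠ {z, w} := by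
  intro he
  rcases h with ⟨h1, h2⟩ | ⟨h1, h2⟩
  · have : z ∈ ({x, y} : Finset ℕ) := he ▸ by simp
    simp at this; tauto
  · have : w ∈ ({x, y} : Finset ℕ) := he ▸ by simp
    simp at this; tauto

private lemma card4 {a b c d : ℕ} (h1 : a < b) (h2 : b < c) (h3 : c < d) :
    ({({a,b} : Finset ℕ), {a,c}, {a,d}, {b,c}} : Finset (Finset ℕ)).card = 4 := by
  rw [Finset.card_insert_of_notMem, Finset.card_insert_of_notMem,
    Finset.card_insert_of_notMem, Finset.card_singleton]
  · simp only [Finset.mem_singleton]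
    exact pair_ne (by omega)
  · simp only [Finset.mem_insert, Finset.mem_singleton]
    push_neg
    exact ⟨pair_ne (by omega), pair_ne (by omega)⟩
  · simp only [Finset.mem_insert, Finset.mem_singleton]
    push_neg
    exact ⟨pair_ne (by omega), pair_ne (by omega), pair_ne (by omega)⟩

/-- Main counting lemma for a generic 4-element set with a < b < c < d. -/
private lemma count_eq_four {a b c d : ℕ} (h1 : a < b) (h2 : b < c) (h3 : c < d)
    (ha : 0 < a)
    (d1 : (a + b) ∣ (a + b + c + d)) (d2 : (a + c) ∣ (a + b + c + d))
    (d3 : (a + d) ∣ (a + b + c + d)) (d4 : (b + c) ∣ (a + b + c + d)) :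
    (({a,b,c,d} : Finset ℕ).powerset.filter
      (fun B => B.card = 2 ∧ B.sum id ∣ ({a,b,c,d} : Finset ℕ).sum id)).card = 4 := by
  have hS := sum4 h1 h2 h3
  have hbd : ¬ (b + d) ∣ (a + b + c + d) := not_dvd_of_between (by omega) (by omega)
  have hcd : ¬ (c + d) ∣ (a + b + c + d) := not_dvd_of_between (by omega) (by omega)
  have heq : ({a,b,c,d} : Finset ℕ).powerset.filter
      (fun B => B.card = 2 ∧ B.sum id ∣ ({a,b,c,d} : Finset ℕ).sum id) =
      {({a,b} : Finset ℕ), {a,c}, {a,d}, {b,c}} := by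
    ext B
    simp only [Finset.mem_filter, Finset.mem_powerset, hS]
    constructor
    · rintro ⟨hsub, hc2, hdvd⟩
      rcases mem_pairs hsub hc2 with rfl | rfl | rfl | rfl | rfl | rfl <;>
        simp_all [Finset.sum_pair, show b ≠ d by omega, show c ≠ d by omega]
    · intro hB
      simp only [Finset.mem_insert, Finset.mem_singleton] at hB
      rcases hB with rfl | rfl | rfl | rfl <;>
        refine ⟨by intro x hx; simp at hx ⊢; omega, Finset.card_pair (by omega), ?_⟩ <;>
        rw [Finset.sum_pair (by omega)] <;> simpa using ‹_›
  rw [heq]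
  exact card4 h1 h2 h3

private lemma forward {a b c d : ℕ} (h1 : a < b) (h2 : b < c) (h3 : c < d) (ha : 0 < a)
    (h : (({a,b,c,d} : Finset ℕ).powerset.filter
      (fun B => B.card = 2 ∧ B.sum id ∣ ({a,b,c,d} : Finset ℕ).sum id)).card = 4) :
    (b = 5*a ∧ c = 7*a ∧ d = 11*a) ∨ (b = 11*a ∧ c = 19*a ∧ d = 29*a) := by
  have hS := sum4 h1 h2 h3
  -- the filtered set is contained in the four candidate pairs
  have hsub : (({a,b,c,d} : Finset ℕ).powerset.filter
      (fun B => B.card = 2 ∧ B.sum id ∣ ({a,b,c,d} : Finset ℕ).sum id)) ⊆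
      {({a,b} : Finset ℕ), {a,c}, {a,d}, {b,c}} := by
    intro B hB
    simp only [Finset.mem_filter, Finset.mem_powerset, hS] at hB
    obtain ⟨hBs, hc2, hdvd⟩ := hB
    have hbd : ¬ (b + d) ∣ (a + b + c + d) := not_dvd_of_between (by omega) (by omega)
    have hcd : ¬ (c + d) ∣ (a + b + c + d) := not_dvd_of_between (by omega) (by omega)
    rcases mem_pairs hBs hc2 with rfl | rfl | rfl | rfl | rfl | rfl <;>
      simp_all [Finset.sum_pair, show b ≠ d by omega, show c ≠ d by omega]
  have heq := Finset.eq_of_subset_of_card_le hsub (by rw [h, card4 h1 h2 h3])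
  -- extract the four divisibility facts
  have get : ∀ x y : ℕ, x ≠ y → ({x,y} : Finset ℕ) ∈
      ({({a,b} : Finset ℕ), {a,c}, {a,d}, {b,c}} : Finset (Finset ℕ)) →
      (x + y) ∣ (a + b + c + d) := by
    intro x y hxy hm
    rw [← heq] at hm
    simp only [Finset.mem_filter] at hm
    have := hm.2.2
    rwa [Finset.sum_pair hxy, hS] at this
  have d1 : (a + b) ∣ (a + b + c + d) := get a b (by omega) (by simp)
  have d2 : (a + c) ∣ (a + b + c + d) := get a c (by omega) (by simp)
  have d3 : (a + d) ∣ (a + b + c + d) := get a d (by omega) (by simp)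
  have d4 : (b + c) ∣ (a + b + c + d) := get b c (by omega) (by simp)
  -- a + d = b + c
  have key : a + d = b + c := by
    rcases Nat.lt_trichotomy (a + d) (b + c) with hlt | he | hgt
    · exact absurd d4 (not_dvd_of_between (by omega) (by omega))
    · exact he
    · exact absurd d3 (not_dvd_of_between (by omega) (by omega))
  -- (a+c) divides S with quotient 3
  obtain ⟨k, hk⟩ := d2
  have hk2 : 2 < k := Nat.lt_of_mul_lt_mul_left (a := a + c) (by rw [← hk]; omega)
  have hk4 : k < 4 := Nat.lt_of_mul_lt_mul_left (a := a + c) (by rw [← hk]; omega)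
  have hk3 : k = 3 := by omega
  subst hk3
  obtain ⟨m, hm⟩ := d1
  have hm3 : 3 < m := Nat.lt_of_mul_lt_mul_left (a := a + b) (by rw [← hm]; omega)
  have hm6 : m < 6 := Nat.lt_of_mul_lt_mul_left (a := a + b) (by rw [← hm]; omega)
  have : m = 4 ∨ m = 5 := by omega
  rcases this with rfl | rfl
  · left; omega
  · right; omega

/-- A set `A` of four positive integers has exactly 4 two-element divisors if and only if
`A = {a, 5a, 7a, 11a}` or `A = {a, 11a, 19a, 29a}` for some positive integer `a`. -/
theorem stmt_1 (A : Finset ℕ) (hcard : A.card = 4) (hpos : ∀ a ∈ A, 0 < a) :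
    (A.powerset.filter (fun B => B.card = 2 ∧ B.sum id ∣ A.sum id)).card = 4 ↔
      ∃ a : ℕ, 0 < a ∧
        (A = {a, 5 * a, 7 * a, 11 * a} ∨ A = {a, 11 * a, 19 * a, 29 * a}) := by
  obtain ⟨a, b, c, d, hl⟩ := list_len4 (A.sort (· ≤ ·)) (by simp [hcard])
  have hs := (Finset.sortedLT_sort A).pairwise
  rw [hl] at hs
  simp [List.pairwise_cons] at hs
  have hA : A = {a, b, c, d} := by
    have := Finset.sort_toFinset (s := A) (r := (· ≤ ·))
    rw [hl] at this
    simp at this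
    exact this.symm
  have h1 : a < b := by omega
  have h2 : b < c := by omega
  have h3 : c < d := by omega
  have ha : 0 < a := hpos a (by rw [hA]; simp)
  subst hA
  constructor
  · intro h
    rcases forward h1 h2 h3 ha h with ⟨hb, hc, hd⟩ | ⟨hb, hc, hd⟩
    · exact ⟨a, ha, Or.inl (by rw [hb, hc, hd])⟩
    · exact ⟨a, ha, Or.inr (by rw [hb, hc, hd])⟩
  · rintro ⟨a', ha', hAe | hAe⟩ <;> rw [hAe]
    · have e1 : a' < 5 * a' := by omega
      have e2 : 5 * a' < 7 * a' := by omega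
      have e3 : 7 * a' < 11 * a' := by omega
      exact count_eq_four e1 e2 e3 ha' ⟨4, by ring⟩ ⟨3, by ring⟩ ⟨2, by ring⟩ ⟨2, by ring⟩
    · have e1 : a' < 11 * a' := by omega
      have e2 : 11 * a' < 19 * a' := by omega
      have e3 : 19 * a' < 29 * a' := by omega
      exact count_eq_four e1 e2 e3 ha' ⟨5, by ring⟩ ⟨3, by ring⟩ ⟨2, by ring⟩ ⟨2, by ring⟩
end

section
/- For every n ≥ 1 there exists a set A of n positive integers such that the number of divisors of A is at least 2^(n-1). -/
theorem aux_geom (m : ℕ) : ∑ i ∈ Finset.range m, 2 ^ i = 2 ^ m - 1 := by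
  induction m with
  | zero => simp
  | succ k ih =>
    rw [Finset.sum_range_succ, ih, pow_succ]
    have : 1 ≤ 2 ^ k := Nat.one_le_two_pow
    omega

/-- For every `n ≥ 1` there is a set of `n` positive integers with at least `2 ^ (n - 1)`
divisors. -/
theorem stmt_2 (n : ℕ) (hn : 1 ≤ n) :
    ∃ A : Finset ℕ, A.card = n ∧ (∀ a ∈ A, 0 < a) ∧
      2 ^ (n - 1) ≤ (A.powerset.filter (fun B => B.Nonempty ∧ B.sum id ∣ A.sum id)).card := by
  set m := n - 1 with hm
  set M := Nat.factorial (2 ^ (m + 1)) with hM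
  set base : Finset ℕ := (Finset.range m).image (2 ^ ·) with hbase
  set t := M - (2 ^ m - 1) with ht
  set A : Finset ℕ := insert t base with hA
  have hMfac : 2 ^ (m + 1) ≤ M := Nat.self_le_factorial _
  have hpow : 1 ≤ 2 ^ m := Nat.one_le_two_pow
  have hmem_base : ∀ b ∈ base, ∃ i < m, b = 2 ^ i := by
    intro b hb
    simp only [hbase, Finset.mem_image, Finset.mem_range] at hb
    obtain ⟨i, hi, rfl⟩ := hb
    exact ⟨i, hi, rfl⟩
  have hbase_le : ∀ b ∈ base, b ≤ 2 ^ m - 1 := by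
    intro b hb
    obtain ⟨i, hi, rfl⟩ := hmem_base b hb
    have : 2 ^ i < 2 ^ m := Nat.pow_lt_pow_right one_lt_two hi
    omega
  have hbase_pos : ∀ b ∈ base, 0 < b := by
    intro b hb
    obtain ⟨i, _, rfl⟩ := hmem_base b hb
    positivity
  have ht_big : 2 ^ m - 1 < t := by
    have : 2 ^ (m + 1) = 2 * 2 ^ m := by ring
    omega
  have htb : t ∉ base := fun h => absurd (hbase_le t h) (by omega)
  have hinj : Set.InjOn (2 ^ ·) (Finset.range m) :=
    fun a _ b _ h => Nat.pow_right_injective le_rfl h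
  have hcard_base : base.card = m := by
    rw [hbase, Finset.card_image_of_injOn hinj, Finset.card_range]
  have hsum_base : base.sum id = 2 ^ m - 1 := by
    rw [hbase, Finset.sum_image hinj]
    simpa using aux_geom m
  have hsumA : A.sum id = M := by
    rw [hA, Finset.sum_insert htb, hsum_base]
    simp only [id]
    omega
  refine ⟨A, ?_, ?_, ?_⟩
  · rw [hA, Finset.card_insert_of_notMem htb, hcard_base]; omega
  · intro a ha
    rw [hA, Finset.mem_insert] at ha
    rcases ha with rfl | ha
    · omega
    · exact hbase_pos a ha
  -- counting
  have key : ∀ B ∈ base.powerset,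
      (if B = ∅ then A else B) ∈
        A.powerset.filter (fun B => B.Nonempty ∧ B.sum id ∣ A.sum id) := by
    intro B hB
    rw [Finset.mem_powerset] at hB
    by_cases hBe : B = ∅
    · rw [if_pos hBe, Finset.mem_filter, Finset.mem_powerset]
      exact ⟨Finset.Subset.refl A, ⟨t, Finset.mem_insert_self _ _⟩, dvd_rfl⟩
    · have hBne : B.Nonempty := Finset.nonempty_iff_ne_empty.mpr hBe
      simp only [if_neg hBe, Finset.mem_filter, Finset.mem_powerset]
      refine ⟨hB.trans (Finset.subset_insert _ _), hBne, ?_⟩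
      rw [hsumA]
      have hle : B.sum id ≤ base.sum id := Finset.sum_le_sum_of_subset hB
      have hposB : 0 < B.sum id :=
        Finset.sum_pos (fun b hb => hbase_pos b (hB hb)) hBne
      refine Nat.dvd_factorial hposB ?_
      have : 2 ^ (m + 1) = 2 * 2 ^ m := by ring
      omega
  have hinj2 : Set.InjOn (fun B => if B = ∅ then A else B) base.powerset := by
    intro B1 h1 B2 h2 heq
    rw [Finset.coe_powerset, Set.mem_preimage, Set.mem_powerset_iff,
      Finset.coe_subset] at h1 h2
    by_cases e1 : B1 = ∅ <;> by_cases e2 : B2 = ∅ <;>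
      simp only [e1, e2, if_pos, if_neg, if_true, if_false] at heq
    · rw [e1, e2]
    · exfalso; rw [← heq] at h2; exact htb (h2 (Finset.mem_insert_self _ _))
    · exfalso; rw [heq] at h1; exact htb (h1 (Finset.mem_insert_self _ _))
    · exact heq
  have := Finset.card_le_card_of_injOn _ key hinj2
  rwa [Finset.card_powerset, hcard_base] at this
end

section
/- Let n ≥ 2 and let A' be any set of n-1 positive integers. Then there exists a positive integer a not in A' such that, setting A = A' ∪ {a}, every nonempty subset of A' is a divisor of A. -/
/-- For `n ≥ 2` and any set `A'` of `n - 1` positive integers, there is a positive integer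
`a ∉ A'` such that every nonempty subset of `A'` is a divisor of `A' ∪ {a}`. -/
theorem stmt_3 (n : ℕ) (hn : 2 ≤ n) (A' : Finset ℕ) (hcard : A'.card = n - 1)
    (hpos : ∀ a ∈ A', 0 < a) :
    ∃ a : ℕ, 0 < a ∧ a ∉ A' ∧
      ∀ B ⊆ A', B.Nonempty → B.sum id ∣ (insert a A').sum id := by
  set S := A'.sum id with hS
  set L := ∏ B ∈ A'.powerset, max (B.sum id) 1 with hL
  have hL1 : 1 ≤ L := Finset.one_le_prod' fun B _ => le_max_right _ _
  have hSle : S ≤ L * (2 * S + 1) := by nlinarith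
  set a := L * (2 * S + 1) - S with ha
  have haS : a ≥ S + 1 := by
    have : S + 1 ≤ L * (2 * S + 1) - S := by
      have : 2 * S + 1 ≤ L * (2 * S + 1) := Nat.le_mul_of_pos_left _ hL1
      omega
    exact this
  have hapos : 0 < a := by omega
  have hanot : a ∉ A' := by
    intro hmem
    have : a ≤ S := Finset.single_le_sum (f := id) (fun i _ => Nat.zero_le _) hmem
    omega
  refine ⟨a, hapos, hanot, fun B hB hBne => ?_⟩
  have hBsum : 0 < B.sum id :=
    Finset.sum_pos (fun i hi => hpos i (hB hi)) hBne
  have h1 : B.sum id ∣ L := by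
    have hmem : B ∈ A'.powerset := Finset.mem_powerset.mpr hB
    have : max (B.sum id) 1 = B.sum id := max_eq_left hBsum
    calc B.sum id = max (B.sum id) 1 := this.symm
      _ ∣ L := Finset.dvd_prod_of_mem _ hmem
  have hsum : (insert a A').sum id = L * (2 * S + 1) := by
    rw [Finset.sum_insert hanot, ← hS]
    simp only [id]
    omega
  rw [hsum]
  exact h1.mul_right _
end

section
/- For all positive integers k and n with k ≤ n-1, there exists a set A of n positive integers such that the number of k-element divisors of A is at least binomial(n-1, k). -/
/-- For all positive integers `k ≤ n - 1`, there exists a set of `n` positive integers with at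
least `(n - 1).choose k` divisors of size `k`. -/
theorem stmt_4 (k n : ℕ) (hk : 0 < k) (hn : 0 < n) (hkn : k ≤ n - 1) :
    ∃ A : Finset ℕ, A.card = n ∧ (∀ a ∈ A, 0 < a) ∧
      (n - 1).choose k ≤
        (A.powerset.filter (fun B => B.card = k ∧ B.sum id ∣ A.sum id)).card := by
  -- n ≥ 2
  have hn2 : 2 ≤ n := by omega
  set F : Finset ℕ := Finset.Icc 1 (n - 1) with hF
  have hcardF : F.card = n - 1 := by
    rw [hF, Nat.card_Icc]; omega
  set T : ℕ := F.sum id with hT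
  have hT1 : 1 ≤ T := by
    have h1 : (1 : ℕ) ∈ F := by simp [hF]; omega
    calc (1 : ℕ) = id 1 := rfl
    _ ≤ F.sum id := Finset.single_le_sum (fun i _ => Nat.zero_le _) h1
  set m : ℕ := T + n with hm
  have hm3 : 3 ≤ m := by omega
  have hmf : m < m.factorial := Nat.lt_factorial_self hm3
  set N : ℕ := m.factorial with hN
  have hTN : T + n < N := by omega
  have hnotmem : N - T ∉ F := by
    intro h
    rw [hF, Finset.mem_Icc] at h
    omega
  refine ⟨insert (N - T) F, ?_, ?_, ?_⟩
  · rw [Finset.card_insert_of_notMem hnotmem, hcardF]; omega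
  · intro a ha
    rcases Finset.mem_insert.mp ha with h | h
    · omega
    · rw [hF, Finset.mem_Icc] at h; omega
  · have hsumA : (insert (N - T) F).sum id = N := by
      rw [Finset.sum_insert hnotmem]
      have h' : F.sum id = T := hT.symm
      simp only [id_eq] at h' ⊢
      omega
    rw [← hcardF, ← Finset.card_powersetCard]
    apply Finset.card_le_card
    intro B hB
    rw [Finset.mem_powersetCard] at hB
    obtain ⟨hBF, hBk⟩ := hB
    rw [Finset.mem_filter, Finset.mem_powerset]
    have hsumB_pos : 0 < B.sum id := by
      have hne : B.Nonempty := Finset.card_pos.mp (by omega)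
      obtain ⟨b, hb⟩ := hne
      have hb1 : 1 ≤ b := by
        have := hBF hb; rw [hF, Finset.mem_Icc] at this; omega
      calc 0 < b := hb1
      _ = id b := rfl
      _ ≤ B.sum id := Finset.single_le_sum (fun i _ => Nat.zero_le _) hb
    have hsumB_le : B.sum id ≤ T := by
      rw [hT]
      exact Finset.sum_le_sum_of_subset hBF
    refine ⟨hBF.trans (Finset.subset_insert _ _), hBk, ?_⟩
    rw [hsumA, hN]
    exact Nat.dvd_factorial hsumB_pos (by omega)
end

section
/- For each positive integer n, there exist infinitely many prime sets of n positive integers; that is, for every positive integer m there exists a set A of n positive integers whose elements all exceed m such that the only divisor of A is A itself. -/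
/-- For each positive `n` there are infinitely many prime `n`-sets: for every positive integer
`m` there is a set `A` of `n` positive integers, all exceeding `m`, whose only divisor is `A`
itself. -/
theorem stmt_5 (n : ℕ) (hn : 0 < n) (m : ℕ) (hm : 0 < m) :
    ∃ A : Finset ℕ, A.card = n ∧ (∀ a ∈ A, m < a) ∧
      ∀ B ⊆ A, B.Nonempty → B.sum id ∣ A.sum id → B = A := by
  set C : Finset ℕ := Finset.Ico (m + 1) (m + n) with hC
  set s : ℕ := C.sum id with hs
  obtain ⟨p, hp_ge, hp⟩ := Nat.exists_infinite_primes (s + m + n + 1)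
  set x : ℕ := p - s with hx
  have hxge : m + n ≤ x := by omega
  have hxC : x ∉ C := by
    intro h
    have := (Finset.mem_Ico.mp h).2
    omega
  have hxs : x + s = p := by omega
  refine ⟨insert x C, ?_, ?_, ?_⟩
  · rw [Finset.card_insert_of_notMem hxC, Nat.card_Ico]
    omega
  · intro a ha
    rcases Finset.mem_insert.mp ha with h | h
    · omega
    · exact lt_of_lt_of_le (by omega) (Finset.mem_Ico.mp h).1
  · intro B hB hBne hBdvd
    have hsumA : (insert x C).sum id = p := by
      rw [Finset.sum_insert hxC]; exact hxs
    rw [hsumA] at hBdvd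
    have hBpos : ∀ a ∈ B, m < a := by
      intro a ha
      rcases Finset.mem_insert.mp (hB ha) with h | h
      · omega
      · exact lt_of_lt_of_le (by omega) (Finset.mem_Ico.mp h).1
    obtain ⟨b, hb⟩ := hBne
    have hbB : b ≤ B.sum id := Finset.single_le_sum (f := id) (fun i _ => Nat.zero_le i) hb
    have hBgt1 : 1 < B.sum id := lt_of_lt_of_le (by have := hBpos b hb; omega) hbB
    have := (Nat.Prime.eq_one_or_self_of_dvd hp _ hBdvd)
    have hBsum : B.sum id = p := by omega
    -- sums equal and B ⊆ A forces B = A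
    have hdiff : ((insert x C) \ B).sum id = 0 := by
      have h1 : ((insert x C) \ B).sum id + B.sum id = (insert x C).sum id :=
        Finset.sum_sdiff hB
      omega
    have hempty : (insert x C) \ B = ∅ := by
      by_contra h
      obtain ⟨c, hc⟩ := Finset.nonempty_iff_ne_empty.mpr h
      have hcpos : 0 < c := by
        rcases Finset.mem_insert.mp (Finset.mem_sdiff.mp hc).1 with h' | h'
        · omega
        · have := (Finset.mem_Ico.mp h').1; omega
      have : 0 < ((insert x C) \ B).sum id :=
        lt_of_lt_of_le hcpos (Finset.single_le_sum (f := id) (fun i _ => Nat.zero_le i) hc)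
      omega
    exact Finset.eq_of_subset_of_card_le hB (by
      have := Finset.card_sdiff_add_card_eq_card hB
      rw [hempty] at this
      simp at this
      omega)
end

section
/- Let A be a set of n positive integers and let h be the number of unordered pairs {B, A\B} such that B is a halving set of A (equivalently, 2h is the number of halving sets of A). Then the number of divisors of A is at most 2^(n-1) + h. -/
lemma key_arith (s t S : ℕ) (hs : 0 < s) (ht : 0 < t) (hst : s + t = S)
    (h1 : s ∣ S) (h2 : t ∣ S) : 2 * s = S := by
  obtain ⟨k, hk⟩ := h1
  rcases k with _ | k
  · omega
  · -- S = s * (k+1), t = s * k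
    have htk : t = s * k := by
      have : s * (k + 1) = s * k + s := by ring
      omega
    have hd : s * k ∣ s * (k + 1) := htk ▸ hk ▸ h2
    rcases Nat.eq_zero_or_pos k with rfl | hk0
    · omega
    · have hdk : k ∣ k + 1 := (mul_dvd_mul_iff_left hs.ne').mp hd
      have : k ∣ 1 := (Nat.dvd_add_right dvd_rfl).mp (by simpa [Nat.add_comm] using hdk)
      have hk1 : k = 1 := Nat.dvd_one.mp this
      subst hk1
      omega

/-- If `A` is a set of `n` positive integers and `2 * h` is the number of halving sets of `A`,
then `A` has at most `2 ^ (n - 1) + h` divisors. -/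
theorem stmt_7 (n : ℕ) (A : Finset ℕ) (hcard : A.card = n) (hpos : ∀ a ∈ A, 0 < a)
    (h : ℕ) (hh : 2 * h = (A.powerset.filter (fun B => 2 * B.sum id = A.sum id)).card) :
    (A.powerset.filter (fun B => B.Nonempty ∧ B.sum id ∣ A.sum id)).card
      ≤ 2 ^ (n - 1) + h := by
  rcases A.eq_empty_or_nonempty with rfl | hA
  · simp [Finset.filter_singleton]
  · set S := A.sum id with hSdef
    have hn : 1 ≤ n := by rw [← hcard]; exact Finset.card_pos.mpr hA
    set D := A.powerset.filter (fun B => B.Nonempty ∧ B.sum id ∣ S) with hD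
    set Hf := A.powerset.filter (fun B => 2 * B.sum id = S) with hHf
    have hkey : ∀ B ∈ D, (A \ B) ∈ D → B ∈ Hf := by
      intro B hB hB'
      simp only [hD, hHf, Finset.mem_filter, Finset.mem_powerset] at hB hB' ⊢
      obtain ⟨hBA, hBne, hBd⟩ := hB
      obtain ⟨_, hCne, hCd⟩ := hB'
      have hsum : (A \ B).sum id + B.sum id = S := Finset.sum_sdiff hBA
      have hs : 0 < B.sum id := Finset.sum_pos (fun i hi => hpos i (hBA hi)) hBne
      have ht : 0 < (A \ B).sum id :=
        Finset.sum_pos (fun i hi => hpos i (Finset.mem_sdiff.mp hi).1) hCne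
      exact ⟨hBA, key_arith _ _ _ hs ht (by omega) hBd hCd⟩
    have hinj : Set.InjOn (fun B => A \ B) D := by
      intro B hB B' hB' hEq
      simp only [hD, Finset.coe_filter, Set.mem_setOf_eq, Finset.mem_powerset] at hB hB'
      have h2 := congrArg (fun C => A \ C) hEq
      simpa [Finset.sdiff_sdiff_eq_self hB.1, Finset.sdiff_sdiff_eq_self hB'.1] using h2
    have hcardim : (D.image (fun B => A \ B)).card = D.card :=
      Finset.card_image_of_injOn hinj
    have hsub : D ∪ D.image (fun B => A \ B) ⊆ A.powerset := by
      intro B hB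
      rcases Finset.mem_union.mp hB with hB | hB
      · exact Finset.mem_of_mem_filter _ hB
      · obtain ⟨B', hB', rfl⟩ := Finset.mem_image.mp hB
        exact Finset.mem_powerset.mpr (Finset.sdiff_subset)
    have hint : D ∩ D.image (fun B => A \ B) ⊆ Hf := by
      intro B hB
      obtain ⟨hB1, hB2⟩ := Finset.mem_inter.mp hB
      obtain ⟨B', hB', rfl⟩ := Finset.mem_image.mp hB2
      apply hkey _ hB1
      have hB'A : B' ⊆ A := Finset.mem_powerset.mp (Finset.mem_filter.mp hB').1
      rwa [Finset.sdiff_sdiff_eq_self hB'A]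
    have huniq := Finset.card_union_add_card_inter D (D.image (fun B => A \ B))
    have h1 : (D ∪ D.image (fun B => A \ B)).card ≤ 2 ^ n := by
      calc (D ∪ D.image (fun B => A \ B)).card ≤ A.powerset.card :=
            Finset.card_le_card hsub
        _ = 2 ^ n := by rw [Finset.card_powerset, hcard]
    have h2 : (D ∩ D.image (fun B => A \ B)).card ≤ 2 * h := by
      rw [hh]; exact Finset.card_le_card hint
    have h2n : 2 ^ n = 2 * 2 ^ (n - 1) := by
      rcases n with _ | m
      · exact absurd hn (by omega)
      · rw [Nat.succ_sub_one, pow_succ, mul_comm]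
    omega
end

section
/- Let A be a set of 2n positive integers and let h be the number of unordered pairs {B, A\B} with |B| = n such that B is a halving set of A (equivalently, 2h is the number of n-element halving sets of A). Then the number of n-element divisors of A is at most (1/2)·binomial(2n, n) + h. -/
lemma two_mul_le_of_dvd' {d S : ℕ} (h : d ∣ S) (hlt : d < S) : 2 * d ≤ S := by
  obtain ⟨k, rfl⟩ := h
  rcases k with _ | _ | k
  · omega
  · omega
  · nlinarith

/-- If `A` is a set of `2n` positive integers and `2 * h` is the number of `n`-element halving
sets of `A`, then `A` has at most `(1/2) * (2n).choose n + h` divisors of size `n`. -/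
theorem stmt_8 (n : ℕ) (A : Finset ℕ) (hcard : A.card = 2 * n) (hpos : ∀ a ∈ A, 0 < a)
    (h : ℕ)
    (hh : 2 * h =
      (A.powerset.filter (fun B => B.card = n ∧ 2 * B.sum id = A.sum id)).card) :
    2 * (A.powerset.filter (fun B => B.card = n ∧ B.sum id ∣ A.sum id)).card
      ≤ (2 * n).choose n + 2 * h := by
  rcases Nat.eq_zero_or_pos n with hn | hn
  · subst hn
    have hA : A = ∅ := Finset.card_eq_zero.mp (by omega)
    subst hA
    simp [Finset.filter_singleton] at hh
  set S := A.sum id with hS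
  set D := A.powerset.filter (fun B => B.card = n ∧ B.sum id ∣ S) with hD
  set H := A.powerset.filter (fun B => B.card = n ∧ 2 * B.sum id = S) with hHdef
  set P := A.powerset.filter (fun B => B.card = n) with hP
  have hHD : H ⊆ D := by
    intro B hB
    simp only [hHdef, hD, Finset.mem_filter, Finset.mem_powerset] at hB ⊢
    exact ⟨hB.1, hB.2.1, ⟨2, by omega⟩⟩
  have hDP : D ⊆ P := by
    intro B hB
    simp only [hP, hD, Finset.mem_filter, Finset.mem_powerset] at hB ⊢
    exact ⟨hB.1, hB.2.1⟩
  have hPcard : P.card = (2 * n).choose n := by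
    rw [hP, ← Finset.powersetCard_eq_filter, Finset.card_powersetCard, hcard]
  -- key: complement maps D \ H injectively into P \ D
  have key : (D \ H).card ≤ (P \ D).card := by
    apply Finset.card_le_card_of_injOn (fun B => A \ B)
    · intro B hB
      simp only [Finset.mem_coe, Finset.mem_sdiff, hD, hHdef, hP, Finset.mem_filter,
        Finset.mem_powerset] at hB ⊢
      obtain ⟨⟨hBA, hBn, hBdvd⟩, hnH⟩ := hB
      have hnotH : ¬ (2 * B.sum id = S) := fun hc => hnH ⟨hBA, hBn, hc⟩
      have hcardc : (A \ B).card = n := by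
        rw [Finset.card_sdiff_of_subset hBA, hcard, hBn]; omega
      refine ⟨⟨Finset.sdiff_subset, hcardc⟩, ?_⟩
      rintro ⟨-, -, hdvd'⟩
      have hsum : (A \ B).sum id + B.sum id = S := Finset.sum_sdiff hBA
      have hBpos : 0 < B.sum id := by
        apply Finset.sum_pos (fun i hi => hpos i (hBA hi))
        exact Finset.card_pos.mp (by omega)
      have hCpos : 0 < (A \ B).sum id := by
        apply Finset.sum_pos (fun i hi => hpos i (Finset.sdiff_subset hi))
        exact Finset.card_pos.mp (by omega)
      have h1 : 2 * B.sum id ≤ S := two_mul_le_of_dvd' hBdvd (by omega)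
      have h2 : 2 * (A \ B).sum id ≤ S := two_mul_le_of_dvd' hdvd' (by omega)
      omega
    · intro B₁ h₁ B₂ h₂ heq
      have hB₁ : B₁ ⊆ A := by
        have := (Finset.mem_sdiff.mp h₁).1
        simp only [hD, Finset.mem_filter, Finset.mem_powerset] at this
        exact this.1
      have hB₂ : B₂ ⊆ A := by
        have := (Finset.mem_sdiff.mp h₂).1
        simp only [hD, Finset.mem_filter, Finset.mem_powerset] at this
        exact this.1
      calc B₁ = A \ (A \ B₁) := (Finset.sdiff_sdiff_eq_self hB₁).symm
        _ = A \ (A \ B₂) := by rw [show A \ B₁ = A \ B₂ from heq]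
        _ = B₂ := Finset.sdiff_sdiff_eq_self hB₂
  have c1 : (D \ H).card = D.card - H.card := Finset.card_sdiff_of_subset hHD
  have c2 : (P \ D).card = P.card - D.card := Finset.card_sdiff_of_subset hDP
  have c3 : H.card ≤ D.card := Finset.card_le_card hHD
  have c4 : D.card ≤ P.card := Finset.card_le_card hDP
  omega
end

section
/- For every n ≥ 4 and every set A of n positive integers, the number of divisors of A is at most 2^(n-1). Consequently, for n ≥ 4 the maximum number of divisors over all sets of n positive integers equals 2^(n-1). -/
lemma sum_le_of_subset {B A : Finset ℕ} (h : B ⊆ A) : B.sum id ≤ A.sum id :=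
  Finset.sum_le_sum_of_subset h

lemma sum_pos_of_ne {B : Finset ℕ} (hne : B.Nonempty) (hpos : ∀ b ∈ B, 0 < b) :
    0 < B.sum id := Finset.sum_pos hpos hne

lemma sum_lt_of_ne {B A : Finset ℕ} (hBA : B ⊆ A) (hne : B ≠ A)
    (hpos : ∀ a ∈ A, 0 < a) : B.sum id < A.sum id := by
  obtain ⟨i, hiA, hiB⟩ := Finset.exists_of_ssubset (ssubset_of_subset_of_ne hBA hne)
  exact Finset.sum_lt_sum_of_subset hBA hiA hiB (hpos i hiA) (fun j _ _ => Nat.zero_le _)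

lemma eq_of_subset_sum_eq {B A : Finset ℕ} (hBA : B ⊆ A) (hpos : ∀ a ∈ A, 0 < a)
    (h : B.sum id = A.sum id) : B = A := by
  by_contra hne
  exact absurd h (Nat.ne_of_lt (sum_lt_of_ne hBA hne hpos))

lemma step_dvd {S d m : ℕ} (hd : d ∣ S) (h : d * m < S) : d * (m + 1) ≤ S := by
  obtain ⟨k, rfl⟩ := hd
  rcases Nat.eq_zero_or_pos d with rfl | hd0
  · simp
  have : m < k := by
    by_contra hc
    exact absurd (Nat.mul_le_mul_left d (not_lt.mp hc)) (not_le.mpr h)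
  exact Nat.mul_le_mul_left d this

def tog (x : ℕ) (C : Finset ℕ) : Finset ℕ := if x ∈ C then C.erase x else insert x C

lemma tog_tog (x : ℕ) (C : Finset ℕ) : tog x (tog x C) = C := by
  unfold tog
  by_cases h : x ∈ C
  · simp [h, Finset.insert_erase h]
  · simp [h, Finset.erase_insert h]

lemma tog_inj {x : ℕ} {C D : Finset ℕ} (h : tog x C = tog x D) : C = D := by
  have := congrArg (tog x) h
  rwa [tog_tog, tog_tog] at this

lemma card_filter_mem {A : Finset ℕ} {a : ℕ} (ha : a ∈ A) :
    (A.powerset.filter (fun C => a ∈ C)).card = 2 ^ (A.card - 1) := by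
  have : (A.powerset.filter (fun C => a ∈ C)).card = (A.erase a).powerset.card := by
    apply Finset.card_bij' (fun C _ => C.erase a) (fun D _ => insert a D)
    · intro C hC
      simp only [Finset.mem_filter] at hC
      exact Finset.insert_erase hC.2
    · intro D hD
      simp only [Finset.mem_powerset] at hD
      exact Finset.erase_insert (fun hx => (Finset.mem_erase.mp (hD hx)).1 rfl)
    · intro C hC
      simp only [Finset.mem_filter, Finset.mem_powerset] at hC
      exact Finset.mem_powerset.mpr (Finset.erase_subset_erase a hC.1)
    · intro D hD
      simp only [Finset.mem_powerset] at hD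
      simp only [Finset.mem_filter, Finset.mem_powerset]
      exact ⟨Finset.insert_subset ha (hD.trans (Finset.erase_subset a A)), Finset.mem_insert_self a D⟩
  rw [this, Finset.card_powerset, Finset.card_erase_of_mem ha]
lemma key_choice {A : Finset ℕ} (hpos : ∀ y ∈ A, 0 < y) {a b c e : ℕ}
    (ha : a ∈ A) (hb : b ∈ A) (hc : c ∈ A) (he : e ∈ A)
    (hab : a < b) (hbc : b < c) (hce : c < e) :
    ∃ x ∈ A, 2 * x < A.sum id ∧ ∀ d, d ∣ A.sum id → 2 * (d + x) ≠ A.sum id := by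
  set S := A.sum id with hS
  have h4 : a + b + c + e ≤ S := by
    have hsub : {a, b, c, e} ⊆ A := by
      intro y hy
      simp only [Finset.mem_insert, Finset.mem_singleton] at hy
      rcases hy with rfl | rfl | rfl | rfl <;> assumption
    have hsum : ({a, b, c, e} : Finset ℕ).sum id = a + b + c + e := by
      rw [Finset.sum_insert (by simp; omega), Finset.sum_insert (by simp; omega),
        Finset.sum_insert (by simp; omega), Finset.sum_singleton]
      simp [id]
      ring
    calc a + b + c + e = ({a, b, c, e} : Finset ℕ).sum id := hsum.symm
      _ ≤ S := Finset.sum_le_sum_of_subset hsub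
  have ha1 : 1 ≤ a := hpos a ha
  have h2a : 2 * a < S := by omega
  have h2b : 2 * b < S := by omega
  have h2c : 2 * c < S := by omega
  by_contra hcon
  push_neg at hcon
  obtain ⟨da, hda, hea⟩ := hcon a ha h2a
  obtain ⟨db, hdb, heb⟩ := hcon b hb h2b
  obtain ⟨dc, hdc, hec⟩ := hcon c hc h2c
  -- 2*da + 2*a = S etc.
  have h3a : da * 3 ≤ S := step_dvd hda (by omega)
  have h4b : db * 4 ≤ S := step_dvd hdb (by omega)
  have h5c : dc * 5 ≤ S := step_dvd hdc (by omega)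
  omega
open Finset in
lemma upper' {A : Finset ℕ} {n : ℕ} (hn : 4 ≤ n) (hcard : A.card = n)
    (hpos : ∀ y ∈ A, 0 < y)
    {a x : ℕ} (haA : a ∈ A) (hxA : x ∈ A)
    (hx2 : 2 * x < A.sum id) (hxkey : ∀ d, d ∣ A.sum id → 2 * (d + x) ≠ A.sum id) :
    (A.powerset.filter (fun B => B.Nonempty ∧ B.sum id ∣ A.sum id)).card ≤ 2 ^ (n - 1) := by
  classical
  set S := A.sum id with hSdef
  have hS0 : 0 < S := Finset.sum_pos hpos (Finset.card_pos.mp (by omega))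
  set D := A.powerset.filter (fun B => B.Nonempty ∧ B.sum id ∣ S) with hDdef
  set T := A.powerset.filter (fun C => a ∈ C) with hTdef
  have hTcard : T.card = 2 ^ (n - 1) := by
    rw [hTdef, card_filter_mem haA, hcard]
  set g : Finset ℕ → Finset ℕ := fun B => if x = a then insert a B else tog x (A \ B) with hgdef
  set Φ : Finset ℕ → Finset ℕ :=
    fun B => if a ∈ B then B else if 2 * B.sum id = S then g B else A \ B with hΦdef
  -- membership facts
  have memD : ∀ B ∈ D, B ⊆ A ∧ B.Nonempty ∧ B.sum id ∣ S := by
    intro B hB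
    rw [hDdef, Finset.mem_filter, Finset.mem_powerset] at hB
    exact ⟨hB.1, hB.2.1, hB.2.2⟩
  have sum_facts : ∀ B ∈ D, a ∉ B → 0 < B.sum id ∧ B.sum id < S := by
    intro B hB haB
    obtain ⟨hBA, hBne, _⟩ := memD B hB
    refine ⟨Finset.sum_pos (fun i hi => hpos i (hBA hi)) hBne, ?_⟩
    exact sum_lt_of_ne hBA (fun h => haB (h ▸ haA)) hpos
  have hsd : ∀ B ⊆ A, (A \ B).sum id + B.sum id = S := fun B hBA => Finset.sum_sdiff hBA
  -- g facts : for B ⊆ A with a ∉ B, g B ⊆ A, a ∈ g B, and sum relation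
  have hgmem : ∀ B, B ⊆ A → a ∉ B → g B ⊆ A ∧ a ∈ g B := by
    intro B hBA haB
    rw [hgdef]
    by_cases hxa : x = a
    · simp only [if_pos hxa]
      exact ⟨Finset.insert_subset haA hBA, Finset.mem_insert_self a B⟩
    · simp only [if_neg hxa]
      have haAB : a ∈ A \ B := Finset.mem_sdiff.mpr ⟨haA, haB⟩
      unfold tog
      split_ifs with h
      · exact ⟨(Finset.erase_subset x _).trans (Finset.sdiff_subset),
          Finset.mem_erase.mpr ⟨fun hax => hxa hax.symm, haAB⟩⟩
      · exact ⟨Finset.insert_subset hxA Finset.sdiff_subset,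
          Finset.mem_insert_of_mem haAB⟩
  -- sum of g B when 2 * sum B = S : either (g B).sum + x = B.sum  or  (g B).sum = B.sum + x
  have hgsum : ∀ B, B ⊆ A → a ∉ B → 2 * B.sum id = S →
      (g B).sum id + x = B.sum id ∨ (g B).sum id = B.sum id + x := by
    intro B hBA haB hhalf
    have hABsum : (A \ B).sum id + B.sum id = S := hsd B hBA
    rw [hgdef]
    by_cases hxa : x = a
    · right
      simp only [if_pos hxa]
      rw [Finset.sum_insert (hxa ▸ haB)]
      subst hxa; simp [id]; omega
    · simp only [if_neg hxa]
      unfold tog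
      split_ifs with h
      · left
        have h' := Finset.sum_erase_add (A \ B) id h
        simp only [id_eq] at h' hABsum hhalf ⊢
        omega
      · right
        rw [Finset.sum_insert h]
        simp only [id_eq] at hABsum hhalf ⊢
        omega
  -- maps to T
  have hmaps : ∀ B ∈ D, Φ B ∈ T := by
    intro B hB
    obtain ⟨hBA, hBne, hBdvd⟩ := memD B hB
    rw [hTdef, Finset.mem_filter, Finset.mem_powerset, hΦdef]
    by_cases h1 : a ∈ B
    · simp only [if_pos h1]; exact ⟨hBA, h1⟩
    · simp only [if_neg h1]
      by_cases h2 : 2 * B.sum id = S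
      · simp only [if_pos h2]; exact hgmem B hBA h1
      · simp only [if_neg h2]
        exact ⟨Finset.sdiff_subset, Finset.mem_sdiff.mpr ⟨haA, h1⟩⟩
  -- class 1 vs class 2/3
  have lem12 : ∀ B₁ ∈ D, ∀ B₂ ∈ D, a ∈ B₁ → a ∉ B₂ → Φ B₁ ≠ Φ B₂ := by
    intro B₁ hB₁ B₂ hB₂ h1 h2 heq
    obtain ⟨hB₁A, hB₁ne, hB₁dvd⟩ := memD B₁ hB₁
    obtain ⟨hB₂A, hB₂ne, hB₂dvd⟩ := memD B₂ hB₂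
    obtain ⟨hs₂0, hs₂S⟩ := sum_facts B₂ hB₂ h2
    have hs₁le : B₁.sum id ≤ S := Finset.sum_le_sum_of_subset hB₁A
    rw [hΦdef] at heq
    simp only [if_pos h1, if_neg h2] at heq
    by_cases h2half : 2 * B₂.sum id = S
    · rw [if_pos h2half] at heq
      have hsum := hgsum B₂ hB₂A h2 h2half
      have hs₁eq : B₁.sum id = (g B₂).sum id := by rw [heq]
      rcases hsum with h | h
      · -- sum B₁ + x = sum B₂, so 2*(sum B₁ + x) = S : contradicts hxkey
        exact hxkey (B₁.sum id) hB₁dvd (by omega)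
      · -- sum B₁ = sum B₂ + x : 2 * sum B₁ = S + 2x > S
        have hlt : ¬ B₁.sum id < S := by
          intro hlt
          have := step_dvd hB₁dvd (by omega : B₁.sum id * 1 < S)
          have hx0 : 0 < x := hpos x hxA
          omega
        have : B₁.sum id = S := by omega
        omega
    · rw [if_neg h2half] at heq
      -- B₁ = A \ B₂ : sum B₁ + sum B₂ = S
      have hsum : B₁.sum id + B₂.sum id = S := by
        rw [heq]; exact hsd B₂ hB₂A
      have hs₁S : B₁.sum id < S := by omega
      have h2s₁ : B₁.sum id * 2 ≤ S := step_dvd hB₁dvd (by omega)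
      have h2s₂ : B₂.sum id * 2 ≤ S := step_dvd hB₂dvd (by omega)
      have h3s₂ : B₂.sum id * 3 ≤ S := step_dvd hB₂dvd (by omega)
      omega
  -- class 2 vs class 3
  have lem23 : ∀ B₁ ∈ D, ∀ B₂ ∈ D, a ∉ B₁ → a ∉ B₂ → 2 * B₁.sum id ≠ S →
      2 * B₂.sum id = S → Φ B₁ ≠ Φ B₂ := by
    intro B₁ hB₁ B₂ hB₂ h1 h2 hh1 hh2 heq
    obtain ⟨hB₁A, hB₁ne, hB₁dvd⟩ := memD B₁ hB₁
    obtain ⟨hB₂A, hB₂ne, hB₂dvd⟩ := memD B₂ hB₂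
    obtain ⟨hs₁0, hs₁S⟩ := sum_facts B₁ hB₁ h1
    rw [hΦdef] at heq
    simp only [if_neg h1, if_neg h2, if_neg hh1, if_pos hh2] at heq
    have hsum₁ : (A \ B₁).sum id + B₁.sum id = S := hsd B₁ hB₁A
    have hgs : (A \ B₁).sum id = (g B₂).sum id := by rw [heq]
    rcases hgsum B₂ hB₂A h2 hh2 with h | h
    · -- (g B₂).sum + x = sum B₂ : then sum(A\B₁) + x = sum B₂, sum B₁ = sum B₂ + x
      have h2s₁ : B₁.sum id * 2 ≤ S := step_dvd hB₁dvd (by omega)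
      have hx0 : 0 < x := hpos x hxA
      omega
    · -- (g B₂).sum = sum B₂ + x : then sum B₁ + x = sum B₂, 2*(sum B₁ + x) = S
      exact hxkey (B₁.sum id) hB₁dvd (by omega)
  -- injectivity
  have hinj : Set.InjOn Φ D := by
    intro B₁ hB₁' B₂ hB₂' heq
    have hB₁ : B₁ ∈ D := hB₁'
    have hB₂ : B₂ ∈ D := hB₂'
    obtain ⟨hB₁A, _, _⟩ := memD B₁ hB₁
    obtain ⟨hB₂A, _, _⟩ := memD B₂ hB₂
    by_cases h1 : a ∈ B₁ <;> by_cases h2 : a ∈ B₂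
    · rw [hΦdef] at heq; simpa only [if_pos h1, if_pos h2] using heq
    · exact absurd heq (lem12 B₁ hB₁ B₂ hB₂ h1 h2)
    · exact absurd heq.symm (lem12 B₂ hB₂ B₁ hB₁ h2 h1)
    · by_cases hh1 : 2 * B₁.sum id = S <;> by_cases hh2 : 2 * B₂.sum id = S
      · -- both class 3
        rw [hΦdef] at heq
        simp only [if_neg h1, if_neg h2, if_pos hh1, if_pos hh2, hgdef] at heq
        by_cases hxa : x = a
        · simp only [if_pos hxa] at heq
          subst hxa
          have := congrArg (fun s => Finset.erase s x) heq
          simpa [Finset.erase_insert h1, Finset.erase_insert h2] using this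
        · simp only [if_neg hxa] at heq
          have := tog_inj heq
          have h1' : A \ (A \ B₁) = A \ (A \ B₂) := by rw [this]
          rwa [Finset.sdiff_sdiff_eq_self hB₁A, Finset.sdiff_sdiff_eq_self hB₂A] at h1'
      · exact absurd heq.symm (lem23 B₂ hB₂ B₁ hB₁ h2 h1 hh2 hh1)
      · exact absurd heq (lem23 B₁ hB₁ B₂ hB₂ h1 h2 hh1 hh2)
      · rw [hΦdef] at heq
        simp only [if_neg h1, if_neg h2, if_neg hh1, if_neg hh2] at heq
        have h1' : A \ (A \ B₁) = A \ (A \ B₂) := by rw [heq]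
        rwa [Finset.sdiff_sdiff_eq_self hB₁A, Finset.sdiff_sdiff_eq_self hB₂A] at h1'
  calc D.card ≤ T.card := Finset.card_le_card_of_injOn Φ hmaps hinj
    _ = 2 ^ (n - 1) := hTcard

lemma upper {A : Finset ℕ} {n : ℕ} (hn : 4 ≤ n) (hcard : A.card = n)
    (hpos : ∀ y ∈ A, 0 < y) :
    (A.powerset.filter (fun B => B.Nonempty ∧ B.sum id ∣ A.sum id)).card ≤ 2 ^ (n - 1) := by
  have h0 : A.Nonempty := Finset.card_pos.mp (by omega)
  set a := A.min' h0 with ha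
  have haA : a ∈ A := A.min'_mem h0
  have h1card : (A.erase a).card = n - 1 := by rw [Finset.card_erase_of_mem haA, hcard]
  have h1 : (A.erase a).Nonempty := Finset.card_pos.mp (by omega)
  set b := (A.erase a).min' h1 with hb
  have hbA1 : b ∈ A.erase a := Finset.min'_mem _ h1
  have hbA : b ∈ A := Finset.mem_of_mem_erase hbA1
  have hab : a < b := lt_of_le_of_ne (A.min'_le b hbA) (Ne.symm (Finset.ne_of_mem_erase hbA1))
  have h2card : ((A.erase a).erase b).card = n - 2 := by
    rw [Finset.card_erase_of_mem hbA1, h1card]; omega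
  have h2 : ((A.erase a).erase b).Nonempty := Finset.card_pos.mp (by omega)
  set c := ((A.erase a).erase b).min' h2 with hc
  have hcA2 : c ∈ (A.erase a).erase b := Finset.min'_mem _ h2
  have hcA1 : c ∈ A.erase a := Finset.mem_of_mem_erase hcA2
  have hcA : c ∈ A := Finset.mem_of_mem_erase hcA1
  have hbc : b < c :=
    lt_of_le_of_ne ((A.erase a).min'_le c hcA1) (Ne.symm (Finset.ne_of_mem_erase hcA2))
  have h3card : (((A.erase a).erase b).erase c).card = n - 3 := by
    rw [Finset.card_erase_of_mem hcA2, h2card]; omega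
  have h3 : (((A.erase a).erase b).erase c).Nonempty := Finset.card_pos.mp (by omega)
  set e := (((A.erase a).erase b).erase c).min' h3 with he
  have heA3 : e ∈ ((A.erase a).erase b).erase c := Finset.min'_mem _ h3
  have heA2 : e ∈ (A.erase a).erase b := Finset.mem_of_mem_erase heA3
  have heA : e ∈ A := Finset.mem_of_mem_erase (Finset.mem_of_mem_erase heA2)
  have hce : c < e :=
    lt_of_le_of_ne (((A.erase a).erase b).min'_le e heA2) (Ne.symm (Finset.ne_of_mem_erase heA3))
  obtain ⟨x, hxA, hx2, hxkey⟩ := key_choice hpos haA hbA hcA heA hab hbc hce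
  exact upper' hn hcard hpos haA hxA hx2 hxkey

lemma construction {n : ℕ} (hn : 4 ≤ n) :
    ∃ A : Finset ℕ, A.card = n ∧ (∀ a ∈ A, 0 < a) ∧
      (A.powerset.filter (fun B => B.Nonempty ∧ B.sum id ∣ A.sum id)).card = 2 ^ (n - 1) := by
  classical
  set I := Finset.Icc 1 (n - 1) with hI
  set t := I.sum id with ht
  set M := t.factorial - t with hM
  set A := insert M I with hA
  have hIcard : I.card = n - 1 := by rw [hI, Nat.card_Icc]; omega
  have ht6 : 6 ≤ t := by
    have hsub : ({1, 2, 3} : Finset ℕ) ⊆ I := by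
      intro y hy
      simp only [Finset.mem_insert, Finset.mem_singleton] at hy
      rw [hI, Finset.mem_Icc]
      rcases hy with rfl | rfl | rfl <;> omega
    have : ({1, 2, 3} : Finset ℕ).sum id ≤ t := Finset.sum_le_sum_of_subset hsub
    simpa using this
  have htn : n - 1 ≤ t := by
    have hmem : n - 1 ∈ I := by rw [hI, Finset.mem_Icc]; omega
    exact Finset.single_le_sum (f := id) (fun i _ => Nat.zero_le _) hmem
  have hfact : 120 * t ≤ t.factorial := by
    have h1 : t.factorial = t * (t - 1).factorial := by
      conv_lhs => rw [show t = (t - 1) + 1 by omega]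
      rw [Nat.factorial_succ]
      congr 1
      omega
    have h2 : 120 ≤ (t - 1).factorial := by
      have : Nat.factorial 5 ≤ (t - 1).factorial := Nat.factorial_le (by omega)
      simpa [Nat.factorial] using this
    calc 120 * t = t * 120 := by ring
      _ ≤ t * (t - 1).factorial := Nat.mul_le_mul_left t h2
      _ = t.factorial := h1.symm
  have htt : t ≤ t.factorial := Nat.self_le_factorial t
  have hMn : n - 1 < M := by rw [hM]; omega
  have hMI : M ∉ I := by
    rw [hI, Finset.mem_Icc]
    omega
  have hAcard : A.card = n := by
    rw [hA, Finset.card_insert_of_notMem hMI, hIcard]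
    omega
  have hposA : ∀ y ∈ A, 0 < y := by
    intro y hy
    rcases Finset.mem_insert.mp hy with rfl | h
    · exact lt_of_le_of_lt (Nat.zero_le _) hMn
    · rw [hI, Finset.mem_Icc] at h; omega
  have hsumA : A.sum id = t.factorial := by
    rw [hA, Finset.sum_insert hMI, ← ht]
    simp only [id_eq]
    omega
  refine ⟨A, hAcard, hposA, ?_⟩
  have hset : A.powerset.filter (fun B => B.Nonempty ∧ B.sum id ∣ A.sum id) =
      insert A (I.powerset.filter (fun B => B.Nonempty)) := by
    ext B
    simp only [Finset.mem_filter, Finset.mem_powerset, Finset.mem_insert]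
    constructor
    · rintro ⟨hBA, hBne, hBdvd⟩
      rw [hsumA] at hBdvd
      by_cases hMB : M ∈ B
      · left
        have hge : M ≤ B.sum id := Finset.single_le_sum (f := id) (fun i _ => Nat.zero_le _) hMB
        have hle : B.sum id ≤ A.sum id := sum_le_of_subset hBA
        rw [hsumA] at hle
        have hBS : B.sum id = t.factorial := by
          by_contra hne
          have hlt : B.sum id < t.factorial := lt_of_le_of_ne hle hne
          have := step_dvd hBdvd (by omega : B.sum id * 1 < t.factorial)
          rw [hM] at hge
          omega
        exact eq_of_subset_sum_eq hBA hposA (by rw [hBS, hsumA])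
      · right
        refine ⟨fun y hy => ?_, hBne⟩
        rcases Finset.mem_insert.mp (hBA hy) with rfl | h
        · exact absurd hy hMB
        · exact h
    · rintro (rfl | ⟨hBI, hBne⟩)
      · exact ⟨subset_rfl, ⟨M, Finset.mem_insert_self M I⟩, dvd_refl _⟩
      · refine ⟨hBI.trans (Finset.subset_insert M I), hBne, ?_⟩
        rw [hsumA]
        have hpos' : 0 < B.sum id := by
          apply Finset.sum_pos _ hBne
          intro i hi
          have := hBI hi
          rw [hI, Finset.mem_Icc] at this
          simp only [id_eq]
          omega
        exact Nat.dvd_factorial hpos' (sum_le_of_subset hBI)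
  rw [hset]
  have hAnotin : A ∉ I.powerset.filter (fun B => B.Nonempty) := by
    simp only [Finset.mem_filter, Finset.mem_powerset]
    rintro ⟨hsub, -⟩
    exact hMI (hsub (Finset.mem_insert_self M I))
  rw [Finset.card_insert_of_notMem hAnotin]
  have hfe : I.powerset.filter (fun B => B.Nonempty) = I.powerset.erase ∅ := by
    ext B
    simp [Finset.nonempty_iff_ne_empty, and_comm]
  rw [hfe, Finset.card_erase_of_mem (Finset.empty_mem_powerset I), Finset.card_powerset, hIcard]
  have hp : 0 < 2 ^ (n - 1) := Nat.pow_pos (by omega)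
  omega

/-- For `n ≥ 4`, every set of `n` positive integers has at most `2 ^ (n - 1)` divisors, and this
bound is attained, so the maximum number of divisors equals `2 ^ (n - 1)`. -/
theorem stmt_9 (n : ℕ) (hn : 4 ≤ n) :
    (∀ A : Finset ℕ, A.card = n → (∀ a ∈ A, 0 < a) →
      (A.powerset.filter (fun B => B.Nonempty ∧ B.sum id ∣ A.sum id)).card ≤ 2 ^ (n - 1)) ∧
    (∃ A : Finset ℕ, A.card = n ∧ (∀ a ∈ A, 0 < a) ∧
      (A.powerset.filter (fun B => B.Nonempty ∧ B.sum id ∣ A.sum id)).card = 2 ^ (n - 1)) := by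
  exact ⟨fun A hcard hpos => upper hn hcard hpos, construction hn⟩
end

section
/- Every set of 3 positive integers has at most 5 divisors, and a set A of 3 positive integers has exactly 5 divisors if and only if A = {a, 2a, 3a} for some positive integer a. -/
theorem subset_triple' (x y z : ℕ) (B : Finset ℕ) (h : B ⊆ {x,y,z}) :
    B = ∅ ∨ B = {x} ∨ B = {y} ∨ B = {z} ∨ B = {x,y} ∨ B = {x,z} ∨ B = {y,z} ∨ B = {x,y,z} := by
  have hB : B ∈ ({x,y,z} : Finset ℕ).powerset := Finset.mem_powerset.mpr h
  simp only [Finset.powerset_insert, Finset.mem_union, Finset.mem_image, Finset.mem_powerset,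
    Finset.subset_singleton_iff, Finset.powerset_empty, Finset.mem_singleton] at hB
  aesop

theorem cardT' (x y z : ℕ) (h1 : x < y) (h2 : y < z) :
    ({({x}:Finset ℕ),{y},{z},{x,y},{x,y,z}} : Finset (Finset ℕ)).card = 5 := by
  have ne : ∀ S T : Finset ℕ, (∃ a, (a ∈ S ↔ a ∉ T)) → S ≠ T := by
    rintro S T ⟨a, ha⟩ h; rw [Finset.ext_iff] at h; have := h a; tauto
  rw [Finset.card_insert_of_notMem ?h1, Finset.card_insert_of_notMem ?h2,
    Finset.card_insert_of_notMem ?h3, Finset.card_insert_of_notMem ?h4, Finset.card_singleton]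
  case h4 =>
    simp only [Finset.mem_singleton]
    exact ne _ _ ⟨z, by simp; omega⟩
  case h3 =>
    simp only [Finset.mem_insert, Finset.mem_singleton]
    push_neg
    exact ⟨ne _ _ ⟨x, by simp; omega⟩, ne _ _ ⟨x, by simp; omega⟩⟩
  case h2 =>
    simp only [Finset.mem_insert, Finset.mem_singleton]
    push_neg
    exact ⟨ne _ _ ⟨z, by simp; omega⟩, ne _ _ ⟨x, by simp; omega⟩, ne _ _ ⟨z, by simp; omega⟩⟩
  case h1 =>
    simp only [Finset.mem_insert, Finset.mem_singleton]
    push_neg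
    exact ⟨ne _ _ ⟨x, by simp; omega⟩, ne _ _ ⟨x, by simp; omega⟩, ne _ _ ⟨y, by simp; omega⟩,
      ne _ _ ⟨y, by simp; omega⟩⟩

theorem filt_sub' (x y z : ℕ) (hx : 0 < x) (h1 : x < y) (h2 : y < z) :
    (({x,y,z}:Finset ℕ).powerset.filter
        (fun B => B.Nonempty ∧ B.sum id ∣ ({x,y,z}:Finset ℕ).sum id))
      ⊆ {{x},{y},{z},{x,y},{x,y,z}} := by
  have hxy : x ≠ y := h1.ne
  have hxz : x ≠ z := by omega
  have hyz : y ≠ z := h2.ne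
  have hsum : ({x,y,z}:Finset ℕ).sum id = x + y + z := by simp [hxy,hxz,hyz]; ring
  intro B hB
  rw [Finset.mem_filter, Finset.mem_powerset] at hB
  obtain ⟨hsub, hne, hdvd⟩ := hB
  rw [hsum] at hdvd
  rcases subset_triple' x y z B hsub with rfl|rfl|rfl|rfl|rfl|rfl|rfl|rfl
  · simp at hne
  · simp
  · simp
  · simp
  · simp
  · exfalso
    rw [show ({x,z}:Finset ℕ).sum id = x + z by simp [hxz]] at hdvd
    rw [show x+y+z = y+(x+z) by ring] at hdvd
    have := Nat.le_of_dvd (by omega) (Nat.dvd_add_self_right.mp hdvd)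
    omega
  · exfalso
    rw [show ({y,z}:Finset ℕ).sum id = y + z by simp [hyz]] at hdvd
    rw [show x+y+z = x+(y+z) by ring] at hdvd
    have := Nat.le_of_dvd (by omega) (Nat.dvd_add_self_right.mp hdvd)
    omega
  · simp

theorem sorted3 (A : Finset ℕ) (h : A.card = 3) : ∃ x y z, x < y ∧ y < z ∧ A = {x,y,z} := by
  obtain ⟨a,b,c,hab,hac,hbc,rfl⟩ := Finset.card_eq_three.mp h
  rcases hab.lt_or_gt with h1|h1 <;> rcases hac.lt_or_gt with h2|h2 <;>
    rcases hbc.lt_or_gt with h3|h3 <;>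
  first
    | exact ⟨a,b,c, by omega, by omega, by ext t; simp; try tauto⟩
    | exact ⟨a,c,b, by omega, by omega, by ext t; simp; try tauto⟩
    | exact ⟨c,a,b, by omega, by omega, by ext t; simp; try tauto⟩
    | exact ⟨b,a,c, by omega, by omega, by ext t; simp; try tauto⟩
    | exact ⟨b,c,a, by omega, by omega, by ext t; simp; try tauto⟩
    | exact ⟨c,b,a, by omega, by omega, by ext t; simp; try tauto⟩
    | (exfalso; omega)

theorem key3 (x y z : ℕ) (hx : 0 < x) (h1 : x < y) (h2 : y < z) (hy : y = 2*x) (hz : z = 3*x) :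
    (({x,y,z}:Finset ℕ).powerset.filter
        (fun B => B.Nonempty ∧ B.sum id ∣ ({x,y,z}:Finset ℕ).sum id))
      = {{x},{y},{z},{x,y},{x,y,z}} := by
  have hxy : x ≠ y := h1.ne
  have hxz : x ≠ z := by omega
  have hyz : y ≠ z := h2.ne
  have hsum : ({x,y,z}:Finset ℕ).sum id = x + y + z := by simp [hxy,hxz,hyz]; ring
  apply Finset.Subset.antisymm (filt_sub' x y z hx h1 h2)
  intro B hB
  simp only [Finset.mem_insert, Finset.mem_singleton] at hB
  rw [Finset.mem_filter, Finset.mem_powerset, hsum]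
  rcases hB with rfl|rfl|rfl|rfl|rfl
  · exact ⟨by intro t ht; simp at ht ⊢; tauto, Finset.singleton_nonempty x,
      by simp only [Finset.sum_singleton, id_eq]; exact ⟨6, by omega⟩⟩
  · exact ⟨by intro t ht; simp at ht ⊢; tauto, Finset.singleton_nonempty y,
      by simp only [Finset.sum_singleton, id_eq]; exact ⟨3, by omega⟩⟩
  · exact ⟨by intro t ht; simp at ht ⊢; tauto, Finset.singleton_nonempty z,
      by simp only [Finset.sum_singleton, id_eq]; exact ⟨2, by omega⟩⟩
  · refine ⟨by intro t ht; simp at ht ⊢; tauto, Finset.insert_nonempty _ _, ?_⟩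
    rw [show ({x,y}:Finset ℕ).sum id = x + y by simp [hxy]]
    exact ⟨2, by omega⟩
  · exact ⟨le_refl _, Finset.insert_nonempty _ _, by rw [hsum]⟩

/-- Every set of 3 positive integers has at most 5 divisors, with equality exactly for the sets
`{a, 2a, 3a}`. -/
theorem stmt_10 :
    (∀ A : Finset ℕ, A.card = 3 → (∀ a ∈ A, 0 < a) →
      (A.powerset.filter (fun B => B.Nonempty ∧ B.sum id ∣ A.sum id)).card ≤ 5) ∧
    (∀ A : Finset ℕ, A.card = 3 → (∀ a ∈ A, 0 < a) →
      ((A.powerset.filter (fun B => B.Nonempty ∧ B.sum id ∣ A.sum id)).card = 5 ↔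
        ∃ a : ℕ, 0 < a ∧ A = {a, 2 * a, 3 * a})) := by
  constructor
  · intro A hcard hpos
    obtain ⟨x,y,z,h1,h2,rfl⟩ := sorted3 A hcard
    have hx : 0 < x := hpos x (by simp)
    calc (({x,y,z}:Finset ℕ).powerset.filter _).card
        ≤ ({({x}:Finset ℕ),{y},{z},{x,y},{x,y,z}} : Finset (Finset ℕ)).card :=
          Finset.card_le_card (filt_sub' x y z hx h1 h2)
      _ = 5 := cardT' x y z h1 h2
  · intro A hcard hpos
    obtain ⟨x,y,z,h1,h2,rfl⟩ := sorted3 A hcard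
    have hx : 0 < x := hpos x (by simp)
    have hxy : x ≠ y := h1.ne
    have hxz : x ≠ z := by omega
    have hyz : y ≠ z := h2.ne
    have hsum : ({x,y,z}:Finset ℕ).sum id = x + y + z := by simp [hxy,hxz,hyz]; ring
    constructor
    · intro hc
      have hST := Finset.eq_of_subset_of_card_le (filt_sub' x y z hx h1 h2)
        (by rw [cardT' x y z h1 h2, hc])
      -- {z} ∈ filter
      have hzmem : ({z}:Finset ℕ) ∈ (({x,y,z}:Finset ℕ).powerset.filter
          (fun B => B.Nonempty ∧ B.sum id ∣ ({x,y,z}:Finset ℕ).sum id)) := by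
        rw [hST]; simp
      rw [Finset.mem_filter, hsum] at hzmem
      have hzdvd : z ∣ x + y := by
        have h' := hzmem.2.2
        simp only [Finset.sum_singleton, id] at h'
        rw [show x+y+z = (x+y)+z by ring] at h'
        exact Nat.dvd_add_self_right.mp h'
      have hzeq : x + y = z := Nat.eq_of_dvd_of_lt_two_mul (by omega) hzdvd (by omega)
      have hymem : ({y}:Finset ℕ) ∈ (({x,y,z}:Finset ℕ).powerset.filter
          (fun B => B.Nonempty ∧ B.sum id ∣ ({x,y,z}:Finset ℕ).sum id)) := by
        rw [hST]; simp
      rw [Finset.mem_filter, hsum] at hymem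
      have hydvd : y ∣ 2*x := by
        have h' := hymem.2.2
        simp only [Finset.sum_singleton, id] at h'
        rw [show x+y+z = 2*x + 2*y by omega] at h'
        exact (Nat.dvd_add_right (⟨2, by ring⟩ : y ∣ 2*y)).mp (by rwa [Nat.add_comm] at h')
      have hyeq : 2*x = y := Nat.eq_of_dvd_of_lt_two_mul (by omega) hydvd (by omega)
      exact ⟨x, hx, by rw [show 2*x = y from hyeq, show 3*x = z by omega]⟩
    · rintro ⟨a, ha, hA⟩
      have hx' : x ∈ ({a,2*a,3*a}:Finset ℕ) := hA ▸ (by simp)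
      have hy' : y ∈ ({a,2*a,3*a}:Finset ℕ) := hA ▸ (by simp)
      have hz' : z ∈ ({a,2*a,3*a}:Finset ℕ) := hA ▸ (by simp)
      simp only [Finset.mem_insert, Finset.mem_singleton] at hx' hy' hz'
      have hxa : x = a ∧ y = 2*a ∧ z = 3*a := by omega
      rw [key3 x y z hx h1 h2 (by omega) (by omega)]
      exact cardT' x y z h1 h2
end

section
/- For every n ≥ 3 and every set A of 2n positive integers, the number of n-element divisors of A is at most (1/2)·binomial(2n, n). Consequently, for n ≥ 3 the maximum number of n-element divisors over all sets of 2n positive integers equals (1/2)·binomial(2n, n). -/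
open Finset

noncomputable def nx (A B : Finset ℕ) : ℕ := sInf {a : ℕ | a ∈ A \ B}
noncomputable def ny (A B : Finset ℕ) : ℕ := sSup {a : ℕ | a ∈ B ∧ a < nx A B}
noncomputable def phi (A B : Finset ℕ) : Finset ℕ :=
  insert (ny A B) ((A \ B).erase (nx A B))

lemma phi_spec {n : ℕ} {A B : Finset ℕ} (hn : 3 ≤ n) (hA : A.card = 2 * n)
    (hpos : ∀ a ∈ A, 0 < a) (hBA : B ⊆ A) (hBn : B.card = n)
    (hbal : 2 * B.sum id = A.sum id) (hm : sInf {a : ℕ | a ∈ A} ∈ B) :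
    phi A B ⊆ A ∧ (phi A B).card = n ∧
    2 * (phi A B).sum id < A.sum id ∧
    ¬ (phi A B).sum id ∣ A.sum id ∧
    ¬ (A \ phi A B).sum id ∣ A.sum id ∧
    A \ B = insert (nx A B) ((phi A B).erase (ny A B)) ∧
    ny A B = sInf {a : ℕ | a ∈ phi A B} ∧
    nx A B = sInf {a : ℕ | a ∈ A ∧ ny A B < a ∧ a ∉ phi A B} := by
  set x := nx A B with hxdef
  set y := ny A B with hydef
  set C := phi A B with hCdef
  -- basic cardinalities
  have hcsd : (A \ B).card = n := by
    rw [card_sdiff_of_subset hBA, hA, hBn]; omega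
  have hsdne : {a : ℕ | a ∈ A \ B}.Nonempty := by
    have : (A \ B).Nonempty := card_pos.mp (by omega)
    exact ⟨this.choose, this.choose_spec⟩
  have hx : x ∈ A \ B := Nat.sInf_mem hsdne
  have hxA : x ∈ A := (mem_sdiff.mp hx).1
  have hxB : x ∉ B := (mem_sdiff.mp hx).2
  have hxle : ∀ a ∈ A \ B, x ≤ a := fun a ha => Nat.sInf_le ha
  -- the minimum m of A
  have hAne : A.Nonempty := card_pos.mp (by omega)
  have hmA : sInf {a : ℕ | a ∈ A} ∈ A :=
    Nat.sInf_mem ⟨hAne.choose, hAne.choose_spec⟩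
  have hmle : ∀ a ∈ A, sInf {a : ℕ | a ∈ A} ≤ a := fun a ha => Nat.sInf_le ha
  have hmx : sInf {a : ℕ | a ∈ A} < x := by
    rcases lt_or_eq_of_le (hmle x hxA) with h | h
    · exact h
    · exact absurd (h ▸ hm) hxB
  -- y : the largest element of B below x
  have hYbdd : BddAbove {a : ℕ | a ∈ B ∧ a < x} :=
    (B.finite_toSet.subset (fun a ha => ha.1)).bddAbove
  have hYne : ({a : ℕ | a ∈ B ∧ a < x}).Nonempty := ⟨_, hm, hmx⟩
  have hy : y ∈ B ∧ y < x := Nat.sSup_mem hYne hYbdd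
  have hyB : y ∈ B := hy.1
  have hyx : y < x := hy.2
  have hyub : ∀ a ∈ B, a < x → a ≤ y := fun a h1 h2 => le_csSup hYbdd ⟨h1, h2⟩
  have hypos : 0 < y := hpos y (hBA hyB)
  have hynotin : y ∉ (A \ B).erase x := fun h =>
    (mem_sdiff.mp (mem_of_mem_erase h)).2 hyB
  have hxC : x ∉ C := by
    intro h
    rcases mem_insert.mp h with h | h
    · omega
    · exact (notMem_erase x _) h
  -- subset and card
  have hCA : C ⊆ A := by
    intro a ha
    rcases mem_insert.mp ha with h | h
    · exact h ▸ hBA hyB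
    · exact (mem_sdiff.mp (mem_of_mem_erase h)).1
  have hCcard : C.card = n := by
    rw [hCdef, phi, card_insert_of_notMem hynotin, card_erase_of_mem hx, hcsd]
    omega
  -- sums
  have hsum1 : C.sum id + x = (A \ B).sum id + y := by
    have e1 : C.sum id = y + ((A \ B).erase x).sum id := by
      rw [hCdef, phi, sum_insert hynotin]; rfl
    have e2 : ((A \ B).erase x).sum id + x = (A \ B).sum id := by
      have := Finset.sum_erase_add (A \ B) id hx
      simpa using this
    omega
  have hcompl : (A \ B).sum id + B.sum id = A.sum id := Finset.sum_sdiff hBA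
  have ht2 : 2 * (A \ B).sum id = A.sum id := by omega
  -- lower bound on t := (A\B).sum id
  have herase_ge : 2 * (x + 1) ≤ ((A \ B).erase x).sum id := by
    have h1 : ((A \ B).erase x).card • (x + 1) ≤ ((A \ B).erase x).sum id := by
      apply Finset.card_nsmul_le_sum
      intro a ha
      have h2 := hxle a (mem_of_mem_erase ha)
      have h3 : a ≠ x := ne_of_mem_erase ha
      simp only [id_eq]
      omega
    have h4 : ((A \ B).erase x).card = n - 1 := by
      rw [card_erase_of_mem hx, hcsd]
    rw [h4, smul_eq_mul] at h1
    calc 2 * (x + 1) ≤ (n - 1) * (x + 1) := Nat.mul_le_mul_right _ (by omega)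
      _ ≤ _ := h1
  have ht_ge : 3 * x + 2 ≤ (A \ B).sum id := by
    have e2 : ((A \ B).erase x).sum id + x = (A \ B).sum id := by
      have := Finset.sum_erase_add (A \ B) id hx
      simpa using this
    omega
  have hCsum : (A \ C).sum id + C.sum id = A.sum id := Finset.sum_sdiff hCA
  -- positivity of S
  have hSpos : 0 < A.sum id := by
    have : 0 < B.sum id := by
      apply Finset.sum_pos (fun i hi => hpos i (hBA hi))
      exact card_pos.mp (by omega)
    omega
  refine ⟨hCA, hCcard, by omega, ?_, ?_, ?_, ?_, ?_⟩
  · -- ¬ C.sum ∣ S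
    rintro ⟨k, hk⟩
    have hk3 : 3 ≤ k ∨ k < 3 := by omega
    rcases hk3 with hk3 | hk3
    · have : C.sum id * 3 ≤ C.sum id * k := Nat.mul_le_mul_left _ hk3
      omega
    · interval_cases k <;> omega
  · -- ¬ (A \ C).sum ∣ S
    rintro ⟨k, hk⟩
    have hk2 : 2 ≤ k ∨ k < 2 := by omega
    rcases hk2 with hk2 | hk2
    · have : (A \ C).sum id * 2 ≤ (A \ C).sum id * k := Nat.mul_le_mul_left _ hk2
      omega
    · interval_cases k <;> omega
  · -- recovery of A \ B
    have h1 : C.erase y = (A \ B).erase x := by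
      rw [hCdef, phi, erase_insert hynotin]
    rw [h1, insert_erase hx]
  · -- y = sInf C
    have hne : ({a : ℕ | a ∈ C}).Nonempty := ⟨y, mem_insert_self _ _⟩
    have h1 : sInf {a : ℕ | a ∈ C} ≤ y := Nat.sInf_le (mem_insert_self _ _)
    have h2 : y ≤ sInf {a : ℕ | a ∈ C} := by
      have hmem : sInf {a : ℕ | a ∈ C} ∈ C := Nat.sInf_mem hne
      rcases mem_insert.mp hmem with h | h
      · omega
      · have := hxle _ (mem_of_mem_erase h)
        omega
    omega
  · -- x = sInf {a ∈ A | y < a ∧ a ∉ C}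
    have hxmem : x ∈ {a : ℕ | a ∈ A ∧ y < a ∧ a ∉ C} := ⟨hxA, hyx, hxC⟩
    have h1 : sInf {a : ℕ | a ∈ A ∧ y < a ∧ a ∉ C} ≤ x := Nat.sInf_le hxmem
    have h2 : x ≤ sInf {a : ℕ | a ∈ A ∧ y < a ∧ a ∉ C} := by
      have hmem := Nat.sInf_mem (⟨x, hxmem⟩ : ({a : ℕ | a ∈ A ∧ y < a ∧ a ∉ C}).Nonempty)
      obtain ⟨haA, hya, haC⟩ := hmem
      by_contra hcon
      push_neg at hcon
      set a := sInf {a : ℕ | a ∈ A ∧ y < a ∧ a ∉ C} with hadef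
      by_cases haB : a ∈ B
      · have := hyub a haB hcon; omega
      · have : a ∈ A \ B := mem_sdiff.mpr ⟨haA, haB⟩
        have h3 := hxle a this
        have : a ∈ (A \ B).erase x := mem_erase.mpr ⟨by omega, this⟩
        exact haC (mem_insert_of_mem this)
    omega

lemma phi_inj {n : ℕ} {A B1 B2 : Finset ℕ} (hn : 3 ≤ n) (hA : A.card = 2 * n)
    (hpos : ∀ a ∈ A, 0 < a)
    (h1A : B1 ⊆ A) (h1n : B1.card = n) (h1b : 2 * B1.sum id = A.sum id)
    (h1m : sInf {a : ℕ | a ∈ A} ∈ B1)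
    (h2A : B2 ⊆ A) (h2n : B2.card = n) (h2b : 2 * B2.sum id = A.sum id)
    (h2m : sInf {a : ℕ | a ∈ A} ∈ B2)
    (heq : phi A B1 = phi A B2) : B1 = B2 := by
  obtain ⟨-, -, -, -, -, hr1, hy1, hx1⟩ := phi_spec hn hA hpos h1A h1n h1b h1m
  obtain ⟨-, -, -, -, -, hr2, hy2, hx2⟩ := phi_spec hn hA hpos h2A h2n h2b h2m
  have hy : ny A B1 = ny A B2 := by rw [hy1, hy2, heq]
  have hx : nx A B1 = nx A B2 := by rw [hx1, hx2, heq, hy]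
  have hsd : A \ B1 = A \ B2 := by rw [hr1, hr2, heq, hy, hx]
  have e1 : A \ (A \ B1) = B1 := by
    rw [sdiff_sdiff_right_self, inf_eq_inter, inter_eq_right.mpr h1A]
  have e2 : A \ (A \ B2) = B2 := by
    rw [sdiff_sdiff_right_self, inf_eq_inter, inter_eq_right.mpr h2A]
  rw [← e1, ← e2, hsd]

lemma bal_le_N {n : ℕ} {A : Finset ℕ} (hn : 3 ≤ n) (hA : A.card = 2 * n)
    (hpos : ∀ a ∈ A, 0 < a) :
    ((A.powersetCard n).filter (fun B => 2 * B.sum id = A.sum id)).card ≤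
      ((A.powersetCard n).filter
        (fun B => ¬ B.sum id ∣ A.sum id ∧ ¬ (A \ B).sum id ∣ A.sum id)).card := by
  classical
  set S := A.sum id with hS
  set U := A.powersetCard n with hU
  set Bal := U.filter (fun B => 2 * B.sum id = S) with hBal
  set N := U.filter (fun B => ¬ B.sum id ∣ S ∧ ¬ (A \ B).sum id ∣ S) with hN
  set m := sInf {a : ℕ | a ∈ A} with hm
  -- complement basics
  have hcompl : ∀ B ∈ U, (A \ B).sum id + B.sum id = S ∧ (A \ B) ∈ U := by
    intro B hB
    rw [hU, mem_powersetCard] at hB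
    refine ⟨Finset.sum_sdiff hB.1, ?_⟩
    rw [hU, mem_powersetCard]
    refine ⟨sdiff_subset, ?_⟩
    rw [card_sdiff_of_subset hB.1, hA, hB.2]; omega
  have hcc : ∀ B ∈ U, A \ (A \ B) = B := by
    intro B hB
    rw [hU, mem_powersetCard] at hB
    rw [sdiff_sdiff_right_self, inf_eq_inter, inter_eq_right.mpr hB.1]
  set Balm := Bal.filter (fun B => m ∈ B) with hBalm
  set Balnm := Bal.filter (fun B => m ∉ B) with hBalnm
  set Nlow := N.filter (fun C => 2 * C.sum id < S) with hNlow
  set Nhigh := N.filter (fun C => S < 2 * C.sum id) with hNhigh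
  have hmA : A.Nonempty := card_pos.mp (by omega)
  have hmmem : m ∈ A := Nat.sInf_mem ⟨hmA.choose, hmA.choose_spec⟩
  -- Bal = Balm + Balnm
  have hsplit : Balm.card + Balnm.card = Bal.card :=
    card_filter_add_card_filter_not _
  -- Balnm ≃ Balm via complement
  have hbij : Balnm.card = Balm.card := by
    apply Finset.card_nbij' (fun B => A \ B) (fun B => A \ B)
    · intro B hB
      rw [Finset.mem_coe, hBalnm, mem_filter, hBal, mem_filter] at hB
      obtain ⟨⟨hBU, hBs⟩, hBm⟩ := hB
      obtain ⟨hsum, hmem⟩ := hcompl B hBU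
      simp only [Finset.mem_coe]; rw [hBalm, mem_filter, hBal, mem_filter]
      exact ⟨⟨hmem, by omega⟩, by
        rw [hU, mem_powersetCard] at hBU
        exact mem_sdiff.mpr ⟨hmmem, hBm⟩⟩
    · intro B hB
      rw [Finset.mem_coe, hBalm, mem_filter, hBal, mem_filter] at hB
      obtain ⟨⟨hBU, hBs⟩, hBm⟩ := hB
      obtain ⟨hsum, hmem⟩ := hcompl B hBU
      simp only [Finset.mem_coe]; rw [hBalnm, mem_filter, hBal, mem_filter]
      refine ⟨⟨hmem, by omega⟩, fun hc => (mem_sdiff.mp hc).2 hBm⟩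
    · intro B hB
      rw [Finset.mem_coe, hBalnm, mem_filter, hBal, mem_filter] at hB
      exact hcc B hB.1.1
    · intro B hB
      rw [Finset.mem_coe, hBalm, mem_filter, hBal, mem_filter] at hB
      exact hcc B hB.1.1
  -- φ : Balm ↪ Nlow
  have hphimap : Balm.card ≤ Nlow.card := by
    apply Finset.card_le_card_of_injOn (fun B => phi A B)
    · intro B hB
      rw [Finset.mem_coe, hBalm, mem_filter, hBal, mem_filter, hU, mem_powersetCard] at hB
      obtain ⟨⟨⟨hBA, hBn⟩, hBs⟩, hBm⟩ := hB
      obtain ⟨hCA, hCn, hClt, hCnd, hCcnd, -, -, -⟩ :=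
        phi_spec hn hA hpos hBA hBn hBs hBm
      rw [Finset.mem_coe, hNlow, mem_filter, hN, mem_filter, hU, mem_powersetCard]
      exact ⟨⟨⟨hCA, hCn⟩, hCnd, hCcnd⟩, hClt⟩
    · intro B1 hB1 B2 hB2 heq
      replace hB1 := Finset.mem_coe.mp hB1
      replace hB2 := Finset.mem_coe.mp hB2
      rw [hBalm, mem_filter, hBal, mem_filter, hU, mem_powersetCard] at hB1 hB2
      exact phi_inj hn hA hpos hB1.1.1.1 hB1.1.1.2 hB1.1.2 hB1.2
        hB2.1.1.1 hB2.1.1.2 hB2.1.2 hB2.2 heq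
  -- Nlow ↪ Nhigh via complement
  have hlowhigh : Nlow.card ≤ Nhigh.card := by
    apply Finset.card_le_card_of_injOn (fun B => A \ B)
    · intro B hB
      rw [Finset.mem_coe, hNlow, mem_filter, hN, mem_filter] at hB
      obtain ⟨⟨hBU, hd1, hd2⟩, hlt⟩ := hB
      obtain ⟨hsum, hmem⟩ := hcompl B hBU
      simp only [Finset.mem_coe]; rw [hNhigh, mem_filter, hN, mem_filter]
      have hccB := hcc B hBU
      exact ⟨⟨hmem, hd2, by rw [hccB]; exact hd1⟩, by omega⟩
    · intro B1 hB1 B2 hB2 heq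
      replace hB1 := Finset.mem_coe.mp hB1
      replace hB2 := Finset.mem_coe.mp hB2
      rw [hNlow, mem_filter, hN, mem_filter] at hB1 hB2
      have e1 := hcc B1 hB1.1.1
      have e2 := hcc B2 hB2.1.1
      rw [← e1, ← e2]
      exact congrArg (fun t => A \ t) heq
  -- Nlow and Nhigh disjoint subsets of N
  have hNN : Nlow.card + Nhigh.card ≤ N.card := by
    have h1 : Nlow.card + (N.filter (fun C => ¬ 2 * C.sum id < S)).card = N.card :=
      card_filter_add_card_filter_not _
    have h2 : Nhigh ⊆ N.filter (fun C => ¬ 2 * C.sum id < S) := by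
      intro C hC
      rw [hNhigh, mem_filter] at hC
      rw [mem_filter]
      exact ⟨hC.1, by omega⟩
    have := card_le_card h2
    omega
  omega

lemma part1 {n : ℕ} (hn : 3 ≤ n) (A : Finset ℕ) (hA : A.card = 2 * n)
    (hpos : ∀ a ∈ A, 0 < a) :
    2 * (A.powerset.filter (fun B => B.card = n ∧ B.sum id ∣ A.sum id)).card
      ≤ (2 * n).choose n := by
  classical
  set S := A.sum id with hS
  set U := A.powersetCard n with hU
  -- rewrite the statement's set as a filter of U
  have hset : A.powerset.filter (fun B => B.card = n ∧ B.sum id ∣ S)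
      = U.filter (fun B => B.sum id ∣ S) := by
    ext B
    rw [mem_filter, mem_filter, hU, mem_powersetCard, mem_powerset]
    tauto
  set D := U.filter (fun B => B.sum id ∣ S) with hD
  set D2 := U.filter (fun B => B.sum id ∣ S ∧ ¬ (A \ B).sum id ∣ S) with hD2
  set M := U.filter (fun B => ¬ B.sum id ∣ S ∧ (A \ B).sum id ∣ S) with hM
  set N := U.filter (fun B => ¬ B.sum id ∣ S ∧ ¬ (A \ B).sum id ∣ S) with hN
  set Bal := U.filter (fun B => 2 * B.sum id = S) with hBal
  have hcompl : ∀ B ∈ U, (A \ B).sum id + B.sum id = S ∧ (A \ B) ∈ U := by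
    intro B hB
    rw [hU, mem_powersetCard] at hB
    refine ⟨Finset.sum_sdiff hB.1, ?_⟩
    rw [hU, mem_powersetCard]
    refine ⟨sdiff_subset, ?_⟩
    rw [card_sdiff_of_subset hB.1, hA, hB.2]; omega
  have hcc : ∀ B ∈ U, A \ (A \ B) = B := by
    intro B hB
    rw [hU, mem_powersetCard] at hB
    rw [sdiff_sdiff_right_self, inf_eq_inter, inter_eq_right.mpr hB.1]
  have hSpos : 0 < S := by
    rw [hS]
    apply Finset.sum_pos (fun i hi => hpos i hi)
    exact card_pos.mp (by omega)
  have hBne : ∀ B ∈ U, 0 < B.sum id := by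
    intro B hB
    rw [hU, mem_powersetCard] at hB
    apply Finset.sum_pos (fun i hi => hpos i (hB.1 hi))
    exact card_pos.mp (by omega)
  -- U splits as D + M + N
  have hUsplit : D.card + (M.card + N.card) = U.card := by
    have h1 : D.card + (U.filter (fun B => ¬ B.sum id ∣ S)).card = U.card :=
      card_filter_add_card_filter_not _
    have h2 : ((U.filter (fun B => ¬ B.sum id ∣ S)).filter
        (fun B => (A \ B).sum id ∣ S)).card +
        ((U.filter (fun B => ¬ B.sum id ∣ S)).filter
        (fun B => ¬ (A \ B).sum id ∣ S)).card
        = (U.filter (fun B => ¬ B.sum id ∣ S)).card :=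
      card_filter_add_card_filter_not _
    rw [filter_filter, filter_filter] at h2
    rw [hM, hN]
    omega
  -- D splits as D2 + Bal
  have hDsplit : D2.card + Bal.card = D.card := by
    have h1 : (D.filter (fun B => ¬ (A \ B).sum id ∣ S)).card +
        (D.filter (fun B => ¬ ¬ (A \ B).sum id ∣ S)).card = D.card :=
      card_filter_add_card_filter_not _
    have e1 : D.filter (fun B => ¬ (A \ B).sum id ∣ S) = D2 := by
      rw [hD, hD2, filter_filter]
    have e2 : D.filter (fun B => ¬ ¬ (A \ B).sum id ∣ S) = Bal := by
      rw [hD, hBal, filter_filter]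
      apply filter_congr
      intro B hB
      simp only [not_not]
      constructor
      · rintro ⟨hd1, hd2⟩
        obtain ⟨hsum, -⟩ := hcompl B hB
        obtain ⟨k1, hk1⟩ := hd1
        obtain ⟨k2, hk2⟩ := hd2
        have hp1 : 0 < B.sum id := hBne B hB
        have hp2 : 0 < (A \ B).sum id := by
          have := hcompl B hB
          exact hBne _ this.2
        -- each of the two divisors is ≤ half or equal to S
        have c1 : 2 * B.sum id ≤ S ∨ B.sum id = S := by
          rcases Nat.lt_or_ge k1 2 with h | h
          · interval_cases k1 <;> omega
          · left
            have : B.sum id * 2 ≤ B.sum id * k1 := Nat.mul_le_mul_left _ h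
            omega
        have c2 : 2 * (A \ B).sum id ≤ S ∨ (A \ B).sum id = S := by
          rcases Nat.lt_or_ge k2 2 with h | h
          · interval_cases k2 <;> omega
          · left
            have : (A \ B).sum id * 2 ≤ (A \ B).sum id * k2 := Nat.mul_le_mul_left _ h
            omega
        omega
      · intro hb
        obtain ⟨hsum, -⟩ := hcompl B hB
        constructor
        · exact ⟨2, by omega⟩
        · exact ⟨2, by omega⟩
    rw [e1, e2] at h1
    omega
  -- M ≃ D2 via complement
  have hMD2 : M.card = D2.card := by
    apply Finset.card_nbij' (fun B => A \ B) (fun B => A \ B)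
    · intro B hB
      rw [Finset.mem_coe, hM, mem_filter] at hB
      obtain ⟨hBU, hd1, hd2⟩ := hB
      obtain ⟨-, hmem⟩ := hcompl B hBU
      rw [Finset.mem_coe, hD2, mem_filter]
      exact ⟨hmem, hd2, by rw [hcc B hBU]; exact hd1⟩
    · intro B hB
      rw [Finset.mem_coe, hD2, mem_filter] at hB
      obtain ⟨hBU, hd1, hd2⟩ := hB
      obtain ⟨-, hmem⟩ := hcompl B hBU
      rw [Finset.mem_coe, hM, mem_filter]
      exact ⟨hmem, hd2, by rw [hcc B hBU]; exact hd1⟩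
    · intro B hB
      rw [Finset.mem_coe, hM, mem_filter] at hB
      exact hcc B hB.1
    · intro B hB
      rw [Finset.mem_coe, hD2, mem_filter] at hB
      exact hcc B hB.1
  have hkey : Bal.card ≤ N.card := bal_le_N hn hA hpos
  have hUcard : U.card = (2 * n).choose n := by
    rw [hU, card_powersetCard, hA]
  rw [hset]
  omega

lemma choose_double {n : ℕ} (hn : 3 ≤ n) :
    2 * (2 * n - 1).choose n = (2 * n).choose n := by
  have h1 : 2 * n = (2 * n - 1) + 1 := by omega
  have h2 : n = (n - 1) + 1 := by omega
  have h3 : (2 * n).choose n = (2 * n - 1).choose (n - 1) + (2 * n - 1).choose n := by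
    calc (2 * n).choose n = ((2 * n - 1) + 1).choose ((n - 1) + 1) := by rw [← h1, ← h2]
      _ = (2 * n - 1).choose (n - 1) + (2 * n - 1).choose ((n - 1) + 1) :=
          Nat.choose_succ_succ' _ _
      _ = (2 * n - 1).choose (n - 1) + (2 * n - 1).choose n := by rw [← h2]
  have h4 : (2 * n - 1).choose (n - 1) = (2 * n - 1).choose n := by
    have h5 : (2 * n - 1) - n = n - 1 := by omega
    rw [← h5]
    exact Nat.choose_symm (by omega)
  omega

lemma part2 {n : ℕ} (hn : 3 ≤ n) :
    ∃ A : Finset ℕ, A.card = 2 * n ∧ (∀ a ∈ A, 0 < a) ∧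
      2 * (A.powerset.filter (fun B => B.card = n ∧ B.sum id ∣ A.sum id)).card
        = (2 * n).choose n := by
  classical
  set R := Finset.Icc 1 (2 * n - 1) with hR
  set T := R.sum id with hT
  set P := (R.powersetCard n).prod (fun B => B.sum id) with hP
  have hRcard : R.card = 2 * n - 1 := by rw [hR, Nat.card_Icc]; omega
  have hRpos : ∀ a ∈ R, 1 ≤ a := by
    intro a ha; rw [hR, mem_Icc] at ha; exact ha.1
  have hTge : 2 * n ≤ T := by
    have hsub : ({1, 2 * n - 1} : Finset ℕ) ⊆ R := by
      intro a ha
      rcases mem_insert.mp ha with h | h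
      · rw [h, hR, mem_Icc]; omega
      · rw [mem_singleton] at h; rw [h, hR, mem_Icc]; omega
    have hpair : ({1, 2 * n - 1} : Finset ℕ).sum id = 1 + (2 * n - 1) :=
      Finset.sum_pair (by omega)
    have h6 : ({1, 2 * n - 1} : Finset ℕ).sum id ≤ R.sum id :=
      Finset.sum_le_sum_of_subset hsub
    omega
  -- P is at least 3
  have hPmem : Finset.Icc 1 n ∈ R.powersetCard n := by
    rw [mem_powersetCard]
    constructor
    · intro a ha
      rw [mem_Icc] at ha; rw [hR, mem_Icc]; omega
    · rw [Nat.card_Icc]; omega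
  have hfacpos : ∀ B ∈ R.powersetCard n, 1 ≤ B.sum id := by
    intro B hB
    rw [mem_powersetCard] at hB
    have : B.card • 1 ≤ B.sum id :=
      Finset.card_nsmul_le_sum _ _ _ (fun a ha => hRpos a (hB.1 ha))
    rw [hB.2, smul_eq_mul] at this
    omega
  have hP3 : 3 ≤ P := by
    have h1 : (Finset.Icc 1 n).sum id ≤ P := Finset.single_le_prod' hfacpos hPmem
    have h2 : (Finset.Icc 1 n).card • 1 ≤ (Finset.Icc 1 n).sum id :=
      Finset.card_nsmul_le_sum _ _ _ (fun a ha => (mem_Icc.mp ha).1)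
    rw [Nat.card_Icc, smul_eq_mul] at h2
    omega
  obtain ⟨Q, hQ⟩ : ∃ Q, 2 * T * P = Q := ⟨_, rfl⟩
  have hQ6 : T * 6 ≤ Q := by
    rw [← hQ]
    calc T * 6 = 2 * T * 3 := by ring
      _ ≤ 2 * T * P := Nat.mul_le_mul_left _ hP3

  obtain ⟨f, hfT⟩ : ∃ f, f + T = Q := ⟨Q - T, by omega⟩
  have hfgtT : T < f := by omega
  have hfR : f ∉ R := by
    rw [hR, mem_Icc]; omega
  set A := insert f R with hA
  have hAcard : A.card = 2 * n := by
    rw [hA, card_insert_of_notMem hfR, hRcard]; omega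
  have hApos : ∀ a ∈ A, 0 < a := by
    intro a ha
    rcases mem_insert.mp ha with h | h
    · omega
    · exact hRpos a h
  have hAsum : A.sum id = f + T := by rw [hA, sum_insert hfR]; rfl
  have hSpos : 0 < A.sum id := by omega
  -- the divisor subsets of size n are exactly the n-subsets of R
  have hseteq : A.powerset.filter (fun B => B.card = n ∧ B.sum id ∣ A.sum id)
      = R.powersetCard n := by
    ext B
    rw [mem_filter, mem_powerset, mem_powersetCard]
    constructor
    · rintro ⟨hBA, hBn, hdvd⟩
      by_cases hfB : f ∈ B
      · exfalso
        have herase : B.erase f ⊆ R := by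
          intro a ha
          have h1 := mem_of_mem_erase ha
          have h2 := ne_of_mem_erase ha
          rcases mem_insert.mp (hBA h1) with h | h
          · omega
          · exact h
        have hesum : (B.erase f).sum id + f = B.sum id :=
          Finset.sum_erase_add _ _ hfB
        have hecard : (B.erase f).card = n - 1 := by
          rw [card_erase_of_mem hfB, hBn]
        have hr2 : 2 ≤ (B.erase f).sum id := by
          have : (B.erase f).card • 1 ≤ (B.erase f).sum id :=
            Finset.card_nsmul_le_sum _ _ _ (fun a ha => hRpos a (herase ha))
          rw [hecard, smul_eq_mul] at this
          omega
        have hrT : (B.erase f).sum id < T := by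
          have h1 : (R \ B.erase f).sum id + (B.erase f).sum id = T :=
            Finset.sum_sdiff herase
          have h2 : 0 < (R \ B.erase f).sum id := by
            apply Finset.sum_pos (fun i hi => hRpos i (mem_sdiff.mp hi).1)
            apply card_pos.mp
            rw [card_sdiff_of_subset herase, hRcard, hecard]
            omega
          omega
        obtain ⟨k, hk⟩ := hdvd
        rcases Nat.lt_or_ge k 2 with h | h
        · interval_cases k <;> omega
        · have : B.sum id * 2 ≤ B.sum id * k := Nat.mul_le_mul_left _ h
          omega
      · constructor
        · intro a ha
          rcases mem_insert.mp (hBA ha) with h | h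
          · exact absurd (h ▸ ha) hfB
          · exact h
        · exact hBn
    · rintro ⟨hBR, hBn⟩
      refine ⟨hBR.trans (subset_insert _ _), hBn, ?_⟩
      have h1 : B.sum id ∣ P :=
        Finset.dvd_prod_of_mem _ (mem_powersetCard.mpr ⟨hBR, hBn⟩)
      have h2 : P ∣ Q := by rw [← hQ]; exact dvd_mul_left P (2 * T)
      rw [hAsum, hfT]
      exact h1.trans h2
  refine ⟨A, hAcard, hApos, ?_⟩
  rw [hseteq, card_powersetCard, hRcard]
  exact choose_double hn




/-- For `n ≥ 3`, every set of `2n` positive integers has at most `(1/2) * (2n).choose n`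
divisors of size `n`, and this bound is attained. -/
theorem stmt_11 (n : ℕ) (hn : 3 ≤ n) :
    (∀ A : Finset ℕ, A.card = 2 * n → (∀ a ∈ A, 0 < a) →
      2 * (A.powerset.filter (fun B => B.card = n ∧ B.sum id ∣ A.sum id)).card
        ≤ (2 * n).choose n) ∧
    (∃ A : Finset ℕ, A.card = 2 * n ∧ (∀ a ∈ A, 0 < a) ∧
      2 * (A.powerset.filter (fun B => B.card = n ∧ B.sum id ∣ A.sum id)).card
        = (2 * n).choose n) := by
  exact ⟨fun A hA hpos => part1 hn A hA hpos, part2 hn⟩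
end

section
/- Let n ≥ 5 and let A be a set of n positive integers. Then A has exactly 2^(n-1) divisors if and only if A is an anti-pencil. -/
/-- `B` is a divisor of `A`: a nonempty subset of `A` whose sum divides the sum of `A`. -/
def IsDivisor (A B : Finset ℕ) : Prop :=
  B ⊆ A ∧ B.Nonempty ∧ B.sum id ∣ A.sum id

/-- `A` is an anti-pencil: its divisors are precisely the nonempty subsets of `A \ {max A}`
together with `A` itself. -/
def IsAntiPencil (A : Finset ℕ) : Prop :=
  ∃ M ∈ A, (∀ x ∈ A, x ≤ M) ∧
    ∀ B : Finset ℕ, IsDivisor A B ↔ ((B.Nonempty ∧ B ⊆ A.erase M) ∨ B = A)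

namespace AP14

/-- arithmetic helper: a proper divisor is at most half -/
lemma dvd_small {t S : ℕ} (h : t ∣ S) (hlt : t < S) : 2 * t ≤ S := by
  obtain ⟨c, rfl⟩ := h
  rcases c with _ | _ | c
  · omega
  · omega
  · nlinarith

/-- arithmetic helper: a number strictly between S/3 and S/2 does not divide S -/
lemma not_dvd_mid {t S : ℕ} (h2 : 2 * t < S) (h3 : S < 3 * t) : ¬ t ∣ S := by
  rintro ⟨c, rfl⟩
  rcases c with _ | _ | _ | c
  · omega
  · omega
  · omega
  · nlinarith

section Main

variable (A : Finset ℕ)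

def Df : Finset (Finset ℕ) := A.powerset.filter (fun B => B.Nonempty ∧ B.sum id ∣ A.sum id)
def Kf : Finset (Finset ℕ) := A.powerset.filter (fun B => 2 * B.sum id = A.sum id)
def Lf : Finset (Finset ℕ) := A.powerset.filter
    (fun B => 0 < 2 * B.sum id ∧ 2 * B.sum id < A.sum id ∧ ¬ (B.sum id ∣ A.sum id))
def Pl : Finset (Finset ℕ) := A.powerset.filter (fun B => 2 * B.sum id < A.sum id)
def Pg : Finset (Finset ℕ) := A.powerset.filter (fun B => A.sum id < 2 * B.sum id)
def Pn : Finset (Finset ℕ) := A.powerset.filter (fun B => ¬ 2 * B.sum id < A.sum id)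
def PlP : Finset (Finset ℕ) := (Pl A).filter (fun B => 0 < 2 * B.sum id)
def PlD : Finset (Finset ℕ) := (PlP A).filter (fun B => B.sum id ∣ A.sum id)
def Dl : Finset (Finset ℕ) := (Df A).filter (fun B => 2 * B.sum id < A.sum id)
def Dn : Finset (Finset ℕ) := (Df A).filter (fun B => ¬ 2 * B.sum id < A.sum id)

variable {A}

lemma mem_Kf {B : Finset ℕ} : B ∈ Kf A ↔ B ⊆ A ∧ 2 * B.sum id = A.sum id := by
  simp [Kf, Finset.mem_filter, Finset.mem_powerset]

lemma mem_Lf {B : Finset ℕ} : B ∈ Lf A ↔ B ⊆ A ∧ 0 < 2 * B.sum id ∧ 2 * B.sum id < A.sum id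
    ∧ ¬ (B.sum id ∣ A.sum id) := by
  simp [Lf, Finset.mem_filter, Finset.mem_powerset, and_assoc]

lemma mem_Df {B : Finset ℕ} : B ∈ Df A ↔ B ⊆ A ∧ B.Nonempty ∧ B.sum id ∣ A.sum id := by
  simp [Df, Finset.mem_filter, Finset.mem_powerset, and_assoc]

lemma sum_compl {B : Finset ℕ} (hB : B ⊆ A) : (A \ B).sum id + B.sum id = A.sum id :=
  Finset.sum_sdiff hB

lemma sum_pos' (hpos : ∀ a ∈ A, 0 < a) {B : Finset ℕ} (hB : B ⊆ A) (hne : B.Nonempty) :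
    0 < B.sum id :=
  Finset.sum_pos (fun i hi => hpos i (hB hi)) hne

lemma nonempty_of_sum_pos {B : Finset ℕ} (h : 0 < B.sum id) : B.Nonempty := by
  rcases B.eq_empty_or_nonempty with rfl | h'
  · simp at h
  · exact h'

lemma sum_lt_of_ne (hpos : ∀ a ∈ A, 0 < a) {B : Finset ℕ} (hB : B ⊆ A) (hne : B ≠ A) :
    B.sum id < A.sum id := by
  obtain ⟨a, haA, haB⟩ : ∃ a ∈ A, a ∉ B := by
    by_contra h
    push_neg at h
    exact hne (Finset.Subset.antisymm hB h)
  have hsub : B ⊆ A.erase a := fun x hx =>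
    Finset.mem_erase.2 ⟨fun he => haB (he ▸ hx), hB hx⟩
  have h1 : B.sum id ≤ (A.erase a).sum id := Finset.sum_le_sum_of_subset hsub
  have h2 : (A.erase a).sum id + id a = A.sum id := Finset.sum_erase_add A id haA
  have := hpos a haA
  have hid : id a = a := rfl
  omega

lemma l1 : (Pl A).card = (Pg A).card := by
  apply Finset.card_bij' (fun B _ => A \ B) (fun B _ => A \ B)
  · intro B hB
    obtain ⟨hB1, hB2⟩ := Finset.mem_filter.1 hB
    rw [Finset.mem_powerset] at hB1
    have := sum_compl hB1
    refine Finset.mem_filter.2 ⟨Finset.mem_powerset.2 Finset.sdiff_subset, by omega⟩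
  · intro B hB
    obtain ⟨hB1, hB2⟩ := Finset.mem_filter.1 hB
    rw [Finset.mem_powerset] at hB1
    have := sum_compl hB1
    refine Finset.mem_filter.2 ⟨Finset.mem_powerset.2 Finset.sdiff_subset, by omega⟩
  · intro B hB
    exact Finset.sdiff_sdiff_eq_self (Finset.mem_powerset.1 (Finset.mem_filter.1 hB).1)
  · intro B hB
    exact Finset.sdiff_sdiff_eq_self (Finset.mem_powerset.1 (Finset.mem_filter.1 hB).1)

lemma l2 : (Pl A).card + (Pn A).card = 2 ^ A.card := by
  rw [Pl, Pn, Finset.card_filter_add_card_filter_not, Finset.card_powerset]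

lemma l3 : (Kf A).card + (Pg A).card = (Pn A).card := by
  have h := Finset.card_filter_add_card_filter_not
    (s := Pn A) (p := fun B => 2 * B.sum id = A.sum id)
  have e1 : (Pn A).filter (fun B => 2 * B.sum id = A.sum id) = Kf A := by
    ext B
    simp only [Pn, Kf, Finset.mem_filter, Finset.mem_powerset]
    constructor
    · rintro ⟨⟨h1, _⟩, h2⟩; exact ⟨h1, h2⟩
    · rintro ⟨h1, h2⟩; exact ⟨⟨h1, by omega⟩, h2⟩
  have e2 : (Pn A).filter (fun B => ¬ 2 * B.sum id = A.sum id) = Pg A := by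
    ext B
    simp only [Pn, Pg, Finset.mem_filter, Finset.mem_powerset]
    constructor
    · rintro ⟨⟨h1, h2⟩, h3⟩; exact ⟨h1, by omega⟩
    · rintro ⟨h1, h2⟩; exact ⟨⟨h1, by omega⟩, by omega⟩
  rw [e1, e2] at h
  exact h

lemma l4 (hpos : ∀ a ∈ A, 0 < a) (hne : A.Nonempty) : (PlP A).card + 1 = (Pl A).card := by
  have hS : 0 < A.sum id := sum_pos' hpos Finset.Subset.rfl hne
  have h := Finset.card_filter_add_card_filter_not
    (s := Pl A) (p := fun B => 0 < 2 * B.sum id)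
  have e1 : (Pl A).filter (fun B => ¬ 0 < 2 * B.sum id) = {∅} := by
    ext B
    simp only [Pl, Finset.mem_filter, Finset.mem_powerset, Finset.mem_singleton]
    constructor
    · rintro ⟨⟨h1, _⟩, h2⟩
      by_contra hne'
      have : 0 < B.sum id :=
        Finset.sum_pos (fun i hi => hpos i (h1 hi)) (Finset.nonempty_iff_ne_empty.2 hne')
      omega
    · rintro rfl
      refine ⟨⟨Finset.empty_subset A, ?_⟩, ?_⟩
      · simpa using hS
      · simp
  rw [e1, Finset.card_singleton] at h
  rw [← h, PlP]

lemma l5 : (PlD A).card + (Lf A).card = (PlP A).card := by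
  have h := Finset.card_filter_add_card_filter_not
    (s := PlP A) (p := fun B => B.sum id ∣ A.sum id)
  have e1 : (PlP A).filter (fun B => ¬ B.sum id ∣ A.sum id) = Lf A := by
    ext B
    simp only [PlP, Pl, Lf, Finset.mem_filter, Finset.mem_powerset]
    tauto
  rw [e1] at h
  rw [← h, PlD]

lemma l6 : (Dl A).card + (Dn A).card = (Df A).card := by
  rw [Dl, Dn, Finset.card_filter_add_card_filter_not]

lemma l7 (hpos : ∀ a ∈ A, 0 < a) : (Dl A).card = (PlD A).card := by
  congr 1
  ext B
  simp only [Dl, Df, PlD, PlP, Pl, Finset.mem_filter, Finset.mem_powerset]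
  constructor
  · rintro ⟨⟨hB, hne', hd⟩, hlow⟩
    have := sum_pos' hpos hB hne'
    exact ⟨⟨⟨hB, hlow⟩, by omega⟩, hd⟩
  · rintro ⟨⟨⟨hB, hlow⟩, h0⟩, hd⟩
    exact ⟨⟨hB, nonempty_of_sum_pos (by omega), hd⟩, hlow⟩

lemma l8 (hpos : ∀ a ∈ A, 0 < a) (hne : A.Nonempty) : (Kf A).card + 1 = (Dn A).card := by
  have hS : 0 < A.sum id := sum_pos' hpos Finset.Subset.rfl hne
  have h := Finset.card_filter_add_card_filter_not
    (s := Dn A) (p := fun B => 2 * B.sum id = A.sum id)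
  have e1 : (Dn A).filter (fun B => 2 * B.sum id = A.sum id) = Kf A := by
    ext B
    simp only [Dn, Df, Kf, Finset.mem_filter, Finset.mem_powerset]
    constructor
    · rintro ⟨⟨⟨h1, _⟩, _⟩, h2⟩; exact ⟨h1, h2⟩
    · rintro ⟨h1, h2⟩
      have h0 : 0 < B.sum id := by omega
      exact ⟨⟨⟨h1, nonempty_of_sum_pos h0, ⟨2, by omega⟩⟩, by omega⟩, h2⟩
  have e2 : (Dn A).filter (fun B => ¬ 2 * B.sum id = A.sum id) = {A} := by
    ext B
    simp only [Dn, Df, Finset.mem_filter, Finset.mem_powerset, Finset.mem_singleton]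
    constructor
    · rintro ⟨⟨⟨hB, hne', hd⟩, hge⟩, hneq⟩
      by_contra hBA
      have h1 : B.sum id < A.sum id := sum_lt_of_ne hpos hB hBA
      have := dvd_small hd h1
      omega
    · rintro rfl
      exact ⟨⟨⟨Finset.Subset.rfl, hne, dvd_rfl⟩, by omega⟩, by omega⟩
  rw [e1, e2, Finset.card_singleton] at h
  omega

/-- The fundamental counting identity. -/
lemma count_identity (hpos : ∀ a ∈ A, 0 < a) (hne : A.Nonempty) :
    2 * (Df A).card + 2 * (Lf A).card = 2 ^ A.card + (Kf A).card := by
  have h1 := l1 (A := A)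
  have h2 := l2 (A := A)
  have h3 := l3 (A := A)
  have h4 := l4 hpos hne
  have h5 := l5 (A := A)
  have h6 := l6 (A := A)
  have h7 := l7 hpos
  have h8 := l8 hpos hne
  omega

lemma Lf_empty {B : Finset ℕ} (hL : (Lf A).card = 0) (hBA : B ⊆ A) (h0 : 0 < 2 * B.sum id)
    (hlt : 2 * B.sum id < A.sum id) : B.sum id ∣ A.sum id := by
  by_contra hnd
  have : B ∈ Lf A := mem_Lf.2 ⟨hBA, h0, hlt, hnd⟩
  rw [Finset.card_eq_zero] at hL
  simp [hL] at this

lemma Kf_empty {B : Finset ℕ} (hK : (Kf A).card = 0) (hBA : B ⊆ A) :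
    2 * B.sum id ≠ A.sum id := by
  intro h
  have : B ∈ Kf A := mem_Kf.2 ⟨hBA, h⟩
  rw [Finset.card_eq_zero] at hK
  simp [hK] at this

/-- If there are no "bad low sets" and no "half sets", the maximum exceeds half the sum. -/
lemma max_big (hpos : ∀ a ∈ A, 0 < a) (hne : A.Nonempty)
    (hK : (Kf A).card = 0) (hL : (Lf A).card = 0) :
    A.sum id < 2 * A.max' hne := by
  have hS : 0 < A.sum id := sum_pos' hpos Finset.Subset.rfl hne
  set S := A.sum id with hSdef
  set M := A.max' hne with hMdef
  have hMA : M ∈ A := A.max'_mem hne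
  have hMmax : ∀ x ∈ A, x ≤ M := fun x hx => A.le_max' x hx
  -- first: S < 3 * M
  have hM3 : S < 3 * M := by
    by_contra h3M
    push_neg at h3M
    have hall : ∀ x ∈ A, 3 * x ≤ S := fun x hx => by have := hMmax x hx; omega
    have hAF : A ∈ A.powerset.filter (fun B => S < 3 * B.sum id) :=
      Finset.mem_filter.2 ⟨Finset.mem_powerset.2 Finset.Subset.rfl, by omega⟩
    obtain ⟨B, hBF, hmin⟩ := Finset.exists_min_image _ (fun B => B.sum id) ⟨A, hAF⟩
    obtain ⟨hBP, hB3⟩ := Finset.mem_filter.1 hBF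
    rw [Finset.mem_powerset] at hBP
    have hBne : B.Nonempty := nonempty_of_sum_pos (by omega)
    have h2 : S < 2 * B.sum id := by
      rcases Nat.lt_trichotomy (2 * B.sum id) S with h | h | h
      · exact absurd (Lf_empty hL hBP (by omega) h) (not_dvd_mid h hB3)
      · exact absurd h (Kf_empty hK hBP)
      · exact h
    have h3 : 3 * B.sum id < 2 * S := by
      by_contra h3
      push_neg at h3
      obtain ⟨b', hb'B, hb'⟩ : ∃ b' ∈ B, 3 * b' < S := by
        by_contra hno
        push_neg at hno
        obtain ⟨b₀, hb₀⟩ := hBne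
        have heq : ∀ b ∈ B, b = b₀ := by
          intro b hb
          have := hno b hb
          have := hall b (hBP hb)
          have := hno b₀ hb₀
          have := hall b₀ (hBP hb₀)
          omega
        have hBsing : B = {b₀} := Finset.eq_singleton_iff_unique_mem.2 ⟨hb₀, heq⟩
        rw [hBsing] at h3
        simp only [Finset.sum_singleton, id_eq] at h3
        have := hall b₀ (hBP hb₀)
        omega
      have hsub : B.erase b' ⊆ A := (Finset.erase_subset _ _).trans hBP
      have hsum : (B.erase b').sum id + id b' = B.sum id := Finset.sum_erase_add B id hb'B
      have hidb : id b' = b' := rfl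
      have hmem : B.erase b' ∈ A.powerset.filter (fun B => S < 3 * B.sum id) :=
        Finset.mem_filter.2 ⟨Finset.mem_powerset.2 hsub, by omega⟩
      have := hmin _ hmem
      have hb'pos := hpos b' (hBP hb'B)
      omega
    have hcsum : (A \ B).sum id + B.sum id = S := sum_compl hBP
    have hcmem : (A \ B).sum id ∣ S :=
      Lf_empty hL Finset.sdiff_subset (by omega) (by omega)
    exact not_dvd_mid (t := (A \ B).sum id) (by omega) (by omega) hcmem
  -- now: S < 2 * M
  have hMsub : {M} ⊆ A := Finset.singleton_subset_iff.2 hMA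
  have hMsum : ({M} : Finset ℕ).sum id = M := by simp
  rcases Nat.lt_trichotomy (2 * M) S with h | h | h
  · exact absurd (Lf_empty hL hMsub (by omega) (by omega)) (by rw [hMsum]; exact not_dvd_mid h hM3)
  · exact absurd (by rw [hMsum]; exact h) (Kf_empty hK hMsub)
  · exact h

lemma antiPencil_of (hn5 : 5 ≤ A.card) (hpos : ∀ a ∈ A, 0 < a)
    (hK : (Kf A).card = 0) (hL : (Lf A).card = 0) : IsAntiPencil A := by
  have hne : A.Nonempty := Finset.card_pos.1 (by omega)
  have hS : 0 < A.sum id := sum_pos' hpos Finset.Subset.rfl hne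
  set S := A.sum id with hSdef
  set M := A.max' hne with hMdef
  have hMA : M ∈ A := A.max'_mem hne
  have hM2 : S < 2 * M := max_big hpos hne hK hL
  refine ⟨M, hMA, fun x hx => A.le_max' x hx, fun B => ⟨?_, ?_⟩⟩
  · rintro ⟨hBA, hBne, hdvd⟩
    by_cases hBA' : B = A
    · exact Or.inr hBA'
    have hMB : M ∉ B := by
      intro hMB
      have hlt : B.sum id < S := sum_lt_of_ne hpos hBA hBA'
      have hds := dvd_small hdvd hlt
      have hne2 := Kf_empty hK hBA
      have hMle : id M ≤ B.sum id :=
        Finset.single_le_sum (fun i _ => Nat.zero_le (id i)) hMB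
      have hidM : id M = M := rfl
      omega
    exact Or.inl ⟨hBne, Finset.subset_erase.mpr ⟨hBA, hMB⟩⟩
  · rintro (⟨hne', hsub⟩ | rfl)
    · have hBA : B ⊆ A := hsub.trans (Finset.erase_subset _ _)
      have hBle : B.sum id ≤ (A.erase M).sum id := Finset.sum_le_sum_of_subset hsub
      have hsum : (A.erase M).sum id + id M = S := Finset.sum_erase_add A id hMA
      have h0 : 0 < B.sum id := sum_pos' hpos hBA hne'
      have hidM : id M = M := rfl
      have hd : B.sum id ∣ S := Lf_empty hL hBA (by omega) (by omega)
      exact ⟨hBA, hne', hd⟩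
    · exact ⟨Finset.Subset.rfl, hne, dvd_rfl⟩

lemma zeros_of_antiPencil (hn5 : 5 ≤ A.card) (hpos : ∀ a ∈ A, 0 < a)
    (hAP : IsAntiPencil A) : (Kf A).card = 0 ∧ (Lf A).card = 0 := by
  obtain ⟨M, hMA, hMmax, hchar⟩ := hAP
  have hne : A.Nonempty := ⟨M, hMA⟩
  have hS : 0 < A.sum id := sum_pos' hpos Finset.Subset.rfl hne
  set S := A.sum id with hSdef
  have hM0 : 0 < M := hpos M hMA
  have hAe : (A.erase M).Nonempty := by
    rw [← Finset.card_pos, Finset.card_erase_of_mem hMA]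
    omega
  have hsum : (A.erase M).sum id + id M = S := Finset.sum_erase_add A id hMA
  have hidM : id M = M := rfl
  have hdivAe : IsDivisor A (A.erase M) :=
    (hchar _).2 (Or.inl ⟨hAe, Finset.Subset.rfl⟩)
  have hdvd : (A.erase M).sum id ∣ S := hdivAe.2.2
  have hlt : (A.erase M).sum id < S := by omega
  have h2 : 2 * (A.erase M).sum id ≤ S := dvd_small hdvd hlt
  have hM2 : S < 2 * M := by
    by_contra h
    push_neg at h
    have h2M : 2 * M = S := by omega
    have hdivM : IsDivisor A {M} := by
      refine ⟨Finset.singleton_subset_iff.2 hMA, ⟨M, Finset.mem_singleton_self M⟩, ?_⟩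
      have : ({M} : Finset ℕ).sum id = M := by simp
      rw [this, ← hSdef]
      exact ⟨2, by omega⟩
    rcases (hchar {M}).1 hdivM with ⟨_, hsubE⟩ | hEA
    · have := hsubE (Finset.mem_singleton_self M)
      exact (Finset.mem_erase.1 this).1 rfl
    · have := congrArg Finset.card hEA
      simp only [Finset.card_singleton] at this
      omega
  constructor
  · rw [Finset.card_eq_zero, Finset.eq_empty_iff_forall_notMem]
    intro C hC
    obtain ⟨hCA, h2C⟩ := mem_Kf.1 hC
    rw [← hSdef] at h2C
    have hCd : C.sum id ∣ S := ⟨2, by omega⟩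
    have hCne : C.Nonempty := nonempty_of_sum_pos (by omega)
    have hCdiv : IsDivisor A C := ⟨hCA, hCne, by rw [← hSdef]; exact hCd⟩
    rcases (hchar C).1 hCdiv with ⟨_, hCsub⟩ | rfl
    · have hMC : M ∉ C := fun h => (Finset.mem_erase.1 (hCsub h)).1 rfl
      have hcs : (A \ C).sum id + C.sum id = S := sum_compl hCA
      have hC'div : IsDivisor A (A \ C) := by
        refine ⟨Finset.sdiff_subset, ⟨M, Finset.mem_sdiff.2 ⟨hMA, hMC⟩⟩, ?_⟩
        rw [← hSdef]
        exact ⟨2, by omega⟩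
      rcases (hchar _).1 hC'div with ⟨_, hsub'⟩ | hA'
      · have := hsub' (Finset.mem_sdiff.2 ⟨hMA, hMC⟩)
        exact (Finset.mem_erase.1 this).1 rfl
      · obtain ⟨c, hc⟩ := hCne
        have : c ∈ A \ C := by rw [hA']; exact hCA hc
        exact (Finset.mem_sdiff.1 this).2 hc
    · omega
  · rw [Finset.card_eq_zero, Finset.eq_empty_iff_forall_notMem]
    intro B hB
    obtain ⟨hBA, h0, hlt2, hnd⟩ := mem_Lf.1 hB
    rw [← hSdef] at hlt2 hnd
    have hMB : M ∉ B := by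
      intro hMB
      have hMle : id M ≤ B.sum id :=
        Finset.single_le_sum (fun i _ => Nat.zero_le (id i)) hMB
      omega
    have hdivB : IsDivisor A B :=
      (hchar B).2 (Or.inl ⟨nonempty_of_sum_pos (by omega),
        Finset.subset_erase.mpr ⟨hBA, hMB⟩⟩)
    exact hnd (by rw [hSdef]; exact hdivB.2.2)

def K0 (A : Finset ℕ) (M : ℕ) : Finset (Finset ℕ) := (Kf A).filter (fun C => M ∉ C)

lemma K_split (hS : 0 < A.sum id) (hMA : M ∈ A) : (Kf A).card = 2 * (K0 A M).card := by
  have h := Finset.card_filter_add_card_filter_not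
    (s := Kf A) (p := fun C => M ∉ C)
  have hbij : ((Kf A).filter (fun C => ¬ M ∉ C)).card = (K0 A M).card := by
    apply Finset.card_bij' (fun C _ => A \ C) (fun C _ => A \ C)
    · intro C hC
      obtain ⟨hC1, hC2⟩ := Finset.mem_filter.1 hC
      obtain ⟨hCA, hCS⟩ := mem_Kf.1 hC1
      have := sum_compl hCA
      refine Finset.mem_filter.2 ⟨mem_Kf.2 ⟨Finset.sdiff_subset, by omega⟩, ?_⟩
      simp only [Finset.mem_sdiff, not_and, not_not]
      intro _
      exact not_not.1 hC2
    · intro C hC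
      obtain ⟨hC1, hC2⟩ := Finset.mem_filter.1 hC
      obtain ⟨hCA, hCS⟩ := mem_Kf.1 hC1
      have := sum_compl hCA
      refine Finset.mem_filter.2 ⟨mem_Kf.2 ⟨Finset.sdiff_subset, by omega⟩, ?_⟩
      exact not_not.2 (Finset.mem_sdiff.2 ⟨hMA, hC2⟩)
    · intro C hC
      obtain ⟨hC1, _⟩ := Finset.mem_filter.1 hC
      exact Finset.sdiff_sdiff_eq_self (mem_Kf.1 hC1).1
    · intro C hC
      obtain ⟨hC1, _⟩ := Finset.mem_filter.1 hC
      exact Finset.sdiff_sdiff_eq_self (mem_Kf.1 hC1).1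
  rw [hbij] at h
  rw [K0] at h ⊢
  omega

/-- extraction of the four smallest elements, all below the maximum -/
lemma chain4 (hn5 : 5 ≤ A.card) (hne : A.Nonempty) :
    ∃ a1 a2 a3 a4, a1 ∈ A ∧ a2 ∈ A ∧ a3 ∈ A ∧ a4 ∈ A ∧
      a1 < a2 ∧ a2 < a3 ∧ a3 < a4 ∧ a4 < A.max' hne ∧ (∀ x ∈ A, a1 ≤ x) ∧
      a1 + a2 + a3 + a4 + A.max' hne ≤ A.sum id := by
  classical
  set M := A.max' hne with hM
  have hMA : M ∈ A := A.max'_mem hne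
  have hMmax : ∀ x ∈ A, x ≤ M := fun x hx => A.le_max' x hx
  have h1 : A.Nonempty := hne
  set a1 := A.min' h1 with ha1
  have ha1A : a1 ∈ A := A.min'_mem h1
  have hmin1 : ∀ x ∈ A, a1 ≤ x := fun x hx => A.min'_le x hx
  have h2c : 0 < (A.erase a1).card := by
    rw [Finset.card_erase_of_mem ha1A]; omega
  have h2 : (A.erase a1).Nonempty := Finset.card_pos.1 h2c
  set a2 := (A.erase a1).min' h2 with ha2
  have ha2e : a2 ∈ A.erase a1 := Finset.min'_mem _ h2
  have ha2A : a2 ∈ A := (Finset.mem_erase.1 ha2e).2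
  have ha2ne : a2 ≠ a1 := (Finset.mem_erase.1 ha2e).1
  have hmin2 : ∀ x ∈ A.erase a1, a2 ≤ x := fun x hx => Finset.min'_le _ x hx
  have h3c : 0 < ((A.erase a1).erase a2).card := by
    rw [Finset.card_erase_of_mem ha2e, Finset.card_erase_of_mem ha1A]; omega
  have h3 : ((A.erase a1).erase a2).Nonempty := Finset.card_pos.1 h3c
  set a3 := ((A.erase a1).erase a2).min' h3 with ha3
  have ha3e : a3 ∈ (A.erase a1).erase a2 := Finset.min'_mem _ h3
  have ha3e1 : a3 ∈ A.erase a1 := (Finset.mem_erase.1 ha3e).2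
  have ha3A : a3 ∈ A := (Finset.mem_erase.1 ha3e1).2
  have hmin3 : ∀ x ∈ (A.erase a1).erase a2, a3 ≤ x := fun x hx => Finset.min'_le _ x hx
  have h4c : 0 < (((A.erase a1).erase a2).erase a3).card := by
    rw [Finset.card_erase_of_mem ha3e, Finset.card_erase_of_mem ha2e,
      Finset.card_erase_of_mem ha1A]; omega
  have h4 : (((A.erase a1).erase a2).erase a3).Nonempty := Finset.card_pos.1 h4c
  set a4 := (((A.erase a1).erase a2).erase a3).min' h4 with ha4
  have ha4e : a4 ∈ ((A.erase a1).erase a2).erase a3 := Finset.min'_mem _ h4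
  have ha4e2 : a4 ∈ (A.erase a1).erase a2 := (Finset.mem_erase.1 ha4e).2
  have ha4e1 : a4 ∈ A.erase a1 := (Finset.mem_erase.1 ha4e2).2
  have ha4A : a4 ∈ A := (Finset.mem_erase.1 ha4e1).2
  have hmin4 : ∀ x ∈ ((A.erase a1).erase a2).erase a3, a4 ≤ x := fun x hx =>
    Finset.min'_le _ x hx
  have h5c : 0 < ((((A.erase a1).erase a2).erase a3).erase a4).card := by
    rw [Finset.card_erase_of_mem ha4e, Finset.card_erase_of_mem ha3e,
      Finset.card_erase_of_mem ha2e, Finset.card_erase_of_mem ha1A]; omega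
  have h5 : ((((A.erase a1).erase a2).erase a3).erase a4).Nonempty := Finset.card_pos.1 h5c
  obtain ⟨a5, ha5e⟩ := h5
  have ha5e3 : a5 ∈ ((A.erase a1).erase a2).erase a3 := (Finset.mem_erase.1 ha5e).2
  have ha5e2 : a5 ∈ (A.erase a1).erase a2 := (Finset.mem_erase.1 ha5e3).2
  have ha5e1 : a5 ∈ A.erase a1 := (Finset.mem_erase.1 ha5e2).2
  have ha5A : a5 ∈ A := (Finset.mem_erase.1 ha5e1).2
  -- strict inequalities
  have h12 : a1 < a2 := lt_of_le_of_ne (hmin1 a2 ha2A) (Ne.symm ha2ne)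
  have h23 : a2 < a3 := lt_of_le_of_ne (hmin2 a3 ha3e1) (Ne.symm (Finset.mem_erase.1 ha3e).1)
  have h34 : a3 < a4 := lt_of_le_of_ne (hmin3 a4 ha4e2) (Ne.symm (Finset.mem_erase.1 ha4e).1)
  have h45 : a4 < a5 := lt_of_le_of_ne (hmin4 a5 ha5e3) (Ne.symm (Finset.mem_erase.1 ha5e).1)
  have h5M : a5 ≤ M := hMmax a5 ha5A
  have h4M : a4 < M := lt_of_lt_of_le h45 h5M
  -- sum of the five-element subset
  have hd1 : a1 < M := by omega
  have hsub : ({a1, a2, a3, a4, M} : Finset ℕ) ⊆ A := by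
    intro x hx
    simp only [Finset.mem_insert, Finset.mem_singleton] at hx
    rcases hx with rfl | rfl | rfl | rfl | rfl <;> assumption
  have hsum : ({a1, a2, a3, a4, M} : Finset ℕ).sum id = a1 + a2 + a3 + a4 + M := by
    rw [Finset.sum_insert (by simp; omega), Finset.sum_insert (by simp; omega),
      Finset.sum_insert (by simp; omega), Finset.sum_insert (by simp; omega),
      Finset.sum_singleton]
    simp only [id_eq]
    ring
  have hle : ({a1, a2, a3, a4, M} : Finset ℕ).sum id ≤ A.sum id :=
    Finset.sum_le_sum_of_subset hsub
  exact ⟨a1, a2, a3, a4, ha1A, ha2A, ha3A, ha4A, h12, h23, h34, h4M, hmin1, by omega⟩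

/-- the switching map used in the injection from half-sets to bad low sets -/
def sw (A : Finset ℕ) (a : ℕ) (E : Finset ℕ) : Finset ℕ :=
  if a ∈ E then E.erase a else A \ insert a E

lemma sum_erase_add' (s : Finset ℕ) {a : ℕ} (h : a ∈ s) :
    (s.erase a).sum id + a = s.sum id :=
  Finset.sum_erase_add s id h

lemma sum_insert' {s : Finset ℕ} {a : ℕ} (h : a ∉ s) :
    (insert a s).sum id = a + s.sum id :=
  Finset.sum_insert h

lemma sw_mem (hpos : ∀ x ∈ A, 0 < x) {a M : ℕ} (haA : a ∈ A) (hMA : M ∈ A) (haM : a < M)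
    (h6 : 6 * a < A.sum id) {E : Finset ℕ} (hE : E ∈ K0 A M) :
    sw A a E ∈ Lf A ∧ 2 * (sw A a E).sum id + 2 * a = A.sum id ∧ (M ∈ sw A a E ↔ a ∉ E) := by
  obtain ⟨hE1, hEM⟩ := Finset.mem_filter.1 hE
  obtain ⟨hEA, hES⟩ := mem_Kf.1 hE1
  have ha0 : 0 < a := hpos a haA
  rw [sw]
  split_ifs with haE
  · have hsum : (E.erase a).sum id + a = E.sum id := sum_erase_add' E haE
    have hn1 : (∑ x ∈ E.erase a, id x) = (E.erase a).sum id := rfl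
    have hsub : E.erase a ⊆ A := (Finset.erase_subset _ _).trans hEA
    refine ⟨mem_Lf.2 ⟨hsub, by omega, by omega, not_dvd_mid (by omega) (by omega)⟩,
      by omega, ?_⟩
    exact ⟨fun hM => absurd ((Finset.erase_subset _ _) hM) hEM, fun h => absurd haE h⟩
  · have hins : insert a E ⊆ A := Finset.insert_subset haA hEA
    have hsum : (A \ insert a E).sum id + (insert a E).sum id = A.sum id := sum_compl hins
    have hsum2 : (insert a E).sum id = a + E.sum id := sum_insert' haE
    have hn2 : (∑ x ∈ A \ insert a E, id x) = (A \ insert a E).sum id := rfl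
    refine ⟨mem_Lf.2 ⟨Finset.sdiff_subset, by omega, by omega,
      not_dvd_mid (by omega) (by omega)⟩, by omega, ?_⟩
    refine ⟨fun _ => haE, fun _ => Finset.mem_sdiff.2 ⟨hMA, ?_⟩⟩
    simp only [Finset.mem_insert, not_or]
    exact ⟨by omega, hEM⟩

lemma sw_inj {a M : ℕ} (haA : a ∈ A) (hMA : M ∈ A) (haM : a < M) {E1 E2 : Finset ℕ}
    (hE1 : E1 ∈ K0 A M) (hE2 : E2 ∈ K0 A M) (heq : sw A a E1 = sw A a E2) : E1 = E2 := by
  obtain ⟨hE11, hE1M⟩ := Finset.mem_filter.1 hE1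
  obtain ⟨hE21, hE2M⟩ := Finset.mem_filter.1 hE2
  obtain ⟨hE1A, _⟩ := mem_Kf.1 hE11
  obtain ⟨hE2A, _⟩ := mem_Kf.1 hE21
  have hMsw : ∀ {E : Finset ℕ}, E ⊆ A → M ∉ E → (M ∈ sw A a E ↔ a ∉ E) := by
    intro E hEA hEM
    rw [sw]
    split_ifs with haE
    · exact ⟨fun hM => absurd ((Finset.erase_subset _ _) hM) hEM, fun h => absurd haE h⟩
    · refine ⟨fun _ => haE, fun _ => Finset.mem_sdiff.2 ⟨hMA, ?_⟩⟩
      simp only [Finset.mem_insert, not_or]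
      exact ⟨by omega, hEM⟩
  have hiff : (a ∉ E1) ↔ (a ∉ E2) := by
    rw [← hMsw hE1A hE1M, ← hMsw hE2A hE2M, heq]
  rw [sw, sw] at heq
  by_cases h1 : a ∈ E1
  · have h2 : a ∈ E2 := by tauto
    rw [if_pos h1, if_pos h2] at heq
    rw [← Finset.insert_erase h1, ← Finset.insert_erase h2, heq]
  · have h2 : a ∉ E2 := by tauto
    rw [if_neg h1, if_neg h2] at heq
    have hkey : insert a E1 = insert a E2 := by
      rw [← Finset.sdiff_sdiff_eq_self (Finset.insert_subset haA hE1A),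
        ← Finset.sdiff_sdiff_eq_self (Finset.insert_subset haA hE2A), heq]
    rw [← Finset.erase_insert h1, ← Finset.erase_insert h2, hkey]

lemma kset_card_two {a1 : ℕ} (ha1 : ∀ x ∈ A, a1 ≤ x) (h6 : A.sum id ≤ 6 * a1)
    (hS : 0 < A.sum id) (hsmall : ∀ c ∈ A, 2 * c < A.sum id) {C : Finset ℕ}
    (hC : C ∈ Kf A) : C.card = 2 := by
  obtain ⟨hCA, hCS⟩ := mem_Kf.1 hC
  have hc0 : C.card ≠ 0 := by
    intro h
    rw [Finset.card_eq_zero] at h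
    subst h
    rw [Finset.sum_empty] at hCS
    omega
  have hc1 : C.card ≠ 1 := by
    intro h
    obtain ⟨c, rfl⟩ := Finset.card_eq_one.1 h
    have hcA : c ∈ A := hCA (Finset.mem_singleton_self c)
    have : ({c} : Finset ℕ).sum id = c := by simp
    have := hsmall c hcA
    omega
  have hc3 : ¬ 3 ≤ C.card := by
    intro h3
    have hne1 : C.Nonempty := Finset.card_pos.1 (by omega)
    set c1 := C.min' hne1 with hc1d
    have hc1C : c1 ∈ C := C.min'_mem hne1
    have hne2 : (C.erase c1).Nonempty := by
      rw [← Finset.card_pos, Finset.card_erase_of_mem hc1C]; omega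
    set c2 := (C.erase c1).min' hne2 with hc2d
    have hc2e : c2 ∈ C.erase c1 := Finset.min'_mem _ hne2
    have hc2C : c2 ∈ C := (Finset.mem_erase.1 hc2e).2
    have hne3 : ((C.erase c1).erase c2).Nonempty := by
      rw [← Finset.card_pos, Finset.card_erase_of_mem hc2e,
        Finset.card_erase_of_mem hc1C]; omega
    obtain ⟨c3, hc3e⟩ := hne3
    have hc3e1 : c3 ∈ C.erase c1 := (Finset.mem_erase.1 hc3e).2
    have hc3C : c3 ∈ C := (Finset.mem_erase.1 hc3e1).2
    have h12 : c1 < c2 := lt_of_le_of_ne (C.min'_le c2 hc2C) (Ne.symm (Finset.mem_erase.1 hc2e).1)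
    have h23 : c2 < c3 := lt_of_le_of_ne (Finset.min'_le _ c3 hc3e1)
      (Ne.symm (Finset.mem_erase.1 hc3e).1)
    have hb1 : a1 ≤ c1 := ha1 c1 (hCA hc1C)
    have hsub : ({c1, c2, c3} : Finset ℕ) ⊆ C := by
      intro x hx
      simp only [Finset.mem_insert, Finset.mem_singleton] at hx
      rcases hx with rfl | rfl | rfl <;> assumption
    have hsum : ({c1, c2, c3} : Finset ℕ).sum id = c1 + c2 + c3 := by
      rw [Finset.sum_insert (by simp; omega), Finset.sum_insert (by simp; omega),
        Finset.sum_singleton]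
      simp only [id_eq]
      ring
    have hle : ({c1, c2, c3} : Finset ℕ).sum id ≤ C.sum id := Finset.sum_le_sum_of_subset hsub
    omega
  omega

lemma K_le_card {a1 : ℕ} (ha1 : ∀ x ∈ A, a1 ≤ x) (h6 : A.sum id ≤ 6 * a1)
    (hS : 0 < A.sum id) (hsmall : ∀ c ∈ A, 2 * c < A.sum id) :
    (Kf A).card ≤ A.card := by
  classical
  apply Finset.card_le_card_of_injOn (fun C => if h : C.Nonempty then C.min' h else 0)
  · intro C hC
    have h2 := kset_card_two ha1 h6 hS hsmall hC
    have hne : C.Nonempty := Finset.card_pos.1 (by omega)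
    simp only [dif_pos hne]
    exact (mem_Kf.1 hC).1 (C.min'_mem hne)
  · intro C1 hC1 C2 hC2 heq
    simp only [Finset.mem_coe] at hC1 hC2
    have h21 := kset_card_two ha1 h6 hS hsmall hC1
    have h22 := kset_card_two ha1 h6 hS hsmall hC2
    have hne1 : C1.Nonempty := Finset.card_pos.1 (by omega)
    have hne2 : C2.Nonempty := Finset.card_pos.1 (by omega)
    dsimp only at heq
    rw [dif_pos hne1, dif_pos hne2] at heq
    obtain ⟨u, v, huv, rfl⟩ := Finset.card_eq_two.1 h21
    obtain ⟨x, y, hxy, rfl⟩ := Finset.card_eq_two.1 h22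
    have hsum1 : ({u, v} : Finset ℕ).sum id = u + v := Finset.sum_pair huv
    have hsum2 : ({x, y} : Finset ℕ).sum id = x + y := Finset.sum_pair hxy
    have hS1 := (mem_Kf.1 hC1).2
    have hS2 := (mem_Kf.1 hC2).2
    have hmm1 : ({u, v} : Finset ℕ).min' hne1 ∈ ({u, v} : Finset ℕ) := Finset.min'_mem _ _
    have hmm2 : ({x, y} : Finset ℕ).min' hne2 ∈ ({x, y} : Finset ℕ) := Finset.min'_mem _ _
    have hlu : ({u, v} : Finset ℕ).min' hne1 ≤ u := Finset.min'_le _ u (by simp)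
    have hlv : ({u, v} : Finset ℕ).min' hne1 ≤ v := Finset.min'_le _ v (by simp)
    have hlx : ({x, y} : Finset ℕ).min' hne2 ≤ x := Finset.min'_le _ x (by simp)
    have hly : ({x, y} : Finset ℕ).min' hne2 ≤ y := Finset.min'_le _ y (by simp)
    simp only [Finset.mem_insert, Finset.mem_singleton] at hmm1 hmm2
    have : (u = x ∧ v = y) ∨ (u = y ∧ v = x) := by omega
    rcases this with ⟨rfl, rfl⟩ | ⟨rfl, rfl⟩
    · rfl
    · exact Finset.pair_comm u v

lemma beta_L_bound (hn5 : 5 ≤ A.card) (hpos : ∀ x ∈ A, 0 < x) {a1 M : ℕ}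
    (ha1 : ∀ x ∈ A, a1 ≤ x) (h6 : A.sum id ≤ 6 * a1)
    (hMmax : ∀ x ∈ A, x ≤ M) (h3M : 3 * M + 18 ≤ A.sum id) :
    Nat.choose A.card 2 ≤ (Lf A).card + (Kf A).card := by
  classical
  have hsplit := Finset.card_filter_add_card_filter_not
    (s := Finset.powersetCard 2 A) (p := fun C => 2 * C.sum id = A.sum id)
  have hPcard : (Finset.powersetCard 2 A).card = Nat.choose A.card 2 := by
    rw [Finset.card_powersetCard]
  have hsubK : ((Finset.powersetCard 2 A).filter (fun C => 2 * C.sum id = A.sum id)).card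
      ≤ (Kf A).card := by
    apply Finset.card_le_card
    intro C hC
    obtain ⟨hC1, hC2⟩ := Finset.mem_filter.1 hC
    exact mem_Kf.2 ⟨(Finset.mem_powersetCard.1 hC1).1, hC2⟩
  have hinj : ((Finset.powersetCard 2 A).filter (fun C => ¬ 2 * C.sum id = A.sum id)).card
      ≤ (Lf A).card := by
    apply Finset.card_le_card_of_injOn (fun C => if 2 * C.sum id < A.sum id then C else A \ C)
    · intro C hC
      obtain ⟨hC1, hCne⟩ := Finset.mem_filter.1 hC
      obtain ⟨hCA, hCcard⟩ := Finset.mem_powersetCard.1 hC1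
      obtain ⟨u, v, huv, rfl⟩ := Finset.card_eq_two.1 hCcard
      have hsump : ({u, v} : Finset ℕ).sum id = u + v := Finset.sum_pair huv
      have huA : u ∈ A := hCA (by simp)
      have hvA : v ∈ A := hCA (by simp)
      have hu1 : a1 ≤ u := ha1 u huA
      have hv1 : a1 ≤ v := ha1 v hvA
      have huM : u ≤ M := hMmax u huA
      have hvM : v ≤ M := hMmax v hvA
      dsimp only
      split_ifs with hlt
      · exact mem_Lf.2 ⟨hCA, by omega, by omega, not_dvd_mid (by omega) (by omega)⟩
      · have hcs : (A \ {u, v}).sum id + ({u, v} : Finset ℕ).sum id = A.sum id :=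
          sum_compl hCA
        exact mem_Lf.2 ⟨Finset.sdiff_subset, by omega, by omega,
          not_dvd_mid (by omega) (by omega)⟩
    · intro C1 hC1 C2 hC2 heq
      simp only [Finset.mem_coe, Finset.mem_filter] at hC1 hC2
      obtain ⟨hC1A, hC1card⟩ := Finset.mem_powersetCard.1 hC1.1
      obtain ⟨hC2A, hC2card⟩ := Finset.mem_powersetCard.1 hC2.1
      have hd1 : (A \ C1).card = A.card - 2 := by
        rw [Finset.card_sdiff_of_subset hC1A, hC1card]
      have hd2 : (A \ C2).card = A.card - 2 := by
        rw [Finset.card_sdiff_of_subset hC2A, hC2card]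
      dsimp only at heq
      split_ifs at heq with h1 h2 h2
      · exact heq
      · exfalso
        have := congrArg Finset.card heq
        rw [hC1card, hd2] at this
        omega
      · exfalso
        have := congrArg Finset.card heq
        rw [hC2card, hd1] at this
        omega
      · rw [← Finset.sdiff_sdiff_eq_self hC1A, ← Finset.sdiff_sdiff_eq_self hC2A, heq]
  omega

/-- The central structural lemma: if `K = 2L` then `K = 0`. -/
lemma Kf_card_zero (hn5 : 5 ≤ A.card) (hpos : ∀ x ∈ A, 0 < x)
    (hKL : (Kf A).card = 2 * (Lf A).card) : (Kf A).card = 0 := by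
  classical
  by_contra hK0
  have hne : A.Nonempty := Finset.card_pos.1 (by omega)
  have hS : 0 < A.sum id := sum_pos' hpos Finset.Subset.rfl hne
  set M := A.max' hne with hMd
  have hMA : M ∈ A := A.max'_mem hne
  have hMmax : ∀ x ∈ A, x ≤ M := fun x hx => A.le_max' x hx
  obtain ⟨a1, a2, a3, a4, ha1A, ha2A, ha3A, ha4A, h12, h23, h34, h4M, hmin1, hsum5⟩ :=
    chain4 hn5 hne
  rw [← hMd] at h4M hsum5
  have hk := K_split hS hMA
  have hLk : (Lf A).card = (K0 A M).card := by omega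
  have hk1 : 1 ≤ (K0 A M).card := by omega
  by_cases hb : A.sum id ≤ 6 * a1
  · -- case: the smallest element is large
    have h3M : 3 * M + 18 ≤ A.sum id := by omega
    have hsmall : ∀ c ∈ A, 2 * c < A.sum id := fun c hc => by
      have := hMmax c hc; omega
    have hKn := K_le_card hmin1 hb hS hsmall
    have hLK := beta_L_bound hn5 hpos hmin1 hb hMmax h3M
    have hchoose : 2 * Nat.choose A.card 2 = A.card * (A.card - 1) := by
      rw [Nat.choose_two_right]
      apply Nat.mul_div_cancel'
      have : Even ((A.card - 1) * (A.card - 1 + 1)) := Nat.even_mul_succ_self _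
      have h' : A.card - 1 + 1 = A.card := by omega
      rw [h'] at this
      rw [Nat.mul_comm]
      exact this.two_dvd
    have h4n : A.card * 4 ≤ A.card * (A.card - 1) :=
      Nat.mul_le_mul_left _ (by omega)
    omega
  · push_neg at hb
    have h1M : a1 < M := by omega
    have hTsub : (K0 A M).image (sw A a1) ⊆ Lf A := by
      intro B hB
      obtain ⟨E, hE, rfl⟩ := Finset.mem_image.1 hB
      exact (sw_mem hpos ha1A hMA h1M hb hE).1
    have hTcard : ((K0 A M).image (sw A a1)).card = (K0 A M).card :=
      Finset.card_image_of_injOn (fun E hE F hF h =>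
        sw_inj ha1A hMA h1M (Finset.mem_coe.1 hE) (Finset.mem_coe.1 hF) h)
    have hTsum : ∀ B ∈ (K0 A M).image (sw A a1),
        2 * B.sum id + 2 * a1 = A.sum id := by
      intro B hB
      obtain ⟨E, hE, rfl⟩ := Finset.mem_image.1 hB
      exact (sw_mem hpos ha1A hMA h1M hb hE).2.1
    -- find an extra bad low set not in the image
    obtain ⟨ex, hexL, hexS⟩ : ∃ ex, ex ∈ Lf A ∧ 2 * ex.sum id + 2 * a1 ≠ A.sum id := by
      by_cases h6a2 : 6 * a2 < A.sum id
      · obtain ⟨E0, hE0⟩ := Finset.card_pos.1 hk1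
        have h2M : a2 < M := by omega
        obtain ⟨hm1, hm2, _⟩ := sw_mem hpos ha2A hMA h2M h6a2 hE0
        exact ⟨sw A a2 E0, hm1, by omega⟩
      · push_neg at h6a2
        have hp23 : ({a2, a3} : Finset ℕ).sum id = a2 + a3 := Finset.sum_pair (by omega)
        have hp24 : ({a2, a4} : Finset ℕ).sum id = a2 + a4 := Finset.sum_pair (by omega)
        have hs23 : ({a2, a3} : Finset ℕ) ⊆ A := by
          intro x hx
          simp only [Finset.mem_insert, Finset.mem_singleton] at hx
          rcases hx with rfl | rfl <;> assumption
        have hs24 : ({a2, a4} : Finset ℕ) ⊆ A := by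
          intro x hx
          simp only [Finset.mem_insert, Finset.mem_singleton] at hx
          rcases hx with rfl | rfl <;> assumption
        have hm23 : ({a2, a3} : Finset ℕ) ∈ Lf A :=
          mem_Lf.2 ⟨hs23, by omega, by omega, not_dvd_mid (by omega) (by omega)⟩
        have hm24 : ({a2, a4} : Finset ℕ) ∈ Lf A :=
          mem_Lf.2 ⟨hs24, by omega, by omega, not_dvd_mid (by omega) (by omega)⟩
        by_cases hch : 2 * (a2 + a3) + 2 * a1 = A.sum id
        · exact ⟨{a2, a4}, hm24, by omega⟩
        · exact ⟨{a2, a3}, hm23, by omega⟩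
    have hexT : ex ∉ (K0 A M).image (sw A a1) := fun hT => hexS (hTsum ex hT)
    have hins : insert ex ((K0 A M).image (sw A a1)) ⊆ Lf A :=
      Finset.insert_subset hexL hTsub
    have hcard : (insert ex ((K0 A M).image (sw A a1))).card = (K0 A M).card + 1 := by
      rw [Finset.card_insert_of_notMem hexT, hTcard]
    have := Finset.card_le_card hins
    omega

/-- Main characterization -/
theorem main_thm (n : ℕ) (hn : 5 ≤ n) (hcard : A.card = n)
    (hpos : ∀ a ∈ A, 0 < a) :
    (A.powerset.filter (fun B => B.Nonempty ∧ B.sum id ∣ A.sum id)).card = 2 ^ (n - 1) ↔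
      IsAntiPencil A := by
  have hne : A.Nonempty := Finset.card_pos.1 (by omega)
  have hid := count_identity hpos hne
  rw [hcard] at hid
  have hpow : 2 ^ n = 2 * 2 ^ (n - 1) := by
    have h' : n - 1 + 1 = n := by omega
    conv_lhs => rw [← h']
    rw [pow_succ]
    ring
  have hDf : Df A = A.powerset.filter (fun B => B.Nonempty ∧ B.sum id ∣ A.sum id) := rfl
  rw [← hDf]
  constructor
  · intro hd
    have hKL : (Kf A).card = 2 * (Lf A).card := by omega
    have hK := Kf_card_zero (by omega) hpos hKL
    have hL : (Lf A).card = 0 := by omega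
    exact antiPencil_of (by omega) hpos hK hL
  · intro hAP
    obtain ⟨hK, hL⟩ := zeros_of_antiPencil (by omega) hpos hAP
    omega

end Main
end AP14

/-- For `n ≥ 5`, a set of `n` positive integers has exactly `2 ^ (n - 1)` divisors if and only
if it is an anti-pencil. -/
theorem stmt_14 (n : ℕ) (hn : 5 ≤ n) (A : Finset ℕ) (hcard : A.card = n)
    (hpos : ∀ a ∈ A, 0 < a) :
    (A.powerset.filter (fun B => B.Nonempty ∧ B.sum id ∣ A.sum id)).card = 2 ^ (n - 1) ↔
      IsAntiPencil A :=
  AP14.main_thm n hn hcard hpos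
end

section
/- Let A be a set of four positive integers. Then A has exactly 8 divisors if and only if A is an anti-pencil or A = {a, 2a, 3a, 6a} for some positive integer a. -/
lemma sum_pair {x y : ℕ} (h : x ≠ y) : ({x, y} : Finset ℕ).sum id = x + y := by
  rw [Finset.sum_insert (by simpa using h), Finset.sum_singleton]; rfl

lemma sum_triple {x y z : ℕ} (h1 : x ≠ y) (h2 : x ≠ z) (h3 : y ≠ z) :
    ({x, y, z} : Finset ℕ).sum id = x + y + z := by
  rw [Finset.sum_insert (by simp [h1, h2]), sum_pair h3]; simp [id]; ring

lemma sum_quad {x y z w : ℕ} (h1 : x ≠ y) (h2 : x ≠ z) (h3 : x ≠ w) (h4 : y ≠ z)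
    (h5 : y ≠ w) (h6 : z ≠ w) : ({x, y, z, w} : Finset ℕ).sum id = x + y + z + w := by
  rw [Finset.sum_insert (by simp [h1, h2, h3]), sum_triple h4 h5 h6]; simp [id]; ring

lemma not_dvd_between {s S : ℕ} (k : ℕ) (h1 : k * s < S) (h2 : S < (k + 1) * s) : ¬ s ∣ S := by
  rintro ⟨m, rfl⟩
  rcases Nat.eq_zero_or_pos s with rfl | hs
  · omega
  rcases le_or_gt m k with h | h
  · have : s * m ≤ s * k := Nat.mul_le_mul_left s h
    nlinarith
  · have : s * (k + 1) ≤ s * m := Nat.mul_le_mul_left s h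
    nlinarith

lemma dvd_eq_of_lt_two_mul {m n : ℕ} (h : m ∣ n) (h0 : 0 < n) (h2 : n < 2 * m) : n = m := by
  obtain ⟨k, rfl⟩ := h
  rcases k with _ | _ | k
  · omega
  · omega
  · rcases Nat.eq_zero_or_pos m with rfl | hm
    · simp at h0
    have : m * 2 ≤ m * (k + 2) := Nat.mul_le_mul_left m (by omega)
    nlinarith

set_option maxHeartbeats 1000000 in
lemma subset4 {a b c d : ℕ} {B : Finset ℕ} (h : B ⊆ {a, b, c, d}) :
    B = ∅ ∨ B = {a} ∨ B = {b} ∨ B = {c} ∨ B = {d} ∨ B = {a, b} ∨ B = {a, c} ∨ B = {a, d} ∨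
    B = {b, c} ∨ B = {b, d} ∨ B = {c, d} ∨ B = {a, b, c} ∨ B = {a, b, d} ∨ B = {a, c, d} ∨
    B = {b, c, d} ∨ B = {a, b, c, d} := by
  have key : B = Finset.filter (fun x => x ∈ B) {a, b, c, d} := by
    ext x
    simp only [Finset.mem_filter]
    exact ⟨fun hx => ⟨h hx, hx⟩, fun hx => hx.2⟩
  by_cases ha : a ∈ B <;> by_cases hb : b ∈ B <;> by_cases hc : c ∈ B <;> by_cases hd : d ∈ B <;>
    rw [key] <;> simp [Finset.filter_insert, Finset.filter_singleton, ha, hb, hc, hd] <;> tauto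

lemma subset3 {a b c : ℕ} {B : Finset ℕ} (h : B ⊆ {a, b, c}) :
    B = ∅ ∨ B = {a} ∨ B = {b} ∨ B = {c} ∨ B = {a, b} ∨ B = {a, c} ∨ B = {b, c} ∨
    B = {a, b, c} := by
  have key : B = Finset.filter (fun x => x ∈ B) {a, b, c} := by
    ext x
    simp only [Finset.mem_filter]
    exact ⟨fun hx => ⟨h hx, hx⟩, fun hx => hx.2⟩
  by_cases ha : a ∈ B <;> by_cases hb : b ∈ B <;> by_cases hc : c ∈ B <;>
    rw [key] <;> simp [Finset.filter_insert, Finset.filter_singleton, ha, hb, hc] <;> tauto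

lemma card_le_eight {α : Type*} [DecidableEq α] (x₁ x₂ x₃ x₄ x₅ x₆ x₇ x₈ : α) :
    ({x₁, x₂, x₃, x₄, x₅, x₆, x₇, x₈} : Finset α).card ≤ 8 := by
  have h1 := Finset.card_insert_le x₁ ({x₂, x₃, x₄, x₅, x₆, x₇, x₈} : Finset α)
  have h2 := Finset.card_insert_le x₂ ({x₃, x₄, x₅, x₆, x₇, x₈} : Finset α)
  have h3 := Finset.card_insert_le x₃ ({x₄, x₅, x₆, x₇, x₈} : Finset α)
  have h4 := Finset.card_insert_le x₄ ({x₅, x₆, x₇, x₈} : Finset α)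
  have h5 := Finset.card_insert_le x₅ ({x₆, x₇, x₈} : Finset α)
  have h6 := Finset.card_insert_le x₆ ({x₇, x₈} : Finset α)
  have h7 := Finset.card_insert_le x₇ ({x₈} : Finset α)
  have h8 := Finset.card_singleton x₈
  omega

lemma card_le_seven {α : Type*} [DecidableEq α] (x₁ x₂ x₃ x₄ x₅ x₆ x₇ : α) :
    ({x₁, x₂, x₃, x₄, x₅, x₆, x₇} : Finset α).card ≤ 7 := by
  have h1 := Finset.card_insert_le x₁ ({x₂, x₃, x₄, x₅, x₆, x₇} : Finset α)
  have h2 := Finset.card_insert_le x₂ ({x₃, x₄, x₅, x₆, x₇} : Finset α)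
  have h3 := Finset.card_insert_le x₃ ({x₄, x₅, x₆, x₇} : Finset α)
  have h4 := Finset.card_insert_le x₄ ({x₅, x₆, x₇} : Finset α)
  have h5 := Finset.card_insert_le x₅ ({x₆, x₇} : Finset α)
  have h6 := Finset.card_insert_le x₆ ({x₇} : Finset α)
  have h7 := Finset.card_singleton x₇
  omega

lemma exists4 {A : Finset ℕ} (h : A.card = 4) :
    ∃ a b c d : ℕ, a < b ∧ b < c ∧ c < d ∧ A = {a, b, c, d} := by
  have hl : (A.sort (· ≤ ·)).length = 4 := by rw [Finset.length_sort]; exact h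
  have hsorted : (A.sort (· ≤ ·)).Pairwise (· < ·) := (Finset.sortedLT_sort A).pairwise
  have htf : (A.sort (· ≤ ·)).toFinset = A := Finset.sort_toFinset A _
  rcases hs : A.sort (· ≤ ·) with _ | ⟨a, _ | ⟨b, _ | ⟨c, _ | ⟨d, _ | t⟩⟩⟩⟩ <;>
    rw [hs] at hl <;> simp at hl
  rw [hs] at hsorted htf
  simp [List.pairwise_cons] at hsorted
  exact ⟨a, b, c, d, by tauto, by tauto, by tauto, by rw [← htf]; simp [List.toFinset_cons]⟩

set_option maxHeartbeats 1000000 in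
lemma mem_ten {a b c d : ℕ} (hab : a < b) (hbc : b < c) (hcd : c < d) (ha0 : 0 < a)
    {B : Finset ℕ} (hBA : B ⊆ {a, b, c, d}) (hne : B.Nonempty)
    (hdvd : B.sum id ∣ (a + b + c + d)) :
    B = {a} ∨ B = {b} ∨ B = {c} ∨ B = {a, b} ∨ B = {a, c} ∨ B = {b, c} ∨
    B = {a, b, c} ∨ B = {d} ∨ B = {a, d} ∨ B = {a, b, c, d} := by
  rcases subset4 hBA with rfl|rfl|rfl|rfl|rfl|rfl|rfl|rfl|rfl|rfl|rfl|rfl|rfl|rfl|rfl|rfl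
  · simp at hne
  · exact Or.inl rfl
  · exact Or.inr (Or.inl rfl)
  · exact Or.inr (Or.inr (Or.inl rfl))
  · exact Or.inr (Or.inr (Or.inr (Or.inr (Or.inr (Or.inr (Or.inr (Or.inl rfl)))))))
  · exact Or.inr (Or.inr (Or.inr (Or.inl rfl)))
  · exact Or.inr (Or.inr (Or.inr (Or.inr (Or.inl rfl))))
  · exact Or.inr (Or.inr (Or.inr (Or.inr (Or.inr (Or.inr (Or.inr (Or.inr (Or.inl rfl))))))))
  · exact Or.inr (Or.inr (Or.inr (Or.inr (Or.inr (Or.inl rfl)))))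
  · rw [sum_pair (by omega)] at hdvd
    exact (not_dvd_between 1 (by omega) (by omega) hdvd).elim
  · rw [sum_pair (by omega)] at hdvd
    exact (not_dvd_between 1 (by omega) (by omega) hdvd).elim
  · exact Or.inr (Or.inr (Or.inr (Or.inr (Or.inr (Or.inr (Or.inl rfl))))))
  · rw [sum_triple (by omega) (by omega) (by omega)] at hdvd
    exact (not_dvd_between 1 (by omega) (by omega) hdvd).elim
  · rw [sum_triple (by omega) (by omega) (by omega)] at hdvd
    exact (not_dvd_between 1 (by omega) (by omega) hdvd).elim
  · rw [sum_triple (by omega) (by omega) (by omega)] at hdvd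
    exact (not_dvd_between 1 (by omega) (by omega) hdvd).elim
  · exact Or.inr (Or.inr (Or.inr (Or.inr (Or.inr (Or.inr (Or.inr (Or.inr (Or.inr rfl))))))))

section
variable {a b c d : ℕ} {D : Finset (Finset ℕ)}

set_option maxHeartbeats 1000000 in
lemma scenario_S2 (hab : a < b) (hbc : b < c) (hcd : c < d) (ha0 : 0 < a)
    (h8 : D.card = 8)
    (mem_D : ∀ B : Finset ℕ,
      B ∈ D ↔ (B ⊆ {a, b, c, d} ∧ B.Nonempty ∧ B.sum id ∣ (a + b + c + d)))
    (h2 : ({a, d} : Finset ℕ) ∈ D) : False := by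
  have hT : ∀ B ∈ D, B = {a} ∨ B = {b} ∨ B = {c} ∨ B = {a, b} ∨ B = {a, c} ∨ B = {b, c} ∨
      B = {a, b, c} ∨ B = {d} ∨ B = {a, d} ∨ B = {a, b, c, d} := by
    intro B hB
    obtain ⟨h1', h2', h3'⟩ := (mem_D B).mp hB
    exact mem_ten hab hbc hcd ha0 h1' h2' h3'
  obtain ⟨-, -, hdvd⟩ := (mem_D _).mp h2
  rw [sum_pair (by omega)] at hdvd
  have hbceq : b + c = a + d := by
    have h' : (a + d) ∣ (b + c) := by
      have := Nat.dvd_sub hdvd dvd_rfl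
      rwa [show a + b + c + d - (a + d) = b + c by omega] at this
    exact dvd_eq_of_lt_two_mul h' (by omega) (by omega)
  have habc : ({a, b, c} : Finset ℕ) ∉ D := by
    intro hm
    obtain ⟨-, -, hd'⟩ := (mem_D _).mp hm
    rw [sum_triple (by omega) (by omega) (by omega)] at hd'
    exact not_dvd_between 1 (by omega) (by omega) hd'
  by_cases hc : ({c} : Finset ℕ) ∈ D
  · obtain ⟨-, -, hd'⟩ := (mem_D _).mp hc
    rw [Finset.sum_singleton] at hd'
    simp only [id] at hd'
    have hc2b : 2 * b = c := by
      have h2b : c ∣ 2 * b := by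
        have := Nat.dvd_sub hd' (⟨2, by ring⟩ : c ∣ 2 * c)
        rwa [show a + b + c + d - 2 * c = 2 * b by omega] at this
      exact dvd_eq_of_lt_two_mul h2b (by omega) (by omega)
    have hacD : ({a, c} : Finset ℕ) ∉ D := by
      intro hm
      obtain ⟨-, -, hd''⟩ := (mem_D _).mp hm
      rw [sum_pair (by omega)] at hd''
      exact not_dvd_between 2 (by omega) (by omega) hd''
    have hdD : ({d} : Finset ℕ) ∉ D := by
      intro hm
      obtain ⟨-, -, hd''⟩ := (mem_D _).mp hm
      rw [Finset.sum_singleton] at hd''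
      simp only [id] at hd''
      exact not_dvd_between 2 (by omega) (by omega) hd''
    have hsub : D ⊆ {{a}, {b}, {c}, {a, b}, {b, c}, {a, d}, {a, b, c, d}} := by
      intro B hB
      rcases hT B hB with rfl|rfl|rfl|rfl|rfl|rfl|rfl|rfl|rfl|rfl
      · simp
      · simp
      · simp
      · simp
      · exact absurd hB hacD
      · simp
      · exact absurd hB habc
      · exact absurd hB hdD
      · simp
      · simp
    have hle := Finset.card_le_card hsub
    have h7 := card_le_seven ({a} : Finset ℕ) {b} {c} {a, b} {b, c} {a, d} {a, b, c, d}
    omega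
  · have hsub : D ⊆ {{a}, {b}, {a, b}, {a, c}, {b, c}, {d}, {a, d}, {a, b, c, d}} := by
      intro B hB
      rcases hT B hB with rfl|rfl|rfl|rfl|rfl|rfl|rfl|rfl|rfl|rfl
      · simp
      · simp
      · exact absurd hB hc
      · simp
      · simp
      · simp
      · exact absurd hB habc
      · simp
      · simp
      · simp
    have hE : D = {{a}, {b}, {a, b}, {a, c}, {b, c}, {d}, {a, d}, {a, b, c, d}} :=
      Finset.eq_of_subset_of_card_le hsub (by
        have := card_le_eight ({a} : Finset ℕ) {b} {a, b} {a, c} {b, c} {d} {a, d} {a, b, c, d}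
        omega)
    have hac : ({a, c} : Finset ℕ) ∈ D := by rw [hE]; simp
    have hdm : ({d} : Finset ℕ) ∈ D := by rw [hE]; simp
    obtain ⟨-, -, hd1⟩ := (mem_D _).mp hac
    obtain ⟨-, -, hd2⟩ := (mem_D _).mp hdm
    rw [sum_pair (by omega)] at hd1
    rw [Finset.sum_singleton] at hd2
    simp only [id] at hd2
    have e1 : 2 * (b - a) = a + c := by
      have h' : (a + c) ∣ 2 * (b - a) := by
        have := Nat.dvd_sub hd1 (⟨2, by ring⟩ : (a + c) ∣ 2 * (a + c))
        rwa [show a + b + c + d - 2 * (a + c) = 2 * (b - a) by omega] at this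
      exact dvd_eq_of_lt_two_mul h' (by omega) (by omega)
    have e2 : 2 * a = d := by
      have h' : d ∣ 2 * a := by
        have := Nat.dvd_sub hd2 (⟨2, by ring⟩ : d ∣ 2 * d)
        rwa [show a + b + c + d - 2 * d = 2 * a by omega] at this
      exact dvd_eq_of_lt_two_mul h' (by omega) (by omega)
    omega

set_option maxHeartbeats 1000000 in
lemma scenario_S3 (hab : a < b) (hbc : b < c) (hcd : c < d) (ha0 : 0 < a)
    (h8 : D.card = 8)
    (mem_D : ∀ B : Finset ℕ,
      B ∈ D ↔ (B ⊆ {a, b, c, d} ∧ B.Nonempty ∧ B.sum id ∣ (a + b + c + d)))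
    (h1 : ({d} : Finset ℕ) ∈ D) (h2 : ({a, d} : Finset ℕ) ∉ D) :
    b = 2 * a ∧ c = 3 * a ∧ d = 6 * a := by
  have hT : ∀ B ∈ D, B = {a} ∨ B = {b} ∨ B = {c} ∨ B = {a, b} ∨ B = {a, c} ∨ B = {b, c} ∨
      B = {a, b, c} ∨ B = {d} ∨ B = {a, d} ∨ B = {a, b, c, d} := by
    intro B hB
    obtain ⟨h1', h2', h3'⟩ := (mem_D B).mp hB
    exact mem_ten hab hbc hcd ha0 h1' h2' h3'
  obtain ⟨-, -, hd2⟩ := (mem_D _).mp h1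
  rw [Finset.sum_singleton] at hd2
  simp only [id] at hd2
  have hsig : d ∣ (a + b + c) := by
    have := Nat.dvd_sub hd2 dvd_rfl
    rwa [show a + b + c + d - d = a + b + c by omega] at this
  have hcase : a + b + c = d ∨ a + b + c = 2 * d := by
    obtain ⟨k, hk⟩ := hsig
    have hk3 : k < 3 := by nlinarith
    interval_cases k <;> omega
  rcases hcase with hsig1 | hsig1
  · -- a + b + c = d
    have hbcD : ({b, c} : Finset ℕ) ∉ D := by
      intro hm
      obtain ⟨-, -, hd'⟩ := (mem_D _).mp hm
      rw [sum_pair (by omega)] at hd'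
      exact not_dvd_between 2 (by omega) (by omega) hd'
    have hsub : D ⊆ {{a}, {b}, {c}, {a, b}, {a, c}, {a, b, c}, {d}, {a, b, c, d}} := by
      intro B hB
      rcases hT B hB with rfl|rfl|rfl|rfl|rfl|rfl|rfl|rfl|rfl|rfl
      · simp
      · simp
      · simp
      · simp
      · simp
      · exact absurd hB hbcD
      · simp
      · simp
      · exact absurd hB h2
      · simp
    have hE : D = {{a}, {b}, {c}, {a, b}, {a, c}, {a, b, c}, {d}, {a, b, c, d}} :=
      Finset.eq_of_subset_of_card_le hsub (by
        have := card_le_eight ({a} : Finset ℕ) {b} {c} {a, b} {a, c} {a, b, c} {d} {a, b, c, d}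
        omega)
    have hm1 : ({a, c} : Finset ℕ) ∈ D := by rw [hE]; simp
    have hm2 : ({c} : Finset ℕ) ∈ D := by rw [hE]; simp
    have hm3 : ({a, b} : Finset ℕ) ∈ D := by rw [hE]; simp
    obtain ⟨-, -, hd1'⟩ := (mem_D _).mp hm1
    obtain ⟨-, -, hd2'⟩ := (mem_D _).mp hm2
    obtain ⟨-, -, hd3'⟩ := (mem_D _).mp hm3
    rw [sum_pair (by omega)] at hd1'
    rw [Finset.sum_singleton] at hd2'
    simp only [id] at hd2'
    rw [sum_pair (by omega)] at hd3'
    have hb3 : 2 * b = a + c := by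
      have h' : (a + c) ∣ 2 * b := by
        have := Nat.dvd_sub hd1' (⟨2, by ring⟩ : (a + c) ∣ 2 * (a + c))
        rwa [show a + b + c + d - 2 * (a + c) = 2 * b by omega] at this
      exact dvd_eq_of_lt_two_mul h' (by omega) (by omega)
    obtain ⟨k, hk⟩ := hd2'
    have hk' : 6 * b = c * k := by omega
    have hclt : c < 2 * b := by omega
    have hklo : 3 < k := by nlinarith
    have hkhi : k < 6 := by nlinarith
    interval_cases k
    · exact ⟨by omega, by omega, by omega⟩
    · exfalso
      have h5a : 5 * a = 4 * b := by omega
      have h6b : (a + b) ∣ 6 * b := by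
        rwa [show a + b + c + d = 6 * b by omega] at hd3'
      have h150 : 9 * b ∣ 150 * b := by
        have hx : (a + b) ∣ 30 * b := h6b.trans ⟨5, by ring⟩
        have hy := mul_dvd_mul_left 5 hx
        rwa [show 5 * (a + b) = 9 * b by omega,
          show 5 * (30 * b) = 150 * b by ring] at hy
      have h6 : 9 * b ∣ 6 * b := by
        have := Nat.dvd_sub h150 (⟨16, by ring⟩ : 9 * b ∣ 144 * b)
        rwa [show 150 * b - 144 * b = 6 * b by omega] at this
      have := Nat.le_of_dvd (by omega) h6
      omega
  · -- a + b + c = 2 * d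
    exfalso
    have habcD : ({a, b, c} : Finset ℕ) ∉ D := by
      intro hm
      obtain ⟨-, -, hd'⟩ := (mem_D _).mp hm
      rw [sum_triple (by omega) (by omega) (by omega)] at hd'
      have h2d3d : 2 * d ∣ 3 * d := by
        rwa [show a + b + c + d = 3 * d by omega, show a + b + c = 2 * d by omega] at hd'
      have hdd := Nat.dvd_sub (⟨2, by ring⟩ : (2 * d) ∣ 4 * d) h2d3d
      rw [show 4 * d - 3 * d = d by omega] at hdd
      have := Nat.le_of_dvd (by omega) hdd
      omega
    have hsub : D ⊆ {{a}, {b}, {c}, {a, b}, {a, c}, {b, c}, {d}, {a, b, c, d}} := by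
      intro B hB
      rcases hT B hB with rfl|rfl|rfl|rfl|rfl|rfl|rfl|rfl|rfl|rfl
      · simp
      · simp
      · simp
      · simp
      · simp
      · simp
      · exact absurd hB habcD
      · simp
      · exact absurd hB h2
      · simp
    have hE : D = {{a}, {b}, {c}, {a, b}, {a, c}, {b, c}, {d}, {a, b, c, d}} :=
      Finset.eq_of_subset_of_card_le hsub (by
        have := card_le_eight ({a} : Finset ℕ) {b} {c} {a, b} {a, c} {b, c} {d} {a, b, c, d}
        omega)
    have hm1 : ({c} : Finset ℕ) ∈ D := by rw [hE]; simp
    have hm2 : ({a, b} : Finset ℕ) ∈ D := by rw [hE]; simp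
    obtain ⟨-, -, hd1'⟩ := (mem_D _).mp hm1
    obtain ⟨-, -, hd2'⟩ := (mem_D _).mp hm2
    rw [Finset.sum_singleton] at hd1'
    simp only [id] at hd1'
    rw [sum_pair (by omega)] at hd2'
    obtain ⟨k, hk⟩ := hd1'
    have hk' : 3 * d = c * k := by omega
    have h2d3c : 2 * d < 3 * c := by omega
    have hklo : 3 < k := by nlinarith
    have hkhi : k < 5 := by nlinarith
    interval_cases k
    have h512 : 5 * d ∣ 12 * d := by
      have hy := mul_dvd_mul_left 4 hd2'
      rwa [show 4 * (a + b) = 5 * d by omega,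
        show 4 * (a + b + c + d) = 12 * d by omega] at hy
    have hdd := Nat.dvd_sub h512 (⟨2, by ring⟩ : 5 * d ∣ 10 * d)
    rw [show 12 * d - 10 * d = 2 * d by omega] at hdd
    have := Nat.le_of_dvd (by omega) hdd
    omega

end

set_option maxHeartbeats 1000000 in
lemma scenario_S1 {a b c d : ℕ} {D : Finset (Finset ℕ)}
    (hab : a < b) (hbc : b < c) (hcd : c < d) (ha0 : 0 < a)
    (h8 : D.card = 8)
    (mem_D : ∀ B : Finset ℕ,
      B ∈ D ↔ (B ⊆ {a, b, c, d} ∧ B.Nonempty ∧ B.sum id ∣ (a + b + c + d)))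
    (h1 : ({d} : Finset ℕ) ∉ D) (h2 : ({a, d} : Finset ℕ) ∉ D)
    (hsum : ({a, b, c, d} : Finset ℕ).sum id = a + b + c + d) :
    IsAntiPencil {a, b, c, d} := by
  have hT : ∀ B ∈ D, B = {a} ∨ B = {b} ∨ B = {c} ∨ B = {a, b} ∨ B = {a, c} ∨ B = {b, c} ∨
      B = {a, b, c} ∨ B = {d} ∨ B = {a, d} ∨ B = {a, b, c, d} := by
    intro B hB
    obtain ⟨h1', h2', h3'⟩ := (mem_D B).mp hB
    exact mem_ten hab hbc hcd ha0 h1' h2' h3'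
  have hsub : D ⊆ {{a}, {b}, {c}, {a, b}, {a, c}, {b, c}, {a, b, c}, {a, b, c, d}} := by
    intro B hB
    rcases hT B hB with rfl|rfl|rfl|rfl|rfl|rfl|rfl|rfl|rfl|rfl
    · simp
    · simp
    · simp
    · simp
    · simp
    · simp
    · simp
    · exact absurd hB h1
    · exact absurd hB h2
    · simp
  have hE : D = {{a}, {b}, {c}, {a, b}, {a, c}, {b, c}, {a, b, c}, {a, b, c, d}} :=
    Finset.eq_of_subset_of_card_le hsub (by
      have := card_le_eight ({a} : Finset ℕ) {b} {c} {a, b} {a, c} {b, c} {a, b, c} {a, b, c, d}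
      omega)
  have herase : ({a, b, c, d} : Finset ℕ).erase d = {a, b, c} := by
    ext x
    simp only [Finset.mem_erase, Finset.mem_insert, Finset.mem_singleton]
    omega
  refine ⟨d, by simp, ?_, ?_⟩
  · intro x hx
    simp only [Finset.mem_insert, Finset.mem_singleton] at hx
    omega
  · intro B
    constructor
    · intro hdivB
      obtain ⟨hx1, hx2, hx3⟩ := hdivB
      have hBD : B ∈ D := (mem_D B).mpr ⟨hx1, hx2, by rwa [hsum] at hx3⟩
      rw [hE] at hBD
      simp only [Finset.mem_insert, Finset.mem_singleton] at hBD
      rcases hBD with rfl|rfl|rfl|rfl|rfl|rfl|rfl|rfl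
      · exact Or.inl ⟨by simp, by rw [herase]; simp [Finset.insert_subset_iff]⟩
      · exact Or.inl ⟨by simp, by rw [herase]; simp [Finset.insert_subset_iff]⟩
      · exact Or.inl ⟨by simp, by rw [herase]; simp [Finset.insert_subset_iff]⟩
      · exact Or.inl ⟨by simp, by rw [herase]; simp [Finset.insert_subset_iff]⟩
      · exact Or.inl ⟨by simp, by rw [herase]; simp [Finset.insert_subset_iff]⟩
      · exact Or.inl ⟨by simp, by rw [herase]; simp [Finset.insert_subset_iff]⟩
      · exact Or.inl ⟨by simp, by rw [herase]⟩
      · exact Or.inr rfl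
    · rintro (⟨hne, hBsub⟩ | rfl)
      · rw [herase] at hBsub
        have hBD : B ∈ D := by
          rw [hE]
          rcases subset3 hBsub with rfl|rfl|rfl|rfl|rfl|rfl|rfl|rfl
          · exact absurd hne (by simp)
          · simp
          · simp
          · simp
          · simp
          · simp
          · simp
          · simp
        obtain ⟨hx1, hx2, hx3⟩ := (mem_D B).mp hBD
        exact ⟨hx1, hx2, by rwa [hsum]⟩
      · exact ⟨Finset.Subset.refl _, ⟨a, by simp⟩, dvd_rfl⟩

set_option maxHeartbeats 1000000 in
lemma reverse_anti {A : Finset ℕ} (hcard : A.card = 4) (hap : IsAntiPencil A) :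
    (A.powerset.filter (fun B => B.Nonempty ∧ B.sum id ∣ A.sum id)).card = 8 := by
  obtain ⟨M, hM, hmax, hiff⟩ := hap
  have key : A.powerset.filter (fun B => B.Nonempty ∧ B.sum id ∣ A.sum id)
      = ((A.erase M).powerset.filter (fun B => B ≠ ∅)) ∪ {A} := by
    ext B
    simp only [Finset.mem_filter, Finset.mem_powerset, Finset.mem_union,
      Finset.mem_singleton]
    constructor
    · rintro ⟨hBA, hne, hdvd⟩
      rcases (hiff B).mp ⟨hBA, hne, hdvd⟩ with ⟨hne', hsub'⟩ | rfl
      · exact Or.inl ⟨hsub', Finset.nonempty_iff_ne_empty.mp hne'⟩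
      · exact Or.inr rfl
    · rintro (⟨hsub', hne⟩ | rfl)
      · have hd : IsDivisor A B :=
          (hiff B).mpr (Or.inl ⟨Finset.nonempty_iff_ne_empty.mpr hne, hsub'⟩)
        exact ⟨hd.1, hd.2.1, hd.2.2⟩
      · have hd : IsDivisor B B := (hiff B).mpr (Or.inr rfl)
        exact ⟨hd.1, hd.2.1, hd.2.2⟩
  rw [key]
  have hAnot : A ∉ (A.erase M).powerset.filter (fun B => B ≠ ∅) := by
    simp only [Finset.mem_filter, Finset.mem_powerset]
    rintro ⟨hsub', -⟩
    exact (Finset.notMem_erase M A) (hsub' hM)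
  rw [Finset.card_union_of_disjoint (Finset.disjoint_singleton_right.mpr hAnot)]
  have h1 : (A.erase M).powerset.filter (fun B => B ≠ ∅) = (A.erase M).powerset.erase ∅ := by
    ext B
    simp [Finset.mem_erase, Finset.mem_filter, and_comm]
  rw [h1, Finset.card_erase_of_mem (Finset.empty_mem_powerset _), Finset.card_powerset,
    Finset.card_erase_of_mem hM, hcard]
  norm_num

lemma fne {x : ℕ} {X Y : Finset ℕ} (hx : x ∈ X) (hy : x ∉ Y) : X ≠ Y := fun h => hy (h ▸ hx)
lemma fne' {x : ℕ} {X Y : Finset ℕ} (hx : x ∈ Y) (hy : x ∉ X) : X ≠ Y :=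
  fun h => hy (h.symm ▸ hx)

set_option maxHeartbeats 1000000 in
lemma card8E {a : ℕ} (ha : 0 < a) :
    ({{a}, {2 * a}, {3 * a}, {6 * a}, {a, 2 * a}, {a, 3 * a},
      {a, 2 * a, 3 * a}, {a, 2 * a, 3 * a, 6 * a}} : Finset (Finset ℕ)).card = 8 := by
  have n1 : ({a} : Finset ℕ) ∉ ({{2 * a}, {3 * a}, {6 * a}, {a, 2 * a}, {a, 3 * a},
      {a, 2 * a, 3 * a}, {a, 2 * a, 3 * a, 6 * a}} : Finset (Finset ℕ)) := by
    simp only [Finset.mem_insert, Finset.mem_singleton]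
    push_neg
    exact ⟨fne (x := a) (by simp) (by simp only [Finset.mem_singleton]; omega),
      fne (x := a) (by simp) (by simp only [Finset.mem_singleton]; omega),
      fne (x := a) (by simp) (by simp only [Finset.mem_singleton]; omega),
      fne' (x := 2 * a) (by simp) (by simp only [Finset.mem_singleton]; omega),
      fne' (x := 3 * a) (by simp) (by simp only [Finset.mem_singleton]; omega),
      fne' (x := 2 * a) (by simp) (by simp only [Finset.mem_singleton]; omega),
      fne' (x := 2 * a) (by simp) (by simp only [Finset.mem_singleton]; omega)⟩
  have n2 : ({2 * a} : Finset ℕ) ∉ ({{3 * a}, {6 * a}, {a, 2 * a}, {a, 3 * a},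
      {a, 2 * a, 3 * a}, {a, 2 * a, 3 * a, 6 * a}} : Finset (Finset ℕ)) := by
    simp only [Finset.mem_insert, Finset.mem_singleton]
    push_neg
    exact ⟨fne (x := 2 * a) (by simp) (by simp only [Finset.mem_singleton]; omega),
      fne (x := 2 * a) (by simp) (by simp only [Finset.mem_singleton]; omega),
      fne' (x := a) (by simp) (by simp only [Finset.mem_singleton]; omega),
      fne (x := 2 * a) (by simp)
        (by simp only [Finset.mem_insert, Finset.mem_singleton]; omega),
      fne' (x := a) (by simp) (by simp only [Finset.mem_singleton]; omega),
      fne' (x := a) (by simp) (by simp only [Finset.mem_singleton]; omega)⟩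
  have n3 : ({3 * a} : Finset ℕ) ∉ ({{6 * a}, {a, 2 * a}, {a, 3 * a},
      {a, 2 * a, 3 * a}, {a, 2 * a, 3 * a, 6 * a}} : Finset (Finset ℕ)) := by
    simp only [Finset.mem_insert, Finset.mem_singleton]
    push_neg
    exact ⟨fne (x := 3 * a) (by simp) (by simp only [Finset.mem_singleton]; omega),
      fne (x := 3 * a) (by simp)
        (by simp only [Finset.mem_insert, Finset.mem_singleton]; omega),
      fne' (x := a) (by simp) (by simp only [Finset.mem_singleton]; omega),
      fne' (x := a) (by simp) (by simp only [Finset.mem_singleton]; omega),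
      fne' (x := a) (by simp) (by simp only [Finset.mem_singleton]; omega)⟩
  have n4 : ({6 * a} : Finset ℕ) ∉ ({{a, 2 * a}, {a, 3 * a},
      {a, 2 * a, 3 * a}, {a, 2 * a, 3 * a, 6 * a}} : Finset (Finset ℕ)) := by
    simp only [Finset.mem_insert, Finset.mem_singleton]
    push_neg
    exact ⟨fne (x := 6 * a) (by simp)
        (by simp only [Finset.mem_insert, Finset.mem_singleton]; omega),
      fne (x := 6 * a) (by simp)
        (by simp only [Finset.mem_insert, Finset.mem_singleton]; omega),
      fne (x := 6 * a) (by simp)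
        (by simp only [Finset.mem_insert, Finset.mem_singleton]; omega),
      fne' (x := a) (by simp) (by simp only [Finset.mem_singleton]; omega)⟩
  have n5 : ({a, 2 * a} : Finset ℕ) ∉ ({{a, 3 * a},
      {a, 2 * a, 3 * a}, {a, 2 * a, 3 * a, 6 * a}} : Finset (Finset ℕ)) := by
    simp only [Finset.mem_insert, Finset.mem_singleton]
    push_neg
    exact ⟨fne (x := 2 * a) (by simp)
        (by simp only [Finset.mem_insert, Finset.mem_singleton]; omega),
      fne' (x := 3 * a) (by simp)
        (by simp only [Finset.mem_insert, Finset.mem_singleton]; omega),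
      fne' (x := 3 * a) (by simp)
        (by simp only [Finset.mem_insert, Finset.mem_singleton]; omega)⟩
  have n6 : ({a, 3 * a} : Finset ℕ) ∉ ({{a, 2 * a, 3 * a},
      {a, 2 * a, 3 * a, 6 * a}} : Finset (Finset ℕ)) := by
    simp only [Finset.mem_insert, Finset.mem_singleton]
    push_neg
    exact ⟨fne' (x := 2 * a) (by simp)
        (by simp only [Finset.mem_insert, Finset.mem_singleton]; omega),
      fne' (x := 2 * a) (by simp)
        (by simp only [Finset.mem_insert, Finset.mem_singleton]; omega)⟩
  have n7 : ({a, 2 * a, 3 * a} : Finset ℕ)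
      ∉ ({{a, 2 * a, 3 * a, 6 * a}} : Finset (Finset ℕ)) := by
    simp only [Finset.mem_singleton]
    exact fne' (x := 6 * a) (by simp)
      (by simp only [Finset.mem_insert, Finset.mem_singleton]; omega)
  rw [Finset.card_insert_of_notMem n1, Finset.card_insert_of_notMem n2,
    Finset.card_insert_of_notMem n3, Finset.card_insert_of_notMem n4,
    Finset.card_insert_of_notMem n5, Finset.card_insert_of_notMem n6,
    Finset.card_insert_of_notMem n7, Finset.card_singleton]

set_option maxHeartbeats 1000000 in
lemma reverse_scaled {a : ℕ} (ha : 0 < a) :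
    ((({a, 2 * a, 3 * a, 6 * a} : Finset ℕ).powerset).filter
      (fun B => B.Nonempty ∧ B.sum id ∣ ({a, 2 * a, 3 * a, 6 * a} : Finset ℕ).sum id)).card
      = 8 := by
  have hsum : ({a, 2 * a, 3 * a, 6 * a} : Finset ℕ).sum id = 12 * a := by
    rw [sum_quad (by omega) (by omega) (by omega) (by omega) (by omega) (by omega)]
    ring
  have mem_D : ∀ B : Finset ℕ,
      B ∈ (({a, 2 * a, 3 * a, 6 * a} : Finset ℕ).powerset).filter
        (fun B => B.Nonempty ∧ B.sum id ∣ ({a, 2 * a, 3 * a, 6 * a} : Finset ℕ).sum id)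
      ↔ (B ⊆ {a, 2 * a, 3 * a, 6 * a} ∧ B.Nonempty ∧ B.sum id ∣ (12 * a)) := by
    intro B
    rw [Finset.mem_filter, Finset.mem_powerset, hsum]
  have hsub : (({a, 2 * a, 3 * a, 6 * a} : Finset ℕ).powerset).filter
        (fun B => B.Nonempty ∧ B.sum id ∣ ({a, 2 * a, 3 * a, 6 * a} : Finset ℕ).sum id)
      ⊆ {{a}, {2 * a}, {3 * a}, {6 * a}, {a, 2 * a}, {a, 3 * a},
        {a, 2 * a, 3 * a}, {a, 2 * a, 3 * a, 6 * a}} := by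
    intro B hB
    obtain ⟨hBA, hne, hdvd⟩ := (mem_D B).mp hB
    rcases subset4 hBA with rfl|rfl|rfl|rfl|rfl|rfl|rfl|rfl|rfl|rfl|rfl|rfl|rfl|rfl|rfl|rfl
    · simp at hne
    · simp
    · simp
    · simp
    · simp
    · simp
    · simp
    · rw [sum_pair (by omega)] at hdvd
      exact ((not_dvd_between 1 (by omega) (by omega)) hdvd).elim
    · rw [sum_pair (by omega)] at hdvd
      exact ((not_dvd_between 2 (by omega) (by omega)) hdvd).elim
    · rw [sum_pair (by omega)] at hdvd
      exact ((not_dvd_between 1 (by omega) (by omega)) hdvd).elim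
    · rw [sum_pair (by omega)] at hdvd
      exact ((not_dvd_between 1 (by omega) (by omega)) hdvd).elim
    · simp
    · rw [sum_triple (by omega) (by omega) (by omega)] at hdvd
      exact ((not_dvd_between 1 (by omega) (by omega)) hdvd).elim
    · rw [sum_triple (by omega) (by omega) (by omega)] at hdvd
      exact ((not_dvd_between 1 (by omega) (by omega)) hdvd).elim
    · rw [sum_triple (by omega) (by omega) (by omega)] at hdvd
      exact ((not_dvd_between 1 (by omega) (by omega)) hdvd).elim
    · simp
  have hEsub : ({{a}, {2 * a}, {3 * a}, {6 * a}, {a, 2 * a}, {a, 3 * a},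
      {a, 2 * a, 3 * a}, {a, 2 * a, 3 * a, 6 * a}} : Finset (Finset ℕ))
      ⊆ (({a, 2 * a, 3 * a, 6 * a} : Finset ℕ).powerset).filter
        (fun B => B.Nonempty ∧ B.sum id ∣ ({a, 2 * a, 3 * a, 6 * a} : Finset ℕ).sum id) := by
    intro B hB
    simp only [Finset.mem_insert, Finset.mem_singleton] at hB
    rcases hB with rfl|rfl|rfl|rfl|rfl|rfl|rfl|rfl
    · exact (mem_D _).mpr ⟨by simp, by simp,
        by rw [Finset.sum_singleton]; exact ⟨12, by simp only [id_eq]; ring⟩⟩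
    · exact (mem_D _).mpr ⟨by simp, by simp,
        by rw [Finset.sum_singleton]; exact ⟨6, by simp only [id_eq]; ring⟩⟩
    · exact (mem_D _).mpr ⟨by simp, by simp,
        by rw [Finset.sum_singleton]; exact ⟨4, by simp only [id_eq]; ring⟩⟩
    · exact (mem_D _).mpr ⟨by simp, by simp,
        by rw [Finset.sum_singleton]; exact ⟨2, by simp only [id_eq]; ring⟩⟩
    · exact (mem_D _).mpr ⟨by simp [Finset.insert_subset_iff], by simp,
        by rw [sum_pair (by omega)]; exact ⟨4, by ring⟩⟩
    · exact (mem_D _).mpr ⟨by simp [Finset.insert_subset_iff], by simp,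
        by rw [sum_pair (by omega)]; exact ⟨3, by ring⟩⟩
    · exact (mem_D _).mpr ⟨by simp [Finset.insert_subset_iff], by simp,
        by rw [sum_triple (by omega) (by omega) (by omega)]; exact ⟨2, by ring⟩⟩
    · exact (mem_D _).mpr ⟨Finset.Subset.refl _, by simp, by rw [hsum]⟩
  rw [Finset.Subset.antisymm hsub hEsub]
  exact card8E ha

set_option maxHeartbeats 1000000 in
/-- A set of four positive integers has exactly 8 divisors if and only if it is an anti-pencil
or equals `{a, 2a, 3a, 6a}` for some positive integer `a`. -/
theorem stmt_15 (A : Finset ℕ) (hcard : A.card = 4) (hpos : ∀ a ∈ A, 0 < a) :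
    (A.powerset.filter (fun B => B.Nonempty ∧ B.sum id ∣ A.sum id)).card = 8 ↔
      (IsAntiPencil A ∨ ∃ a : ℕ, 0 < a ∧ A = {a, 2 * a, 3 * a, 6 * a}) := by
  constructor
  · intro h8
    obtain ⟨a, b, c, d, hab, hbc, hcd, hA⟩ := exists4 hcard
    subst hA
    have ha0 : 0 < a := hpos a (by simp)
    set D := (({a, b, c, d} : Finset ℕ).powerset).filter
      (fun B => B.Nonempty ∧ B.sum id ∣ ({a, b, c, d} : Finset ℕ).sum id) with hDdef
    have hsum : ({a, b, c, d} : Finset ℕ).sum id = a + b + c + d :=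
      sum_quad (by omega) (by omega) (by omega) (by omega) (by omega) (by omega)
    have mem_D : ∀ B : Finset ℕ,
        B ∈ D ↔ (B ⊆ {a, b, c, d} ∧ B.Nonempty ∧ B.sum id ∣ (a + b + c + d)) := by
      intro B
      rw [hDdef, Finset.mem_filter, Finset.mem_powerset, hsum]
    by_cases h2 : ({a, d} : Finset ℕ) ∈ D
    · exact (scenario_S2 hab hbc hcd ha0 h8 mem_D h2).elim
    · by_cases h1 : ({d} : Finset ℕ) ∈ D
      · obtain ⟨e1, e2, e3⟩ := scenario_S3 hab hbc hcd ha0 h8 mem_D h1 h2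
        exact Or.inr ⟨a, ha0, by rw [e1, e2, e3]⟩
      · exact Or.inl (scenario_S1 hab hbc hcd ha0 h8 mem_D h1 h2 hsum)
  · rintro (hap | ⟨a, ha, hA⟩)
    · exact reverse_anti hcard hap
    · subst hA
      exact reverse_scaled ha
end
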